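/- arXiv:1303.3293 — 13 statements merged into one kernel-verified Lean document; each statement's English description precedes it below -/
import Mathlib

section
/- Let v : [t₀, ∞) → ℝ be a positive continuous function with ∫_{t₀}^∞ v(t) dt = ∞ and ∫_{t₀}^t v(s) ds ≤ C·t^a for some positive constants C, a, and let λ > 0. Then every nontrivial solution u of (v(t)u')' + λ v(t) u = 0 on [t₀, ∞) has arbitrarily large zeros, i.e., for every T there exists t > T with u(t) = 0. -/
open Set Filter intervalIntegral Real
open Topology

private lemma antiOn_of_hasDeriv {f f' : ℝ → ℝ} {A : ℝ}
    (hf : ∀ t ∈ Ici A, HasDerivAt f (f' t) t)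
    (h0 : ∀ t ∈ Ici A, f' t ≤ 0) : AntitoneOn f (Ici A) := by
  apply antitoneOn_of_deriv_nonpos (convex_Ici A)
  · exact fun x hx => (hf x hx).continuousAt.continuousWithinAt
  · intro x hx
    rw [interior_Ici] at hx
    exact ((hf x (mem_Ici.mpr (le_of_lt (mem_Ioi.mp hx)))).differentiableAt).differentiableWithinAt
  · intro x hx
    rw [interior_Ici] at hx
    rw [(hf x (mem_Ici.mpr (le_of_lt (mem_Ioi.mp hx)))).deriv]
    exact h0 x (mem_Ici.mpr (le_of_lt (mem_Ioi.mp hx)))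

/-- Oscillation criterion: if `v` is positive continuous on `[t₀, ∞)` with divergent
integral and polynomially bounded primitive, then every nontrivial solution of
`(v u')' + λ v u = 0` has arbitrarily large zeros. -/
theorem stmt0 (t₀ C a lam : ℝ) (ht₀ : 0 < t₀) (hC : 0 < C) (ha : 0 < a) (hlam : 0 < lam)
    (v u u' : ℝ → ℝ)
    (hv_cont : ContinuousOn v (Ici t₀))
    (hv_pos : ∀ t ∈ Ici t₀, 0 < v t)
    (hv_div : Tendsto (fun T => ∫ s in t₀..T, v s) atTop atTop)
    (hv_growth : ∀ t ∈ Ici t₀, (∫ s in t₀..t, v s) ≤ C * t ^ a)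
    (hu : ∀ t ∈ Ici t₀, HasDerivAt u (u' t) t)
    (hode : ∀ t ∈ Ici t₀, HasDerivAt (fun s => v s * u' s) (-(lam * v t * u t)) t)
    (hnontriv : ∃ t ∈ Ici t₀, u t ≠ 0) :
    ∀ T : ℝ, ∃ t, T < t ∧ t₀ ≤ t ∧ u t = 0 := by
  intro T0
  by_contra hcon
  push_neg at hcon
  -- hcon : ∀ t, T0 < t → t₀ ≤ t → u t ≠ 0
  set T₁ : ℝ := max T0 t₀ + 1 with hT₁def
  have hT₁t₀ : t₀ < T₁ := lt_of_le_of_lt (le_max_right T0 t₀) (lt_add_one _)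
  have hT₁T : T0 < T₁ := lt_of_le_of_lt (le_max_left T0 t₀) (lt_add_one _)
  have hune : ∀ t ∈ Ici T₁, u t ≠ 0 :=
    fun t ht => hcon t (lt_of_lt_of_le hT₁T ht) (le_trans hT₁t₀.le ht)
  -- extend v continuously to all of ℝ
  set vv : ℝ → ℝ := fun t => v (max t t₀) with hvvdef
  have hvv_cont : Continuous vv :=
    hv_cont.comp_continuous (continuous_id.max continuous_const) (fun x => mem_Ici.mpr (le_max_right _ _))
  have hvv_pos : ∀ t, 0 < vv t := fun t => hv_pos _ (mem_Ici.mpr (le_max_right _ _))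
  have hvv_eq : ∀ t, t₀ ≤ t → vv t = v t := by
    intro t ht
    simp only [hvvdef, max_eq_left ht]
  -- primitive of vv
  set V : ℝ → ℝ := fun t => ∫ s in t₀..t, vv s with hVdef
  have hV_deriv : ∀ t, HasDerivAt V (vv t) t := fun t =>
    intervalIntegral.integral_hasDerivAt_right (hvv_cont.intervalIntegrable _ _)
      (hvv_cont.stronglyMeasurable.stronglyMeasurableAtFilter) hvv_cont.continuousAt
  have hVeq : ∀ t, t₀ ≤ t → V t = ∫ s in t₀..t, v s := by
    intro t ht
    apply intervalIntegral.integral_congr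
    intro s hs
    rw [uIcc_of_le ht] at hs
    exact hvv_eq s hs.1
  have hV_tendsto : Tendsto V atTop atTop := by
    apply hv_div.congr'
    filter_upwards [eventually_ge_atTop t₀] with t ht
    exact (hVeq t ht).symm
  have hV_growth' : ∀ t, t₀ ≤ t → V t ≤ C * t ^ a := fun t ht =>
    (hVeq t ht) ▸ hv_growth t ht
  have hV_nonneg : ∀ t, t₀ ≤ t → 0 ≤ V t := fun t ht =>
    intervalIntegral.integral_nonneg ht (fun s _ => (hvv_pos s).le)
  -- Riccati function
  set w : ℝ → ℝ := fun t => vv t * u' t / u t with hwdef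
  have hw_deriv : ∀ t ∈ Ici T₁, HasDerivAt w (-(lam * vv t) - (w t) ^ 2 / vv t) t := by
    intro t ht
    have ht₀t : t₀ ≤ t := le_trans hT₁t₀.le ht
    have hmem : Ioi t₀ ∈ 𝓝 t := Ioi_mem_nhds (lt_of_lt_of_le hT₁t₀ ht)
    have hnum : HasDerivAt (fun s => vv s * u' s) (-(lam * vv t * u t)) t := by
      have h2 : (fun s => vv s * u' s) =ᶠ[𝓝 t] (fun s => v s * u' s) := by
        filter_upwards [hmem] with s hs
        rw [hvv_eq s hs.le]
      have h1 := (hode t ht₀t).congr_of_eventuallyEq h2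
      rwa [hvv_eq t ht₀t]
    have hu0 := hune t ht
    have hv0 := (hvv_pos t).ne'
    have hdiv := hnum.div (hu t ht₀t) hu0
    refine hdiv.congr_deriv ?_
    simp only [hwdef]
    field_simp
  -- Step A : w + lam*V is antitone on [T₁, ∞)
  have hA : AntitoneOn (fun t => w t + lam * V t) (Ici T₁) := by
    apply antiOn_of_hasDeriv (f' := fun t => -((w t) ^ 2 / vv t))
    · intro t ht
      have h := (hw_deriv t ht).add ((hV_deriv t).const_mul lam)
      refine h.congr_deriv ?_
      ring
    · intro t _
      have := div_nonneg (sq_nonneg (w t)) (hvv_pos t).le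
      linarith
  -- pick T₂ with w ≤ -1 beyond it
  obtain ⟨T₂', hT₂'⟩ :=
    eventually_atTop.1 (hV_tendsto.eventually_ge_atTop ((w T₁ + lam * V T₁ + 1) / lam))
  set T₂ : ℝ := max T₂' T₁ with hT₂def
  have hT₂₁ : T₁ ≤ T₂ := le_max_right _ _
  have hw_le : ∀ t, T₂ ≤ t → w t ≤ -1 := by
    intro t ht
    have htT₁ : T₁ ≤ t := le_trans hT₂₁ ht
    have h1 : w t + lam * V t ≤ w T₁ + lam * V T₁ := hA self_mem_Ici htT₁ htT₁
    have h2 : (w T₁ + lam * V T₁ + 1) / lam ≤ V t := hT₂' t (le_trans (le_max_left _ _) ht)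
    rw [div_le_iff₀ hlam] at h2
    nlinarith
  -- Step C : exponential decay of w
  set c : ℝ := 2 * Real.sqrt lam with hcdef
  have hsl : 0 < Real.sqrt lam := Real.sqrt_pos.mpr hlam
  have hc : 0 < c := by positivity
  have hC1 : AntitoneOn (fun t => w t * Real.exp (-(c * t))) (Ici T₂) := by
    apply antiOn_of_hasDeriv
      (f' := fun t => (-(lam * vv t) - (w t) ^ 2 / vv t) * Real.exp (-(c * t))
        + w t * (Real.exp (-(c * t)) * -c))
    · intro t ht
      have hlin : HasDerivAt (fun s : ℝ => -(c * s)) (-c) t := by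
        exact ((hasDerivAt_id t).const_mul c).neg.congr_deriv (by ring)
      exact (hw_deriv t (le_trans hT₂₁ ht)).mul hlin.exp
    · intro t ht
      have hvt := hvv_pos t
      have hE := Real.exp_pos (-(c * t))
      have hsq : Real.sqrt lam ^ 2 = lam := Real.sq_sqrt hlam.le
      have expand : (Real.sqrt lam * vv t + w t) ^ 2
          = Real.sqrt lam ^ 2 * vv t ^ 2 + 2 * Real.sqrt lam * w t * vv t + w t ^ 2 := by
        ring
      have key0 : 0 ≤ lam * (vv t) ^ 2 + 2 * Real.sqrt lam * w t * vv t + (w t) ^ 2 := by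
        have h := sq_nonneg (Real.sqrt lam * vv t + w t)
        rw [expand, hsq] at h
        linarith
      have key : -(lam * vv t) - (w t) ^ 2 / vv t ≤ c * w t := by
        rw [hcdef, show -(lam * vv t) - (w t) ^ 2 / vv t
            = (-(lam * (vv t) ^ 2) - (w t) ^ 2) / vv t by field_simp,
          div_le_iff₀ hvt]
        nlinarith
      nlinarith [mul_le_mul_of_nonneg_right key hE.le]
  have hw_exp : ∀ t, T₂ ≤ t → w t ≤ -Real.exp (c * (t - T₂)) := by
    intro t ht
    have h1 : w t * Real.exp (-(c * t)) ≤ w T₂ * Real.exp (-(c * T₂)) :=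
      hC1 self_mem_Ici ht ht
    have h2 : w T₂ ≤ -1 := hw_le T₂ le_rfl
    have h3 : w T₂ * Real.exp (-(c * T₂)) ≤ -Real.exp (-(c * T₂)) := by
      nlinarith [Real.exp_pos (-(c * T₂))]
    have h5 : Real.exp (c * (t - T₂)) * Real.exp (-(c * t)) = Real.exp (-(c * T₂)) := by
      rw [← Real.exp_add]; ring_nf
    nlinarith [Real.exp_pos (-(c * t)), le_trans h1 h3]
  -- Step D : for every r, the comparison function is antitone on [T₂, ∞)
  have hD : ∀ r : ℝ, AntitoneOn (fun t => -(w t)⁻¹ + 2 * r * t - r ^ 2 * V t) (Ici T₂) := by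
    intro r
    apply antiOn_of_hasDeriv
      (f' := fun t => (-(lam * vv t) - (w t) ^ 2 / vv t) / (w t) ^ 2 + 2 * r - r ^ 2 * vv t)
    · intro t ht
      have htT₁ : t ∈ Ici T₁ := le_trans hT₂₁ ht
      have hw0 : w t ≠ 0 := by
        have := hw_le t ht; intro h; rw [h] at this; linarith
      have h1 := ((hw_deriv t htT₁).inv hw0).neg
      have h2 : HasDerivAt (fun s : ℝ => 2 * r * s) (2 * r) t := by
        simpa using (hasDerivAt_id t).const_mul (2 * r)
      have h3 := (hV_deriv t).const_mul (r ^ 2)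
      have h := (h1.add h2).sub h3
      refine h.congr_deriv ?_
      ring
    · intro t ht
      have hvt := hvv_pos t
      have hwle := hw_le t ht
      have hw2 : (0 : ℝ) < (w t) ^ 2 := by nlinarith
      have h1 : (-(lam * vv t) - (w t) ^ 2 / vv t) / (w t) ^ 2 ≤ -(vv t)⁻¹ := by
        rw [div_le_iff₀ hw2]
        have he : -(vv t)⁻¹ * (w t) ^ 2 = -((w t) ^ 2 / vv t) := by field_simp
        rw [he]
        have : 0 ≤ lam * vv t := by positivity
        linarith
      have h2 : -(vv t)⁻¹ + 2 * r - r ^ 2 * vv t ≤ 0 := by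
        rw [show -(vv t)⁻¹ + 2 * r - r ^ 2 * vv t = -((r * vv t - 1) ^ 2 / vv t) by
          field_simp; ring]
        have := div_nonneg (sq_nonneg (r * vv t - 1)) hvt.le
        linarith
      linarith
  -- choose a large time T
  have htend : Tendsto (fun x : ℝ => Real.exp (c * x) * x ^ (2 - a)) atTop atTop := by
    apply (tendsto_exp_mul_div_rpow_atTop (a - 2) c hc).congr'
    filter_upwards [eventually_gt_atTop (0 : ℝ)] with x hx
    rw [div_eq_mul_inv, ← Real.rpow_neg hx.le, neg_sub]
  obtain ⟨T, hTT₂, hTbig⟩ : ∃ T, T₂ ≤ T ∧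
      C * 2 ^ a * Real.exp (c * T₂) < Real.exp (c * T) * T ^ (2 - a) := by
    obtain ⟨T, h1, h2⟩ :=
      ((htend.eventually_gt_atTop (C * 2 ^ a * Real.exp (c * T₂))).and
        (eventually_ge_atTop T₂)).exists
    exact ⟨T, h2, h1⟩
  have ht₀T₂ : t₀ ≤ T₂ := le_trans hT₁t₀.le hT₂₁
  have hT0pos : 0 < T := lt_of_lt_of_le ht₀ (le_trans ht₀T₂ hTT₂)
  have ht₀T : t₀ ≤ T := le_trans ht₀T₂ hTT₂
  have h2T : t₀ ≤ 2 * T := by linarith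
  have h2Tpos : (0 : ℝ) < 2 * T := by linarith
  have hra : (0 : ℝ) < (2 * T) ^ a := Real.rpow_pos_of_pos h2Tpos a
  set r : ℝ := T / (C * (2 * T) ^ a) with hrdef
  have hr : 0 < r := div_pos hT0pos (by positivity)
  have hG := hD r (show T ∈ Ici T₂ from hTT₂) (show 2 * T ∈ Ici T₂ by
      simp only [mem_Ici]; linarith) (by linarith)
  -- bounds
  have hw2T := hw_le (2 * T) (by linarith)
  have hinv2T : (w (2 * T))⁻¹ ≤ 0 := inv_nonpos.mpr (by linarith)
  have hVT : 0 ≤ V T := hV_nonneg T ht₀T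
  have hV2T : V (2 * T) ≤ C * (2 * T) ^ a := hV_growth' (2 * T) h2T
  have hE : 0 < Real.exp (c * (T - T₂)) := Real.exp_pos _
  have hwT : w T ≤ -Real.exp (c * (T - T₂)) := hw_exp T hTT₂
  have hyT : -(w T)⁻¹ ≤ Real.exp (-(c * (T - T₂))) := by
    have hle : Real.exp (c * (T - T₂)) ≤ -w T := by linarith
    have h := inv_anti₀ hE hle
    rw [inv_neg] at h
    rw [Real.exp_neg]
    linarith
  have hr2V : r ^ 2 * V (2 * T) ≤ r * T := by
    have h1 : r ^ 2 * V (2 * T) ≤ r ^ 2 * (C * (2 * T) ^ a) :=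
      mul_le_mul_of_nonneg_left hV2T (sq_nonneg r)
    have h2 : r ^ 2 * (C * (2 * T) ^ a) = r * T := by
      rw [hrdef]; field_simp
    linarith
  have hr2VT : 0 ≤ r ^ 2 * V T := mul_nonneg (sq_nonneg r) hVT
  -- from hG : G(2T) ≤ G(T), deduce r*T ≤ exp(-(c*(T-T₂)))
  have hmain : r * T ≤ Real.exp (-(c * (T - T₂))) := by
    simp only at hG
    linarith [hG, hyT, hr2V, hr2VT, hinv2T]
  -- final contradiction
  have hTa : (0 : ℝ) < T ^ a := Real.rpow_pos_of_pos hT0pos a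
  have h2a : ((2 : ℝ) * T) ^ a = 2 ^ a * T ^ a := Real.mul_rpow (by norm_num) hT0pos.le
  have hT2a : T ^ (2 - a) = T ^ 2 / T ^ a := by
    rw [Real.rpow_sub hT0pos, show ((2 : ℝ)) = ((2 : ℕ) : ℝ) by norm_num,
      Real.rpow_natCast]
  have hexp : Real.exp (-(c * (T - T₂))) = Real.exp (c * T₂) / Real.exp (c * T) := by
    rw [show -(c * (T - T₂)) = c * T₂ - c * T by ring, Real.exp_sub]
  have e1 : r * T = T ^ 2 / (C * 2 ^ a * T ^ a) := by
    rw [hrdef, h2a]; ring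
  rw [e1, hexp] at hmain
  rw [div_le_div_iff₀ (by positivity) (Real.exp_pos _)] at hmain
  -- hmain : T ^ 2 * exp (c*T) ≤ exp (c*T₂) * (C * 2^a * T^a)
  rw [hT2a, mul_div_assoc', lt_div_iff₀ hTa] at hTbig
  -- hTbig : C * 2^a * exp (c*T₂) * T^a < exp (c*T) * T^2
  ring_nf at hmain hTbig
  linarith
end

section
/- Let r : [t₀, ∞) → ℝ be continuous with 0 < R/2 < r(t) < R for all t in [t₀, ∞), let n ≥ 2 and λ > 0. Then every nontrivial solution u of (r(t)^{n-1} u')' + λ r(t)^{n-1} u = 0 on [t₀, ∞) has arbitrarily large zeros. -/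
open Set Filter intervalIntegral Real

/-- Linear lower bound from a derivative lower bound on `Ici a`. -/
lemma lin_lower {a d : ℝ} {f f' : ℝ → ℝ} (hf : ∀ t ∈ Ici a, HasDerivAt f (f' t) t)
    (hd : ∀ t ∈ Ici a, d ≤ f' t) : ∀ b ∈ Ici a, f a + d * (b - a) ≤ f b := by
  intro b hb
  set φ : ℝ → ℝ := fun t => f t - d * t with hφdef
  have hφ : ∀ t ∈ Ici a, HasDerivAt φ (f' t - d) t := by
    intro t ht
    have h1 : HasDerivAt (fun x : ℝ => d * x) (d * 1) t := (hasDerivAt_id t).const_mul d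
    exact ((hf t ht).sub h1).congr_deriv (by ring)
  have hmono : MonotoneOn φ (Ici a) := by
    apply monotoneOn_of_deriv_nonneg (convex_Ici a)
    · intro t ht
      exact (hφ t ht).continuousAt.continuousWithinAt
    · intro t ht
      rw [interior_Ici] at ht
      exact (hφ t (Ioi_subset_Ici_self ht)).differentiableAt.differentiableWithinAt
    · intro t ht
      rw [interior_Ici] at ht
      rw [(hφ t (Ioi_subset_Ici_self ht)).deriv]
      have := hd t (Ioi_subset_Ici_self ht)
      linarith
  have := hmono (self_mem_Ici) hb hb
  simp only [hφdef] at this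
  nlinarith

/-- Linear upper bound from a derivative upper bound on `Ici a`. -/
lemma lin_upper {a d : ℝ} {f f' : ℝ → ℝ} (hf : ∀ t ∈ Ici a, HasDerivAt f (f' t) t)
    (hd : ∀ t ∈ Ici a, f' t ≤ d) : ∀ b ∈ Ici a, f b ≤ f a + d * (b - a) := by
  intro b hb
  have h := lin_lower (f := fun t => -f t) (f' := fun t => -f' t) (d := -d)
    (fun t ht => (hf t ht).neg) (fun t ht => neg_le_neg (hd t ht)) b hb
  nlinarith

/-- Key lemma: a solution positive on `[T₁, ∞)` leads to a contradiction. -/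
lemma key_pos (t₀ R lam : ℝ) (n : ℕ) (hn : 2 ≤ n) (hR : 0 < R) (hlam : 0 < lam)
    (r u u' : ℝ → ℝ)
    (hr : ∀ t ∈ Ici t₀, R / 2 < r t ∧ r t < R)
    (hu : ∀ t ∈ Ici t₀, HasDerivAt u (u' t) t)
    (hode : ∀ t ∈ Ici t₀,
      HasDerivAt (fun s => r s ^ (n - 1) * u' s) (-(lam * r t ^ (n - 1) * u t)) t)
    (T₁ : ℝ) (hT₁ : t₀ ≤ T₁) (hpos : ∀ t ∈ Ici T₁, 0 < u t) : False := by
  have hRhalf : (0:ℝ) < R / 2 := by linarith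
  have hrpos : ∀ t ∈ Ici T₁, 0 < r t := fun t ht =>
    lt_trans hRhalf (hr t (le_trans hT₁ ht)).1
  have hrpow_lb : ∀ t ∈ Ici T₁, (R/2)^(n-1) ≤ r t ^ (n-1) := fun t ht =>
    pow_le_pow_left₀ (le_of_lt hRhalf) (le_of_lt (hr t (le_trans hT₁ ht)).1) _
  have hrpow_ub : ∀ t ∈ Ici T₁, r t ^ (n-1) ≤ R^(n-1) := fun t ht =>
    pow_le_pow_left₀ (le_of_lt (hrpos t ht)) (le_of_lt (hr t (le_trans hT₁ ht)).2) _
  have hrpow_pos : ∀ t ∈ Ici T₁, 0 < r t ^ (n-1) := fun t ht =>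
    pow_pos (hrpos t ht) _
  have hRpow_pos : (0:ℝ) < (R/2)^(n-1) := pow_pos hRhalf _
  have hRpow_pos' : (0:ℝ) < R^(n-1) := pow_pos hR _
  set c : ℝ := lam * (R/2)^(n-1) with hc
  have hcpos : 0 < c := mul_pos hlam hRpow_pos
  -- Riccati variable w = r^{n-1} u' / u
  set w : ℝ → ℝ := fun t => r t ^ (n-1) * u' t / u t with hwdef
  set w' : ℝ → ℝ := fun t =>
    (-(lam * r t ^ (n-1) * u t) * u t - (r t ^ (n-1) * u' t) * u' t) / (u t)^2 with hw'def
  have hw : ∀ t ∈ Ici T₁, HasDerivAt w (w' t) t := by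
    intro t ht
    exact (hode t (le_trans hT₁ ht)).div (hu t (le_trans hT₁ ht)) (ne_of_gt (hpos t ht))
  have hw'le : ∀ t ∈ Ici T₁, w' t ≤ -c := by
    intro t ht
    have hu2 : (0:ℝ) < (u t)^2 := pow_pos (hpos t ht) 2
    rw [hw'def]
    rw [div_le_iff₀ hu2]
    have h1 := hrpow_lb t ht
    have h2 := hrpow_pos t ht
    have h3 := hpos t ht
    nlinarith [sq_nonneg (u' t), mul_pos hlam (mul_pos h2 (pow_pos h3 2)),
      mul_le_mul_of_nonneg_right (mul_le_mul_of_nonneg_left h1 (le_of_lt hlam)) (le_of_lt (pow_pos h3 2))]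
  -- w t ≤ w T₁ - c (t - T₁), so w eventually ≤ -1
  have hlin := lin_upper (a := T₁) (d := -c) hw hw'le
  set s : ℝ := T₁ + (max (w T₁) 0 + 1)/c with hs
  have hsT₁ : T₁ ≤ s := by
    have : 0 < (max (w T₁) 0 + 1)/c := by
      apply div_pos _ hcpos
      have := le_max_right (w T₁) 0
      linarith
    simp only [hs]; linarith
  have hws : w s ≤ -1 := by
    have := hlin s hsT₁
    have hc0 : c ≠ 0 := ne_of_gt hcpos
    have hd1 : s - T₁ = (max (w T₁) 0 + 1)/c := by rw [hs]; ring
    have h1 : -c * (s - T₁) = -(max (w T₁) 0 + 1) := by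
      rw [hd1]; field_simp
    rw [h1] at this
    have := le_max_left (w T₁) 0
    linarith [this, le_max_left (w T₁) 0]
  -- w stays ≤ -1 on [s, ∞)
  have hwneg : ∀ t ∈ Ici s, w t ≤ -1 := by
    intro t ht
    have h1 := lin_upper (a := s) (d := -c)
      (fun t ht => hw t (le_trans hsT₁ ht)) (fun t ht => hw'le t (le_trans hsT₁ ht)) t ht
    have h2 : -c * (t - s) ≤ 0 := by
      have : (0:ℝ) ≤ t - s := by simp only [mem_Ici] at ht; linarith
      nlinarith
    linarith
  -- hence u' < 0 on [s, ∞)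
  have hu'neg : ∀ t ∈ Ici s, u' t < 0 := by
    intro t ht
    have ht' : t ∈ Ici T₁ := le_trans hsT₁ ht
    have h1 := hwneg t ht
    have h2 := hpos t ht'
    have h3 := hrpow_pos t ht'
    simp only [hwdef] at h1
    rw [div_le_iff₀ h2] at h1
    nlinarith
  have hPnz : ∀ t ∈ Ici s, r t ^ (n-1) * u' t < 0 := by
    intro t ht
    exact mul_neg_of_pos_of_neg (hrpow_pos t (le_trans hsT₁ ht)) (hu'neg t ht)
  -- g = u / (r^{n-1} u')
  set g : ℝ → ℝ := fun t => u t / (r t ^ (n-1) * u' t) with hgdef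
  set g' : ℝ → ℝ := fun t =>
    (u' t * (r t ^ (n-1) * u' t) - u t * -(lam * r t ^ (n-1) * u t)) / (r t ^ (n-1) * u' t)^2
    with hg'def
  have hg : ∀ t ∈ Ici s, HasDerivAt g (g' t) t := by
    intro t ht
    have ht0 : t ∈ Ici t₀ := le_trans hT₁ (le_trans hsT₁ ht)
    exact (hu t ht0).div (hode t ht0) (ne_of_lt (hPnz t ht))
  set d : ℝ := 1 / R^(n-1) with hd
  have hdpos : 0 < d := by positivity
  have hg'ge : ∀ t ∈ Ici s, d ≤ g' t := by
    intro t ht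
    have ht' : t ∈ Ici T₁ := le_trans hsT₁ ht
    have hP2 : (0:ℝ) < (r t ^ (n-1) * u' t)^2 := by nlinarith [hPnz t ht]
    rw [hg'def, hd, le_div_iff₀ hP2, div_mul_eq_mul_div, div_le_iff₀ hRpow_pos']
    have h1 := hrpow_ub t ht'
    have h2 := hrpow_pos t ht'
    have h3 := hpos t ht'
    have h4 := hu'neg t ht
    have hu'2 : (0:ℝ) < (u' t)^2 := by nlinarith
    -- need: 1 * (r^{n-1} u')^2 ≤ (u' (r^{n-1} u') - u·(-(lam r^{n-1} u))) * R^{n-1}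
    have expand : (r t ^ (n-1) * u' t)^2 = r t ^(n-1) * (r t ^(n-1) * (u' t)^2) := by ring
    nlinarith [mul_le_mul_of_nonneg_right (mul_le_mul_of_nonneg_right h1 (le_of_lt hu'2)) (le_of_lt h2),
      mul_pos (mul_pos hlam h2) (pow_pos h3 2),
      mul_le_mul_of_nonneg_left (mul_pos (mul_pos hlam h2) (pow_pos h3 2)).le (le_of_lt hRpow_pos')]
  have hglin := lin_lower (a := s) hg hg'ge
  have hgsneg : g s < 0 := div_neg_of_pos_of_neg (hpos s hsT₁) (hPnz s self_mem_Ici)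
  set t₂ : ℝ := s + (1 - g s)/d with ht₂
  have hst₂ : s ≤ t₂ := by
    have : 0 < (1 - g s)/d := div_pos (by linarith) hdpos
    simp only [ht₂]; linarith
  have h1 := hglin t₂ hst₂
  have hd0 : d ≠ 0 := ne_of_gt hdpos
  have h2 : d * (t₂ - s) = 1 - g s := by
    have : t₂ - s = (1 - g s)/d := by rw [ht₂]; ring
    rw [this]; field_simp
  rw [h2] at h1
  have hgt₂neg : g t₂ < 0 := div_neg_of_pos_of_neg (hpos t₂ (le_trans hsT₁ hst₂)) (hPnz t₂ hst₂)
  linarith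

/-- If `R/2 < r(t) < R` on `[t₀, ∞)`, `n ≥ 2`, `λ > 0`, then every nontrivial solution of
`(r^{n-1} u')' + λ r^{n-1} u = 0` has arbitrarily large zeros. -/
theorem stmt1 (t₀ R lam : ℝ) (n : ℕ) (hn : 2 ≤ n) (hR : 0 < R) (hlam : 0 < lam)
    (r u u' : ℝ → ℝ)
    (hr_cont : ContinuousOn r (Ici t₀))
    (hr : ∀ t ∈ Ici t₀, R / 2 < r t ∧ r t < R)
    (hu : ∀ t ∈ Ici t₀, HasDerivAt u (u' t) t)
    (hode : ∀ t ∈ Ici t₀,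
      HasDerivAt (fun s => r s ^ (n - 1) * u' s) (-(lam * r t ^ (n - 1) * u t)) t)
    (hnontriv : ∃ t ∈ Ici t₀, u t ≠ 0) :
    ∀ T : ℝ, ∃ t, T < t ∧ t₀ ≤ t ∧ u t = 0 := by
  intro T
  by_contra hcon
  push_neg at hcon
  set T₁ : ℝ := max T t₀ + 1 with hT₁def
  have hT₁t₀ : t₀ ≤ T₁ := by
    have := le_max_right T t₀; simp only [hT₁def]; linarith
  have hnz : ∀ t ∈ Ici T₁, u t ≠ 0 := by
    intro t ht h0
    have h1 : T < t := by
      have := le_max_left T t₀; simp only [mem_Ici, hT₁def] at ht; linarith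
    have h2 : t₀ ≤ t := le_trans hT₁t₀ ht
    exact absurd h0 (by intro h; exact absurd h2 (by
      have := hcon t h1
      intro _; exact this h2 h))
  have hucont : ∀ a b : ℝ, T₁ ≤ a → ContinuousOn u (Icc a b) := by
    intro a b ha
    intro x hx
    exact (hu x (le_trans hT₁t₀ (le_trans ha hx.1))).continuousAt.continuousWithinAt
  rcases lt_or_gt_of_ne (hnz T₁ self_mem_Ici) with hneg | hpos
  · -- u T₁ < 0 : apply key_pos to -u
    have hposall : ∀ t ∈ Ici T₁, u t < 0 := by
      intro t ht
      by_contra hge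
      push_neg at hge
      have hpos' : 0 < u t := lt_of_le_of_ne hge (Ne.symm (hnz t ht))
      have hmem : (0:ℝ) ∈ Icc (u T₁) (u t) := ⟨le_of_lt hneg, le_of_lt hpos'⟩
      obtain ⟨z, hz, hz0⟩ := intermediate_value_Icc ht (hucont T₁ t le_rfl) hmem
      exact hnz z (mem_Ici.mpr hz.1) hz0
    refine key_pos t₀ R lam n hn hR hlam r (fun t => -u t) (fun t => -u' t) hr
      (fun t ht => (hu t ht).neg)
      (fun t ht => ?_) T₁ hT₁t₀ (fun t ht => by simpa using neg_pos.mpr (hposall t ht))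
    have h := (hode t ht).neg
    have heq : (fun s => -(r s ^ (n-1) * u' s)) = (fun s => r s ^ (n-1) * -u' s) := by
      funext s; ring
    change HasDerivAt (fun s => -(r s ^ (n-1) * u' s)) _ t at h
    rw [heq] at h
    convert h using 1
    ring
  · -- u T₁ > 0
    have hposall : ∀ t ∈ Ici T₁, 0 < u t := by
      intro t ht
      by_contra hge
      push_neg at hge
      have hneg' : u t < 0 := lt_of_le_of_ne hge (hnz t ht)
      have hmem : (0:ℝ) ∈ Icc (u t) (u T₁) := ⟨le_of_lt hneg', le_of_lt hpos⟩
      obtain ⟨z, hz, hz0⟩ := intermediate_value_Icc' ht (hucont T₁ t le_rfl) hmem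
      exact hnz z (mem_Ici.mpr hz.1) hz0
    exact key_pos t₀ R lam n hn hR hlam r u u' hr hu hode T₁ hT₁t₀ hposall
end

section
/- (Sturm–Picone comparison) Let p, p₁, q, q₁ be continuous on an interval I with p(t) ≥ p₁(t) > 0 and q₁(t) ≥ q(t) for all t ∈ I. Let x be a nontrivial solution of (p x')' + q x = 0 and y a nontrivial solution of (p₁ y')' + q₁ y = 0 on I. If t₁ < t₂ are consecutive zeros of x in I, then either y has a zero in the open interval (t₁, t₂), or there exists d ∈ ℝ with y = d·x on (t₁, t₂). -/
open Set

open Filter Topology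


lemma sturm_uniq (I : Set ℝ) (hI : I.OrdConnected) (p q z z' : ℝ → ℝ)
    (hp_pos : ∀ t ∈ I, 0 < p t) (hp_cont : ContinuousOn p I) (hq_cont : ContinuousOn q I)
    (hz : ∀ t ∈ I, HasDerivAt z (z' t) t)
    (hzode : ∀ t ∈ I, HasDerivAt (fun s => p s * z' s) (-(q t * z t)) t)
    (t₀ : ℝ) (ht₀ : t₀ ∈ I) (h0 : z t₀ = 0) (h0' : z' t₀ = 0) :
    ∀ s ∈ I, z s = 0 := by
  intro s hs
  set a := min s t₀ with ha_def
  set b := max s t₀ with hb_def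
  have hab : Icc a b ⊆ I := by
    rcases le_total s t₀ with h | h
    · rw [ha_def, hb_def, min_eq_left h, max_eq_right h]; exact hI.out hs ht₀
    · rw [ha_def, hb_def, min_eq_right h, max_eq_left h]; exact hI.out ht₀ hs
  have hale : a ≤ b := min_le_max
  -- bound for Lipschitz constant
  have hcont : ContinuousOn (fun t => max (p t)⁻¹ |q t|) (Icc a b) :=
    ((hp_cont.mono hab).inv₀ (fun t ht => (hp_pos t (hab ht)).ne')).sup (hq_cont.mono hab).abs
  obtain ⟨tC, htC, hC'⟩ := isCompact_Icc.exists_isMaxOn ⟨a, left_mem_Icc.2 hale⟩ hcont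
  set C := max (p tC)⁻¹ |q tC| with hCdef
  have hC : ∀ t ∈ Icc a b, max (p t)⁻¹ |q t| ≤ C := fun t ht => hC' ht
  have hC0 : 0 ≤ C := le_trans (abs_nonneg _) (le_max_right _ _)
  set K : NNReal := ⟨C, hC0⟩ with hK
  have hKC : (K : ℝ) = C := rfl
  set v : ℝ → ℝ × ℝ → ℝ × ℝ :=
    fun t w => if t ∈ Icc a b then ((p t)⁻¹ * w.2, -(q t * w.1)) else 0 with hv_def
  have hv : ∀ t, LipschitzOnWith K (v t) univ := by
    intro t
    rw [lipschitzOnWith_univ]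
    by_cases htI : t ∈ Icc a b
    · apply LipschitzWith.of_dist_le_mul
      intro w₁ w₂
      have h1 : (p t)⁻¹ ≤ C := le_trans (le_max_left _ _) (hC t htI)
      have h2 : |q t| ≤ C := le_trans (le_max_right _ _) (hC t htI)
      have hp0 : 0 ≤ (p t)⁻¹ := inv_nonneg.2 (hp_pos t (hab htI)).le
      simp only [hv_def, if_pos htI]
      rw [Prod.dist_eq, Prod.dist_eq, hKC]
      simp only [Real.dist_eq]
      have hd1 : |w₁.1 - w₂.1| ≤ max |w₁.1 - w₂.1| |w₁.2 - w₂.2| := le_max_left _ _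
      have hd2 : |w₁.2 - w₂.2| ≤ max |w₁.1 - w₂.1| |w₁.2 - w₂.2| := le_max_right _ _
      apply max_le
      · rw [← mul_sub, abs_mul, abs_of_nonneg hp0]
        calc (p t)⁻¹ * |w₁.2 - w₂.2| ≤ C * |w₁.2 - w₂.2| :=
              mul_le_mul_of_nonneg_right h1 (abs_nonneg _)
          _ ≤ _ := mul_le_mul_of_nonneg_left hd2 hC0
      · have : -(q t * w₁.1) - -(q t * w₂.1) = q t * (w₂.1 - w₁.1) := by ring
        rw [this, abs_mul]
        calc |q t| * |w₂.1 - w₁.1| ≤ C * |w₂.1 - w₁.1| :=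
              mul_le_mul_of_nonneg_right h2 (abs_nonneg _)
          _ ≤ _ := by rw [abs_sub_comm]; exact mul_le_mul_of_nonneg_left hd1 hC0
    · simp only [hv_def, if_neg htI]
      exact (LipschitzWith.const 0).weaken zero_le
  set f : ℝ → ℝ × ℝ := fun t => (z t, p t * z' t) with hf_def
  set g : ℝ → ℝ × ℝ := fun _ => ((0:ℝ), (0:ℝ)) with hg_def
  have hf' : ∀ t ∈ Icc a b, HasDerivAt f (v t (f t)) t := by
    intro t ht
    have htI := hab ht
    have hvft : v t (f t) = (z' t, -(q t * z t)) := by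
      simp only [hv_def, hf_def, if_pos ht]
      rw [inv_mul_cancel_left₀ (hp_pos t htI).ne']
    rw [hvft]
    exact (hz t htI).prodMk (hzode t htI)
  have hg' : ∀ t, HasDerivAt g (v t (g t)) t := by
    intro t
    have : v t (g t) = ((0:ℝ), (0:ℝ)) := by
      simp only [hv_def, hg_def, Prod.snd_zero, Prod.fst_zero, mul_zero, neg_zero, Prod.mk_zero_zero, ite_self]
    rw [this]
    exact hasDerivAt_const t _
  have h00 : f t₀ = g t₀ := by simp [hf_def, hg_def, h0, h0']
  have hsab : s ∈ Icc a b := ⟨min_le_left _ _, le_max_left _ _⟩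
  have ht₀ab : t₀ ∈ Icc a b := ⟨min_le_right _ _, le_max_right _ _⟩
  have key : f s = g s := by
    rcases le_total t₀ s with h | h
    · have hat : a = t₀ := by rw [ha_def, min_eq_right h]
      have heq := ODE_solution_unique_of_mem_Icc_right (fun t _ => hv t)
        (fun t ht => (hf' t ht).continuousAt.continuousWithinAt)
        (fun t ht => ((hf' t (Ico_subset_Icc_self ht)).hasDerivWithinAt))
        (fun t _ => mem_univ _)
        (fun t ht => (hg' t).continuousAt.continuousWithinAt)
        (fun t ht => (hg' t).hasDerivWithinAt)
        (fun t _ => mem_univ _)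
        (by rw [hat]; exact h00)
      exact heq hsab
    · have hbt : b = t₀ := by rw [hb_def, max_eq_right h]
      have heq := ODE_solution_unique_of_mem_Icc_left (fun t _ => hv t)
        (fun t ht => (hf' t ht).continuousAt.continuousWithinAt)
        (fun t ht => ((hf' t (Ioc_subset_Icc_self ht)).hasDerivWithinAt))
        (fun t _ => mem_univ _)
        (fun t ht => (hg' t).continuousAt.continuousWithinAt)
        (fun t ht => (hg' t).hasDerivWithinAt)
        (fun t _ => mem_univ _)
        (by rw [hbt]; exact h00)
      exact heq hsab
  simpa [hf_def, hg_def] using congrArg Prod.fst key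

/-- Sturm–Picone comparison theorem. -/
theorem stmt2 (I : Set ℝ) (hI : I.OrdConnected)
    (p p₁ q q₁ x x' y y' : ℝ → ℝ)
    (hp_cont : ContinuousOn p I) (hp₁_cont : ContinuousOn p₁ I)
    (hq_cont : ContinuousOn q I) (hq₁_cont : ContinuousOn q₁ I)
    (hpp₁ : ∀ t ∈ I, p₁ t ≤ p t) (hp₁_pos : ∀ t ∈ I, 0 < p₁ t)
    (hqq₁ : ∀ t ∈ I, q t ≤ q₁ t)
    (hx : ∀ t ∈ I, HasDerivAt x (x' t) t)
    (hxode : ∀ t ∈ I, HasDerivAt (fun s => p s * x' s) (-(q t * x t)) t)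
    (hy : ∀ t ∈ I, HasDerivAt y (y' t) t)
    (hyode : ∀ t ∈ I, HasDerivAt (fun s => p₁ s * y' s) (-(q₁ t * y t)) t)
    (hx_nontriv : ∃ t ∈ I, x t ≠ 0)
    (hy_nontriv : ∃ t ∈ I, y t ≠ 0)
    (t₁ t₂ : ℝ) (ht₁ : t₁ ∈ I) (ht₂ : t₂ ∈ I) (h12 : t₁ < t₂)
    (hxt₁ : x t₁ = 0) (hxt₂ : x t₂ = 0)
    (hconsec : ∀ t ∈ Ioo t₁ t₂, x t ≠ 0) :
    (∃ t ∈ Ioo t₁ t₂, y t = 0) ∨ ∃ d : ℝ, ∀ t ∈ Ioo t₁ t₂, y t = d * x t := by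
  by_cases hzero : ∃ t ∈ Ioo t₁ t₂, y t = 0
  · exact Or.inl hzero
  right
  push_neg at hzero
  have hIccI : Icc t₁ t₂ ⊆ I := hI.out ht₁ ht₂
  have hIooI : Ioo t₁ t₂ ⊆ I := fun t ht => hIccI (Ioo_subset_Icc_self ht)
  set F : ℝ → ℝ := fun s => x s * (p s * x' s) - (x s)^2 * (p₁ s * y' s) / y s with hF
  set G : ℝ → ℝ := fun s => (q₁ s - q s) * (x s)^2 + (p s - p₁ s) * (x' s)^2 +
      p₁ s * (x' s * y s - x s * y' s)^2 / (y s)^2 with hG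
  -- Picone identity
  have hFderiv : ∀ t ∈ Ioo t₁ t₂, HasDerivAt F (G t) t := by
    intro t ht
    have htI := hIooI ht
    have hyt := hzero t ht
    have h1 : HasDerivAt (fun s => x s * (p s * x' s))
        (x' t * (p t * x' t) + x t * (-(q t * x t))) t := (hx t htI).mul (hxode t htI)
    have h2 : HasDerivAt (fun s => (x s)^2 * (p₁ s * y' s))
        ((2 * x t ^ 1 * x' t) * (p₁ t * y' t) + (x t)^2 * (-(q₁ t * y t))) t :=
      ((hx t htI).pow 2).mul (hyode t htI)
    have h3 : HasDerivAt (fun s => (x s)^2 * (p₁ s * y' s) / y s)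
        ((((2 * x t ^ 1 * x' t) * (p₁ t * y' t) + (x t)^2 * (-(q₁ t * y t))) * y t -
          (x t)^2 * (p₁ t * y' t) * y' t) / (y t)^2) t := h2.div (hy t htI) hyt
    have h4 := h1.sub h3
    convert h4 using 1
    · rfl
    · rfl
    · rfl
    rw [hG]
    field_simp
    ring
  have hGpos : ∀ t ∈ Ioo t₁ t₂, 0 ≤ G t := by
    intro t ht
    have htI := hIooI ht
    have e1 : 0 ≤ (q₁ t - q t) * (x t)^2 :=
      mul_nonneg (sub_nonneg.2 (hqq₁ t htI)) (sq_nonneg _)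
    have e2 : 0 ≤ (p t - p₁ t) * (x' t)^2 :=
      mul_nonneg (sub_nonneg.2 (hpp₁ t htI)) (sq_nonneg _)
    have e3 : 0 ≤ p₁ t * (x' t * y t - x t * y' t)^2 / (y t)^2 :=
      div_nonneg (mul_nonneg (hp₁_pos t htI).le (sq_nonneg _)) (sq_nonneg _)
    rw [hG]
    positivity
  have hFmono : MonotoneOn F (Ioo t₁ t₂) := by
    apply monotoneOn_of_deriv_nonneg (convex_Ioo t₁ t₂)
    · exact fun t ht => (hFderiv t ht).continuousAt.continuousWithinAt
    · rw [interior_Ioo]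
      exact fun t ht => (hFderiv t ht).differentiableAt.differentiableWithinAt
    · rw [interior_Ioo]
      intro t ht
      rw [(hFderiv t ht).deriv]
      exact hGpos t ht
  -- limits at the endpoints
  have hlim : ∀ t₀ ∈ I, x t₀ = 0 → ∀ l : Filter ℝ, l ≤ 𝓝[≠] t₀ → (Ioo t₁ t₂ ∈ l) →
      Tendsto F l (𝓝 0) := by
    intro t₀ ht₀I hxt₀ l hl hlmem
    have hlnhds : l ≤ 𝓝 t₀ := hl.trans nhdsWithin_le_nhds
    have hA : Tendsto (fun s => x s * (p s * x' s)) l (𝓝 0) := by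
      have := ((hx t₀ ht₀I).continuousAt.mul (hxode t₀ ht₀I).continuousAt).tendsto
      rw [Pi.mul_apply, hxt₀, zero_mul] at this
      exact this.mono_left hlnhds
    have hB : Tendsto (fun s => (x s)^2 * (p₁ s * y' s) / y s) l (𝓝 0) := by
      by_cases hy1 : y t₀ = 0
      · have hy'1 : y' t₀ ≠ 0 := by
          intro h
          obtain ⟨s, hsI, hsy⟩ := hy_nontriv
          exact hsy (sturm_uniq I hI p₁ q₁ y y' hp₁_pos hp₁_cont hq₁_cont hy hyode t₀ ht₀I hy1 h s hsI)
        have hsx : Tendsto (slope x t₀) l (𝓝 (x' t₀)) :=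
          (hasDerivAt_iff_tendsto_slope.1 (hx t₀ ht₀I)).mono_left hl
        have hsy : Tendsto (slope y t₀) l (𝓝 (y' t₀)) :=
          (hasDerivAt_iff_tendsto_slope.1 (hy t₀ ht₀I)).mono_left hl
        have hsub : Tendsto (fun t => t - t₀) l (𝓝 0) := by
          have : Tendsto (fun t : ℝ => t - t₀) (𝓝 t₀) (𝓝 (t₀ - t₀)) :=
            (continuous_id.sub continuous_const).tendsto t₀
          rw [sub_self] at this
          exact this.mono_left hlnhds
        have hv : Tendsto (fun s => p₁ s * y' s) l (𝓝 (p₁ t₀ * y' t₀)) :=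
          (hyode t₀ ht₀I).continuousAt.tendsto.mono_left hlnhds
        have key : Tendsto (fun t => (slope x t₀ t)^2 * (p₁ t * y' t) * ((t - t₀) / slope y t₀ t))
            l (𝓝 ((x' t₀)^2 * (p₁ t₀ * y' t₀) * (0 / y' t₀))) :=
          ((hsx.pow 2).mul hv).mul (hsub.div hsy hy'1)
        rw [zero_div, mul_zero] at key
        refine key.congr' ?_
        filter_upwards [hlmem, hl self_mem_nhdsWithin] with t ht hne
        have hyt : y t ≠ 0 := hzero t ht
        have htne : t - t₀ ≠ 0 := sub_ne_zero.2 (by simpa using hne)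
        rw [slope_def_field, slope_def_field, hxt₀, hy1, sub_zero, sub_zero]
        field_simp
      · have hcont := (((hx t₀ ht₀I).continuousAt.pow 2).mul (hyode t₀ ht₀I).continuousAt).div
          (hy t₀ ht₀I).continuousAt hy1
        have h5 : Tendsto (fun s => (x s)^2 * (p₁ s * y' s) / y s) l
            (𝓝 ((x t₀)^2 * (p₁ t₀ * y' t₀) / y t₀)) := hcont.tendsto.mono_left hlnhds
        rw [hxt₀] at h5
        simpa using h5
    have := hA.sub hB
    rw [sub_zero] at this
    exact this
  have hlim1 : Tendsto F (𝓝[>] t₁) (𝓝 0) :=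
    hlim t₁ ht₁ hxt₁ _ (nhdsWithin_mono _ fun z hz => ne_of_gt hz)
      (Ioo_mem_nhdsGT_of_mem ⟨le_refl t₁, h12⟩)
  have hlim2 : Tendsto F (𝓝[<] t₂) (𝓝 0) :=
    hlim t₂ ht₂ hxt₂ _ (nhdsWithin_mono _ fun z hz => ne_of_lt hz)
      (Ioo_mem_nhdsLT_of_mem ⟨h12, le_refl t₂⟩)
  have hF0 : ∀ t ∈ Ioo t₁ t₂, F t = 0 := by
    intro t ht
    have h1 : 0 ≤ F t := by
      refine le_of_tendsto hlim1 ?_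
      filter_upwards [Ioo_mem_nhdsGT_of_mem (⟨le_refl t₁, ht.1⟩ : t₁ ∈ Ico t₁ t)] with s hs
      exact hFmono ⟨hs.1, hs.2.trans ht.2⟩ ht hs.2.le
    have h2 : F t ≤ 0 := by
      refine ge_of_tendsto hlim2 ?_
      filter_upwards [Ioo_mem_nhdsLT_of_mem (⟨ht.2, le_refl t₂⟩ : t₂ ∈ Ioc t t₂)] with s hs
      exact hFmono ht ⟨ht.1.trans hs.1, hs.2⟩ hs.1.le
    linarith
  have hG0 : ∀ t ∈ Ioo t₁ t₂, G t = 0 := by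
    intro t ht
    have hev : (fun _ : ℝ => (0:ℝ)) =ᶠ[𝓝 t] F := by
      filter_upwards [isOpen_Ioo.mem_nhds ht] with s hs
      exact (hF0 s hs).symm
    have h1 : HasDerivAt F 0 t := (hasDerivAt_const t (0:ℝ)).congr_of_eventuallyEq hev.symm
    exact (hFderiv t ht).unique h1
  have hW0 : ∀ t ∈ Ioo t₁ t₂, x' t * y t - x t * y' t = 0 := by
    intro t ht
    have htI := hIooI ht
    have hyt := hzero t ht
    have e1 : 0 ≤ (q₁ t - q t) * (x t)^2 :=
      mul_nonneg (sub_nonneg.2 (hqq₁ t htI)) (sq_nonneg _)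
    have e2 : 0 ≤ (p t - p₁ t) * (x' t)^2 :=
      mul_nonneg (sub_nonneg.2 (hpp₁ t htI)) (sq_nonneg _)
    have e3 : 0 ≤ p₁ t * (x' t * y t - x t * y' t)^2 / (y t)^2 :=
      div_nonneg (mul_nonneg (hp₁_pos t htI).le (sq_nonneg _)) (sq_nonneg _)
    have hg := hG0 t ht
    rw [hG] at hg
    have h3 : p₁ t * (x' t * y t - x t * y' t)^2 / (y t)^2 = 0 := by linarith
    have hy2 : (y t)^2 ≠ 0 := pow_ne_zero 2 hyt
    rcases div_eq_zero_iff.1 h3 with h | h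
    · rcases mul_eq_zero.1 h with h' | h'
      · exact absurd h' (hp₁_pos t htI).ne'
      · exact pow_eq_zero_iff (two_ne_zero) |>.1 h'
    · exact absurd h hy2
  have hgd : ∀ t ∈ Ioo t₁ t₂, HasDerivAt (fun s => x s / y s) 0 t := by
    intro t ht
    have htI := hIooI ht
    have h := (hx t htI).div (hy t htI) (hzero t ht)
    rw [hW0 t ht, zero_div] at h
    exact h
  set m := (t₁ + t₂) / 2 with hm_def
  have hm : m ∈ Ioo t₁ t₂ := ⟨by rw [hm_def]; linarith, by rw [hm_def]; linarith⟩
  set c := x m / y m with hc_def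
  have hconst : ∀ t ∈ Ioo t₁ t₂, x t / y t = c := by
    intro t ht
    rcases le_total t m with h | h
    · have hsub : Icc t m ⊆ Ioo t₁ t₂ := Icc_subset_Ioo ht.1 hm.2
      have := constant_of_has_deriv_right_zero (f := fun s => x s / y s) (a := t) (b := m)
        (fun z hz => (hgd z (hsub hz)).continuousAt.continuousWithinAt)
        (fun z hz => (hgd z (hsub (Ico_subset_Icc_self hz))).hasDerivWithinAt)
      exact (this m (right_mem_Icc.2 h)).symm
    · have hsub : Icc m t ⊆ Ioo t₁ t₂ := Icc_subset_Ioo hm.1 ht.2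
      have := constant_of_has_deriv_right_zero (f := fun s => x s / y s) (a := m) (b := t)
        (fun z hz => (hgd z (hsub hz)).continuousAt.continuousWithinAt)
        (fun z hz => (hgd z (hsub (Ico_subset_Icc_self hz))).hasDerivWithinAt)
      exact this t (right_mem_Icc.2 h)
  have hc : c ≠ 0 := by
    rw [hc_def]
    exact div_ne_zero (hconsec m hm) (hzero m hm)
  refine ⟨c⁻¹, fun t ht => ?_⟩
  have h1 : x t / y t = c := hconst t ht
  have h2 : y t ≠ 0 := hzero t ht
  rw [div_eq_iff h2] at h1
  rw [h1, inv_mul_cancel_left₀ hc]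
end

section
/- Let r : [t₀, ∞) → ℝ be continuous with R/2 < r(t) < R for all large t, where R > 0, let n ≥ 2 and λ > 0. If u is a nontrivial solution of (r^{n-1} u')' + λ r^{n-1} u = 0 and (t_p) is the increasing sequence of zeros of u, then there is a constant C > 0 (one may take C = π/√(2^{n-1} λ)) such that t_{p+1} − t_p > C for all sufficiently large p. -/
open Set Filter Real Topology

lemma sq_div_limit {u v : ℝ → ℝ} {c du dv : ℝ}
    (hu : HasDerivAt u du c) (hv : HasDerivAt v dv c)
    (hu0 : u c = 0) (hv0 : v c = 0) (hdv : dv ≠ 0) :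
    Tendsto (fun t => u t ^ 2 / v t) (𝓝[≠] c) (𝓝 0) := by
  have hsu : Tendsto (slope u c) (𝓝[≠] c) (𝓝 du) :=
    hasDerivAt_iff_tendsto_slope.1 hu
  have hsv : Tendsto (slope v c) (𝓝[≠] c) (𝓝 dv) :=
    hasDerivAt_iff_tendsto_slope.1 hv
  have hdiv : Tendsto (fun t => u t / v t) (𝓝[≠] c) (𝓝 (du / dv)) := by
    refine (hsu.div hsv hdv).congr' ?_
    filter_upwards [self_mem_nhdsWithin] with t ht
    have htc : t - c ≠ 0 := sub_ne_zero.2 ht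
    rcases eq_or_ne (v t) 0 with h | h
    · show slope u c t / slope v c t = u t / v t
      simp [slope_def_field, h, hv0]
    · show slope u c t / slope v c t = u t / v t
      rw [slope_def_field, slope_def_field, hu0, hv0, sub_zero, sub_zero]
      field_simp
  have hu0' : Tendsto u (𝓝[≠] c) (𝓝 0) := by
    have := hu.continuousAt.tendsto
    rw [hu0] at this
    exact this.mono_left nhdsWithin_le_nhds
  have := hu0'.mul hdiv
  rw [zero_mul] at this
  refine this.congr (fun t => ?_)
  rw [← mul_div_assoc, ← pow_two]

/-- Zeros of solutions of `(r^{n-1} u')' + λ r^{n-1} u = 0` are uniformly separated: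
eventually `t_{p+1} - t_p > π / √(2^{n-1} λ)`. -/
theorem stmt3 (t₀ R lam : ℝ) (n : ℕ) (hn : 2 ≤ n) (hR : 0 < R) (hlam : 0 < lam)
    (r u u' : ℝ → ℝ)
    (hr_cont : ContinuousOn r (Ici t₀))
    (hr : ∃ T₁ : ℝ, ∀ t, T₁ ≤ t → R / 2 < r t ∧ r t < R)
    (hu : ∀ t ∈ Ici t₀, HasDerivAt u (u' t) t)
    (hode : ∀ t ∈ Ici t₀,
      HasDerivAt (fun s => r s ^ (n - 1) * u' s) (-(lam * r t ^ (n - 1) * u t)) t)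
    (hnontriv : ∃ t ∈ Ici t₀, u t ≠ 0)
    (tseq : ℕ → ℝ)
    (htseq_mem : ∀ p, tseq p ∈ Ici t₀)
    (htseq_mono : StrictMono tseq)
    (htseq_tendsto : Tendsto tseq atTop atTop)
    (htseq_zero : ∀ p, u (tseq p) = 0)
    (htseq_all : ∀ s ∈ Ici t₀, u s = 0 → ∃ p, s = tseq p) :
    ∃ C : ℝ, 0 < C ∧ C = π / Real.sqrt (2 ^ (n - 1) * lam) ∧
      ∃ P : ℕ, ∀ p, P ≤ p → C < tseq (p + 1) - tseq p := by
  obtain ⟨T₁, hT₁⟩ := hr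
  have hμ : (0:ℝ) < 2 ^ (n-1) * lam := by positivity
  set sμ := Real.sqrt (2 ^ (n-1) * lam) with hsμdef
  have hsμ : 0 < sμ := Real.sqrt_pos.2 hμ
  have hsμ2 : sμ ^ 2 = 2 ^ (n-1) * lam := Real.sq_sqrt hμ.le
  refine ⟨π / sμ, by positivity, rfl, ?_⟩
  obtain ⟨P, hP⟩ := eventually_atTop.1 (htseq_tendsto.eventually_ge_atTop T₁)
  refine ⟨P, fun p hp => ?_⟩
  by_contra hContra
  push_neg at hContra
  set a := tseq p with ha
  set b := tseq (p+1) with hb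
  have hab : a < b := htseq_mono (Nat.lt_succ_self p)
  have haT : T₁ ≤ a := hP p hp
  have ha0 : t₀ ≤ a := htseq_mem p
  have hmemI : ∀ t : ℝ, a ≤ t → t ∈ Ici t₀ := fun t ht => le_trans ha0 ht
  have hbnd : ∀ t : ℝ, a ≤ t → R/2 < r t ∧ r t < R := fun t ht => hT₁ t (le_trans haT ht)
  have hua : u a = 0 := htseq_zero p
  have hub : u b = 0 := htseq_zero (p+1)
  -- u is nonzero on the open interval between consecutive zeros
  have hu0 : ∀ t ∈ Ioo a b, u t ≠ 0 := by
    intro t ht h0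
    obtain ⟨q, hq⟩ := htseq_all t (hmemI t ht.1.le) h0
    rw [hq] at ht
    have h1 : p < q := htseq_mono.lt_iff_lt.1 ht.1
    have h2 : q < p + 1 := htseq_mono.lt_iff_lt.1 ht.2
    omega
  set m := n - 1 with hm
  have hm0 : m ≠ 0 := by omega
  set B := (R/2) ^ m with hB
  have hBpos : 0 < B := by positivity
  set V : ℝ → ℝ := fun s => Real.sin (sμ * (s - a)) with hV
  set W : ℝ → ℝ := fun s => sμ * Real.cos (sμ * (s - a)) with hW
  have hlin : ∀ t : ℝ, HasDerivAt (fun s => sμ * (s - a)) sμ t := by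
    intro t
    simpa using ((hasDerivAt_id t).sub_const a).const_mul sμ
  have hVd : ∀ t : ℝ, HasDerivAt V (W t) t := by
    intro t
    have h := (hlin t).sin
    rw [hW]
    convert h using 1
    ring
  have hWd : ∀ t : ℝ, HasDerivAt W (-(sμ^2 * V t)) t := by
    intro t
    have h := (hlin t).cos.const_mul sμ
    rw [hW]
    refine h.congr_deriv ?_
    rw [hV]
    ring
  have hbq : sμ * (b - a) ≤ π := by
    calc sμ * (b - a) ≤ sμ * (π / sμ) := by
          apply mul_le_mul_of_nonneg_left hContra hsμ.le
      _ = π := by field_simp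
  have hVpos : ∀ t ∈ Ioo a b, 0 < V t := by
    intro t ht
    apply Real.sin_pos_of_pos_of_lt_pi
    · exact mul_pos hsμ (sub_pos.2 ht.1)
    · have h1 : sμ * (t - a) < sμ * (b - a) :=
        mul_lt_mul_of_pos_left (by linarith [ht.2]) hsμ
      linarith
  set g : ℝ → ℝ := fun s => r s ^ m * u' s with hg
  set F : ℝ → ℝ := fun s => u s * g s - u s ^ 2 / V s * (B * W s) with hF
  -- derivative of F on the open interval
  have hRB : B * sμ^2 = lam * R ^ m := by
    rw [hsμ2, hB, div_pow]
    have h2 : (2:ℝ) ^ m ≠ 0 := by positivity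
    field_simp
  clear_value B sμ
  have hFd : ∀ t ∈ Ioo a b, HasDerivAt F
      (lam * (R ^ m - r t ^ m) * u t ^ 2 + (r t ^ m - B) * u' t ^ 2
        + B * (u' t - u t * W t / V t) ^ 2) t := by
    intro t ht
    have htI : t ∈ Ici t₀ := hmemI t ht.1.le
    have hVt : V t ≠ 0 := (hVpos t ht).ne'
    have h1 : HasDerivAt (fun s => u s * g s)
        (u' t * g t + u t * (-(lam * r t ^ m * u t))) t :=
      (hu t htI).mul (hode t htI)
    have h2 : HasDerivAt (fun s => u s ^ 2) (2 * u t * u' t) t := by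
      simpa using (hu t htI).fun_pow 2
    have h3 : HasDerivAt (fun s => u s ^ 2 / V s)
        ((2 * u t * u' t * V t - u t ^ 2 * W t) / V t ^ 2) t := h2.div (hVd t) hVt
    have h4 : HasDerivAt (fun s => u s ^ 2 / V s * (B * W s))
        (((2 * u t * u' t * V t - u t ^ 2 * W t) / V t ^ 2) * (B * W t)
          + (u t ^ 2 / V t) * (B * (-(sμ^2 * V t)))) t :=
      h3.mul ((hWd t).const_mul B)
    have h5 := h1.fun_sub h4
    refine h5.congr_deriv (Eq.symm ?_)
    have hgt : g t = r t ^ m * u' t := rfl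
    field_simp
    linear_combination (-(u t ^ 2 * V t ^ 2)) * hRB
  have hmono : StrictMonoOn F (Ioo a b) := by
    apply strictMonoOn_of_deriv_pos (convex_Ioo a b)
    · intro t ht
      exact (hFd t ht).continuousAt.continuousWithinAt
    · intro t ht
      rw [interior_Ioo] at ht
      rw [(hFd t ht).deriv]
      have hb1 := hbnd t ht.1.le
      have hr0 : (0:ℝ) < r t := by linarith [hb1.1, hR]
      have h1 : r t ^ m < R ^ m := pow_lt_pow_left₀ hb1.2 hr0.le hm0
      have h2 : B ≤ r t ^ m := by
        rw [hB]
        exact pow_le_pow_left₀ (by linarith) hb1.1.le m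
      have h3 : 0 < u t ^ 2 :=
        lt_of_le_of_ne (sq_nonneg _) (Ne.symm (pow_ne_zero 2 (hu0 t ht)))
      have hA1 : 0 < lam * (R ^ m - r t ^ m) * u t ^ 2 :=
        mul_pos (mul_pos hlam (by linarith)) h3
      have hA2 : 0 ≤ (r t ^ m - B) * u' t ^ 2 := mul_nonneg (by linarith) (sq_nonneg _)
      have hA3 : 0 ≤ B * (u' t - u t * W t / V t) ^ 2 := mul_nonneg hBpos.le (sq_nonneg _)
      linarith
  -- limits at the endpoints
  have hlimA : Tendsto F (𝓝[>] a) (𝓝 0) := by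
    have haI : a ∈ Ici t₀ := htseq_mem p
    have h1 : Tendsto (fun t => u t * g t) (𝓝[>] a) (𝓝 0) := by
      have h := ((hu a haI).continuousAt.fun_mul (hode a haI).continuousAt).tendsto
      rw [show u a * g a = 0 by rw [hua]; ring] at h
      exact h.mono_left nhdsWithin_le_nhds
    have hVa : V a = 0 := by simp [hV]
    have hWa : W a ≠ 0 := by
      have : W a = sμ := by simp [hW]
      rw [this]; exact hsμ.ne'
    have h2 : Tendsto (fun t => u t ^ 2 / V t) (𝓝[>] a) (𝓝 0) := by
      have hd : HasDerivAt V (W a) a := hVd a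
      exact (sq_div_limit (hu a haI) hd hua hVa hWa).mono_left
        (nhdsWithin_mono a (fun x hx => ne_of_gt hx))
    have h3 : Tendsto (fun t => B * W t) (𝓝[>] a) (𝓝 (B * W a)) :=
      (continuousAt_const.mul (hWd a).continuousAt).tendsto.mono_left nhdsWithin_le_nhds
    have h4 := h1.sub (h2.mul h3)
    rw [zero_mul, sub_zero] at h4
    exact h4
  have hlimB : Tendsto F (𝓝[<] b) (𝓝 0) := by
    have hbI : b ∈ Ici t₀ := htseq_mem (p+1)
    have h1 : Tendsto (fun t => u t * g t) (𝓝[<] b) (𝓝 0) := by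
      have h := ((hu b hbI).continuousAt.fun_mul (hode b hbI).continuousAt).tendsto
      rw [show u b * g b = 0 by rw [hub]; ring] at h
      exact h.mono_left nhdsWithin_le_nhds
    have h2 : Tendsto (fun t => u t ^ 2 / V t) (𝓝[<] b) (𝓝 0) := by
      rcases eq_or_ne (V b) 0 with hVb0 | hVb0
      · have hcos : Real.cos (sμ * (b - a)) ≠ 0 := by
          intro hc
          have hpy := Real.sin_sq_add_cos_sq (sμ * (b - a))
          have hsin : Real.sin (sμ * (b - a)) = 0 := hVb0
          rw [hc, hsin] at hpy
          norm_num at hpy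
        have hWb : W b ≠ 0 := mul_ne_zero hsμ.ne' hcos
        exact (sq_div_limit (hu b hbI) (hVd b) hub hVb0 hWb).mono_left
          (nhdsWithin_mono b (fun x hx => ne_of_lt hx))
      · have hc : ContinuousAt (fun t => u t ^ 2 / V t) b :=
          (((hu b hbI).continuousAt.pow 2).div (hVd b).continuousAt hVb0)
        have h := hc.tendsto
        rw [show u b ^ 2 / V b = 0 by rw [hub]; simp] at h
        exact h.mono_left nhdsWithin_le_nhds
    have h3 : Tendsto (fun t => B * W t) (𝓝[<] b) (𝓝 (B * W b)) :=
      (continuousAt_const.mul (hWd b).continuousAt).tendsto.mono_left nhdsWithin_le_nhds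
    have h4 := h1.sub (h2.mul h3)
    rw [zero_mul, sub_zero] at h4
    exact h4
  -- the contradiction
  set s₁ := a + (b - a)/3 with hs₁
  set s₂ := a + 2*(b - a)/3 with hs₂
  have hs₁m : s₁ ∈ Ioo a b := ⟨by rw [hs₁]; linarith, by rw [hs₁]; linarith⟩
  have hs₂m : s₂ ∈ Ioo a b := ⟨by rw [hs₂]; linarith, by rw [hs₂]; linarith⟩
  have hs12 : s₁ < s₂ := by rw [hs₁, hs₂]; linarith
  have hInc : F s₁ < F s₂ := hmono hs₁m hs₂m hs12
  have hFs₁ : 0 ≤ F s₁ := by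
    refine le_of_tendsto hlimA ?_
    filter_upwards [Ioo_mem_nhdsGT_of_mem (⟨le_refl a, hs₁m.1⟩ : a ∈ Ico a s₁)] with x hx
    exact (hmono ⟨hx.1, hx.2.trans hs₁m.2⟩ hs₁m hx.2).le
  have hFs₂ : F s₂ ≤ 0 := by
    refine ge_of_tendsto hlimB ?_
    filter_upwards [Ioo_mem_nhdsLT_of_mem (⟨hs₂m.2, le_refl b⟩ : b ∈ Ioc s₂ b)] with x hx
    exact (hmono hs₂m ⟨hs₂m.1.trans hx.1, hx.2⟩ hx.1).le
  linarith
end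

section
/- Let p, p₁, q, q₁ be continuous on [a, b] with p ≥ p₁ > 0 and q₁ > q on [a, b]. Let x and y be nontrivial solutions of (p x')' + q x = 0 and (p₁ y')' + q₁ y = 0 respectively, with x(a) = 0. Suppose c ∈ (a, b] satisfies x(c) ≠ 0, y(c) ≠ 0, and x and y have the same number of zeros in (a, c). Then p(c)·x'(c)/x(c) ≥ p₁(c)·y'(c)/y(c). -/
open Set Filter Topology

open Set
lemma sl_unique (a b : ℝ) (p q x x' : ℝ → ℝ)
    (hp_cont : ContinuousOn p (Icc a b)) (hp_pos : ∀ t ∈ Icc a b, 0 < p t)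
    (hq_cont : ContinuousOn q (Icc a b))
    (hx : ∀ t ∈ Icc a b, HasDerivAt x (x' t) t)
    (hxode : ∀ t ∈ Icc a b, HasDerivAt (fun s => p s * x' s) (-(q t * x t)) t)
    (t₀ : ℝ) (ht₀ : t₀ ∈ Icc a b) (hx0 : x t₀ = 0) (hx'0 : x' t₀ = 0) :
    ∀ t ∈ Icc a b, x t = 0 := by
  have hab : a ≤ b := ht₀.1.trans ht₀.2
  set π : ℝ → ℝ := fun t => max a (min b t) with hπ
  have hπmem : ∀ t, π t ∈ Icc a b := fun t =>
    ⟨le_max_left _ _, max_le hab (min_le_left _ _)⟩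
  have hπeq : ∀ t ∈ Icc a b, π t = t := by
    intro t ht
    simp only [hπ]
    rw [min_eq_right ht.2, max_eq_right ht.1]
  -- bounds
  obtain ⟨tm, htm, hmin⟩ := isCompact_Icc.exists_isMinOn (nonempty_Icc.2 hab) hp_cont
  set ε : ℝ := p tm with hε
  have hεpos : 0 < ε := hp_pos tm htm
  obtain ⟨M, hM⟩ := isCompact_Icc.exists_bound_of_continuousOn hq_cont
  set Kr : ℝ := max (1 / ε) M with hKr
  have hKr0 : 0 ≤ Kr := le_trans (by positivity) (le_max_left _ _)
  set K : NNReal := Real.toNNReal Kr with hK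
  have hKcoe : (K : ℝ) = Kr := Real.coe_toNNReal _ hKr0
  set v : ℝ → ℝ × ℝ → ℝ × ℝ := fun t w => (w.2 / p (π t), -(q (π t) * w.1)) with hv
  have hlip : ∀ t, LipschitzOnWith K (v t) univ := by
    intro t
    apply LipschitzWith.lipschitzOnWith
    apply LipschitzWith.of_dist_le_mul
    intro w w'
    have hpm : ε ≤ p (π t) := hmin (hπmem t)
    have hqm : |q (π t)| ≤ M := hM _ (hπmem t)
    have hppos : 0 < p (π t) := lt_of_lt_of_le hεpos hpm
    rw [Prod.dist_eq, Prod.dist_eq]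
    simp only [hv, Real.dist_eq]
    rw [hKcoe]
    have hd1 : |w.2 / p (π t) - w'.2 / p (π t)| ≤ Kr * max |w.1 - w'.1| |w.2 - w'.2| := by
      rw [div_sub_div_same, abs_div, abs_of_pos hppos]
      have h1 : |w.2 - w'.2| / p (π t) ≤ |w.2 - w'.2| / ε :=
        div_le_div_of_nonneg_left (abs_nonneg _) hεpos hpm
      have h2 : |w.2 - w'.2| / ε = (1 / ε) * |w.2 - w'.2| := by ring
      have h3 : (1 / ε) * |w.2 - w'.2| ≤ Kr * max |w.1 - w'.1| |w.2 - w'.2| :=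
        mul_le_mul (le_max_left _ _) (le_max_right _ _) (abs_nonneg _) hKr0
      linarith
    have hd2 : |(-(q (π t) * w.1)) - (-(q (π t) * w'.1))| ≤ Kr * max |w.1 - w'.1| |w.2 - w'.2| := by
      have : (-(q (π t) * w.1)) - (-(q (π t) * w'.1)) = q (π t) * (w'.1 - w.1) := by ring
      rw [this, abs_mul]
      have h3 : |q (π t)| * |w'.1 - w.1| ≤ M * |w.1 - w'.1| := by
        rw [abs_sub_comm]
        exact mul_le_mul_of_nonneg_right hqm (abs_nonneg _)
      have h4 : M * |w.1 - w'.1| ≤ Kr * max |w.1 - w'.1| |w.2 - w'.2| :=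
        mul_le_mul (le_max_right _ _) (le_max_left _ _) (abs_nonneg _) hKr0
      linarith
    exact max_le hd1 hd2
  set f : ℝ → ℝ × ℝ := fun t => (x t, p t * x' t) with hf
  have hf' : ∀ t ∈ Icc a b, HasDerivAt f (v t (f t)) t := by
    intro t ht
    have h1 : HasDerivAt f (x' t, -(q t * x t)) t := (hx t ht).prodMk (hxode t ht)
    have h2 : v t (f t) = (x' t, -(q t * x t)) := by
      simp only [hv, hf, hπeq t ht]
      have : p t * x' t / p t = x' t := by
        rw [mul_comm]
        exact mul_div_cancel_right₀ _ (hp_pos t ht).ne'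
      rw [this]
    rw [h2]; exact h1
  have hfc : ContinuousOn f (Icc a b) := fun t ht => (hf' t ht).continuousAt.continuousWithinAt
  set g : ℝ → ℝ × ℝ := fun _ => ((0 : ℝ), (0 : ℝ)) with hg
  have hg' : ∀ t : ℝ, HasDerivAt g (v t (g t)) t := by
    intro t
    have : v t (g t) = (0, 0) := by simp [hv, hg]
    rw [this]
    exact hasDerivAt_const _ _
  have heq0 : f t₀ = g t₀ := by simp [hf, hg, hx0, hx'0]
  have hright : EqOn f g (Icc t₀ b) := by
    apply ODE_solution_unique_of_mem_Icc_right (s := fun _ => univ) (fun t _ => hlip t)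
      (hfc.mono (Icc_subset_Icc_left ht₀.1))
      (fun t ht => (hf' t ⟨le_trans ht₀.1 ht.1, le_of_lt ht.2⟩).hasDerivWithinAt)
      (fun _ _ => trivial)
      ((continuousOn_const : ContinuousOn g (Icc t₀ b)))
      (fun t _ => (hg' t).hasDerivWithinAt)
      (fun _ _ => trivial) heq0
  have hleft : EqOn f g (Icc a t₀) := by
    apply ODE_solution_unique_of_mem_Icc_left (s := fun _ => univ) (fun t _ => hlip t)
      (hfc.mono (Icc_subset_Icc_right ht₀.2))
      (fun t ht => (hf' t ⟨le_of_lt ht.1, le_trans ht.2 ht₀.2⟩).hasDerivWithinAt)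
      (fun _ _ => trivial)
      ((continuousOn_const : ContinuousOn g (Icc a t₀)))
      (fun t _ => (hg' t).hasDerivWithinAt)
      (fun _ _ => trivial) heq0
  intro t ht
  rcases le_total t t₀ with h | h
  · have := hleft ⟨ht.1, h⟩
    exact congrArg Prod.fst this
  · have := hright ⟨h, ht.2⟩
    exact congrArg Prod.fst this

lemma sl_zeros_finite (a b : ℝ) (p q x x' : ℝ → ℝ)
    (hp_cont : ContinuousOn p (Icc a b)) (hp_pos : ∀ t ∈ Icc a b, 0 < p t)
    (hq_cont : ContinuousOn q (Icc a b))
    (hx : ∀ t ∈ Icc a b, HasDerivAt x (x' t) t)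
    (hxode : ∀ t ∈ Icc a b, HasDerivAt (fun s => p s * x' s) (-(q t * x t)) t)
    (hx_nontriv : ∃ t ∈ Icc a b, x t ≠ 0) :
    {t | t ∈ Icc a b ∧ x t = 0}.Finite := by
  by_contra hfin
  have hinf : {t | t ∈ Icc a b ∧ x t = 0}.Infinite := hfin
  obtain ⟨t₀, ht₀, hacc⟩ := hinf.exists_accPt_of_subset_isCompact isCompact_Icc
    (fun t ht => ht.1)
  set Z := {t | t ∈ Icc a b ∧ x t = 0} with hZ
  have hne : (𝓝[≠] t₀ ⊓ 𝓟 Z).NeBot := hacc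
  set l : Filter ℝ := 𝓝[≠] t₀ ⊓ 𝓟 Z with hl
  have hlZ : Z ∈ l := le_principal_iff.mp inf_le_right
  have hlnhds : l ≤ 𝓝 t₀ := le_trans inf_le_left nhdsWithin_le_nhds
  -- x t₀ = 0
  have hxcont : Tendsto x l (𝓝 (x t₀)) := ((hx t₀ ht₀).continuousAt.tendsto).mono_left hlnhds
  have hxzero : Tendsto x l (𝓝 0) := by
    apply Tendsto.congr' _ tendsto_const_nhds
    filter_upwards [hlZ] with s hs
    exact hs.2.symm
  have hx0 : x t₀ = 0 := tendsto_nhds_unique hxcont hxzero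
  -- x' t₀ = 0
  have hslope : Tendsto (slope x t₀) l (𝓝 (x' t₀)) :=
    (hasDerivAt_iff_tendsto_slope.mp (hx t₀ ht₀)).mono_left inf_le_left
  have hslope0 : Tendsto (slope x t₀) l (𝓝 0) := by
    apply Tendsto.congr' _ tendsto_const_nhds
    filter_upwards [hlZ] with s hs
    simp [slope_def_field, hs.2, hx0]
  have hx'0 : x' t₀ = 0 := tendsto_nhds_unique hslope hslope0
  obtain ⟨s, hs, hsne⟩ := hx_nontriv
  exact hsne (sl_unique a b p q x x' hp_cont hp_pos hq_cont hx hxode t₀ ht₀ hx0 hx'0 s hs)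

lemma picone_hasDeriv (a b : ℝ) (p p₁ q q₁ x x' y y' : ℝ → ℝ)
    (hx : ∀ t ∈ Icc a b, HasDerivAt x (x' t) t)
    (hxode : ∀ t ∈ Icc a b, HasDerivAt (fun s => p s * x' s) (-(q t * x t)) t)
    (hy : ∀ t ∈ Icc a b, HasDerivAt y (y' t) t)
    (hyode : ∀ t ∈ Icc a b, HasDerivAt (fun s => p₁ s * y' s) (-(q₁ t * y t)) t)
    (t : ℝ) (ht : t ∈ Icc a b) (hyt : y t ≠ 0) :
    HasDerivAt (fun s => x s * (y s * (p s * x' s) - x s * (p₁ s * y' s)) / y s)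
      ((q₁ t - q t) * x t ^ 2 + (p t - p₁ t) * x' t ^ 2
        + p₁ t * (x' t - y' t / y t * x t) ^ 2) t := by
  have h1 := hx t ht
  have h2 := hxode t ht
  have h3 := hy t ht
  have h4 := hyode t ht
  have hnum : HasDerivAt (fun s => x s * (y s * (p s * x' s) - x s * (p₁ s * y' s)))
      (x' t * (y t * (p t * x' t) - x t * (p₁ t * y' t))
        + x t * ((y' t * (p t * x' t) + y t * (-(q t * x t)))
          - (x' t * (p₁ t * y' t) + x t * (-(q₁ t * y t))))) t :=
    h1.mul ((h3.mul h2).sub (h1.mul h4))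
  have h := hnum.div h3 hyt
  refine h.congr_deriv ?_
  field_simp
  ring

lemma picone_tendsto (a b : ℝ) (p p₁ x x' y y' : ℝ → ℝ)
    (hx : ∀ t ∈ Icc a b, HasDerivAt x (x' t) t)
    (hxode : ∀ t ∈ Icc a b, ContinuousAt (fun s => p s * x' s) t)
    (hy : ∀ t ∈ Icc a b, HasDerivAt y (y' t) t)
    (hyode : ∀ t ∈ Icc a b, ContinuousAt (fun s => p₁ s * y' s) t)
    (t₀ : ℝ) (ht₀ : t₀ ∈ Icc a b) (hx0 : x t₀ = 0)
    (hy'0 : y t₀ = 0 → y' t₀ ≠ 0)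
    (S : Set ℝ) (hS2 : ∀ s ∈ S, y s ≠ 0) (hS3 : t₀ ∉ S) :
    Tendsto (fun s => x s * (y s * (p s * x' s) - x s * (p₁ s * y' s)) / y s)
      (𝓝[S] t₀) (𝓝 0) := by
  set l : Filter ℝ := 𝓝[S] t₀ with hl
  have hlnhds : l ≤ 𝓝 t₀ := nhdsWithin_le_nhds
  have hlne : l ≤ 𝓝[≠] t₀ := nhdsWithin_mono t₀ (fun s hs => fun h => hS3 (h ▸ hs))
  have hxt : Tendsto x l (𝓝 0) := by
    have := ((hx t₀ ht₀).continuousAt.tendsto).mono_left hlnhds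
    rwa [hx0] at this
  have hut : Tendsto (fun s => p s * x' s) l (𝓝 (p t₀ * x' t₀)) :=
    ((hxode t₀ ht₀).tendsto).mono_left hlnhds
  have hvt : Tendsto (fun s => p₁ s * y' s) l (𝓝 (p₁ t₀ * y' t₀)) :=
    ((hyode t₀ ht₀).tendsto).mono_left hlnhds
  have hratio : ∃ L, Tendsto (fun s => x s / y s) l (𝓝 L) := by
    by_cases hy0 : y t₀ = 0
    · refine ⟨x' t₀ / y' t₀, ?_⟩
      have hxs : Tendsto (slope x t₀) l (𝓝 (x' t₀)) :=
        (hasDerivAt_iff_tendsto_slope.mp (hx t₀ ht₀)).mono_left hlne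
      have hys : Tendsto (slope y t₀) l (𝓝 (y' t₀)) :=
        (hasDerivAt_iff_tendsto_slope.mp (hy t₀ ht₀)).mono_left hlne
      have hdiv := hxs.div hys (hy'0 hy0)
      apply Tendsto.congr' _ hdiv
      filter_upwards [self_mem_nhdsWithin] with s hs
      have hsne : s - t₀ ≠ 0 := sub_ne_zero.2 (fun h => hS3 (h ▸ hs))
      have hys' : y s ≠ 0 := hS2 s hs
      rw [Pi.div_apply, slope_def_field, slope_def_field, hx0, hy0, sub_zero, sub_zero]
      rw [div_div_div_cancel_right₀]
      exact hsne
    · refine ⟨0 / y t₀, ?_⟩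
      have hyt : Tendsto y l (𝓝 (y t₀)) := ((hy t₀ ht₀).continuousAt.tendsto).mono_left hlnhds
      exact hxt.div hyt hy0
  obtain ⟨L, hL⟩ := hratio
  have hmain : Tendsto (fun s => x s * (p s * x' s) - (p₁ s * y' s) * (x s * (x s / y s)))
      l (𝓝 (0 * (p t₀ * x' t₀) - (p₁ t₀ * y' t₀) * (0 * L))) :=
    (hxt.mul hut).sub (hvt.mul (hxt.mul hL))
  have hzero : (0 : ℝ) * (p t₀ * x' t₀) - (p₁ t₀ * y' t₀) * (0 * L) = 0 := by ring
  rw [hzero] at hmain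
  apply Tendsto.congr' _ hmain
  filter_upwards [self_mem_nhdsWithin] with s hs
  have hys : y s ≠ 0 := hS2 s hs
  field_simp

section core
variable (a b : ℝ) (p p₁ q q₁ x x' y y' : ℝ → ℝ)
    (hpp₁ : ∀ t ∈ Icc a b, p₁ t ≤ p t) (hp₁_pos : ∀ t ∈ Icc a b, 0 < p₁ t)
    (hqq₁ : ∀ t ∈ Icc a b, q t < q₁ t)
    (hx : ∀ t ∈ Icc a b, HasDerivAt x (x' t) t)
    (hxode : ∀ t ∈ Icc a b, HasDerivAt (fun s => p s * x' s) (-(q t * x t)) t)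
    (hy : ∀ t ∈ Icc a b, HasDerivAt y (y' t) t)
    (hyode : ∀ t ∈ Icc a b, HasDerivAt (fun s => p₁ s * y' s) (-(q₁ t * y t)) t)

include hpp₁ hp₁_pos hqq₁ hx hxode hy hyode in
lemma picone_strictMono (D : Set ℝ) (hDconv : Convex ℝ D) (hDsub : D ⊆ Icc a b)
    (hyD : ∀ t ∈ D, y t ≠ 0) (hxI : ∀ t ∈ interior D, x t ≠ 0)
    (hIsub : interior D ⊆ D) :
    StrictMonoOn (fun s => x s * (y s * (p s * x' s) - x s * (p₁ s * y' s)) / y s) D := by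
  apply strictMonoOn_of_deriv_pos hDconv
  · have hxc : ContinuousOn x (Icc a b) := fun t ht => (hx t ht).continuousAt.continuousWithinAt
    have hyc : ContinuousOn y (Icc a b) := fun t ht => (hy t ht).continuousAt.continuousWithinAt
    have huc : ContinuousOn (fun s => p s * x' s) (Icc a b) :=
      fun t ht => (hxode t ht).continuousAt.continuousWithinAt
    have hvc : ContinuousOn (fun s => p₁ s * y' s) (Icc a b) :=
      fun t ht => (hyode t ht).continuousAt.continuousWithinAt
    exact (((hxc.mono hDsub).mul (((hyc.mono hDsub).mul (huc.mono hDsub)).sub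
      ((hxc.mono hDsub).mul (hvc.mono hDsub)))).div (hyc.mono hDsub) hyD)
  · intro t ht
    have htD : t ∈ D := hIsub ht
    have htab : t ∈ Icc a b := hDsub htD
    have hyt : y t ≠ 0 := hyD t htD
    rw [(picone_hasDeriv a b p p₁ q q₁ x x' y y' hx hxode hy hyode t htab hyt).deriv]
    have h1 : 0 < (q₁ t - q t) * x t ^ 2 :=
      mul_pos (sub_pos.2 (hqq₁ t htab)) (pow_two_pos_of_ne_zero (hxI t ht))
    have h2 : 0 ≤ (p t - p₁ t) * x' t ^ 2 :=
      mul_nonneg (sub_nonneg.2 (hpp₁ t htab)) (sq_nonneg _)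
    have h3 : 0 ≤ p₁ t * (x' t - y' t / y t * x t) ^ 2 :=
      mul_nonneg (hp₁_pos t htab).le (sq_nonneg _)
    linarith

include hpp₁ hp₁_pos hqq₁ hx hxode hy hyode in
lemma sturm_S (d e : ℝ) (hd : d ∈ Icc a b) (he : e ∈ Icc a b) (hde : d < e)
    (hxd : x d = 0) (hxe : x e = 0)
    (hxne : ∀ t ∈ Ioo d e, x t ≠ 0) (hyne : ∀ t ∈ Ioo d e, y t ≠ 0)
    (hy'd : y d = 0 → y' d ≠ 0) (hy'e : y e = 0 → y' e ≠ 0) : False := by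
  set F : ℝ → ℝ := fun s => x s * (y s * (p s * x' s) - x s * (p₁ s * y' s)) / y s with hF
  have hDsub : Ioo d e ⊆ Icc a b := fun t ht => ⟨hd.1.trans ht.1.le, ht.2.le.trans he.2⟩
  have hmono : StrictMonoOn F (Ioo d e) := by
    apply picone_strictMono a b p p₁ q q₁ x x' y y' hpp₁ hp₁_pos hqq₁ hx hxode hy hyode
      (Ioo d e) (convex_Ioo d e) hDsub hyne
    · rw [interior_Ioo]; exact hxne
    · rw [interior_Ioo]
  have hlimd : Tendsto F (𝓝[Ioo d e] d) (𝓝 0) :=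
    picone_tendsto a b p p₁ x x' y y'
      hx (fun t ht => (hxode t ht).continuousAt) hy (fun t ht => (hyode t ht).continuousAt)
      d hd hxd hy'd (Ioo d e) hyne (fun h => lt_irrefl d h.1)
  have hlime : Tendsto F (𝓝[Ioo d e] e) (𝓝 0) :=
    picone_tendsto a b p p₁ x x' y y'
      hx (fun t ht => (hxode t ht).continuousAt) hy (fun t ht => (hyode t ht).continuousAt)
      e he hxe hy'e (Ioo d e) hyne (fun h => lt_irrefl e h.2)
  haveI hnb_d : (𝓝[Ioo d e] d).NeBot := by
    apply mem_closure_iff_nhdsWithin_neBot.mp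
    rw [closure_Ioo hde.ne]
    exact ⟨le_refl d, hde.le⟩
  haveI hnb_e : (𝓝[Ioo d e] e).NeBot := by
    apply mem_closure_iff_nhdsWithin_neBot.mp
    rw [closure_Ioo hde.ne]
    exact ⟨hde.le, le_refl e⟩
  set t₁ : ℝ := d + (e - d) / 3 with ht₁def
  set t₂ : ℝ := d + 2 * (e - d) / 3 with ht₂def
  have ht₁ : t₁ ∈ Ioo d e := by constructor <;> [skip; skip] <;> simp only [ht₁def] <;> nlinarith
  have ht₂ : t₂ ∈ Ioo d e := by constructor <;> [skip; skip] <;> simp only [ht₂def] <;> nlinarith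
  have h12 : t₁ < t₂ := by simp only [ht₁def, ht₂def]; nlinarith
  have hlt : F t₁ < F t₂ := hmono ht₁ ht₂ h12
  have hle2 : F t₂ ≤ 0 := by
    apply ge_of_tendsto hlime
    filter_upwards [self_mem_nhdsWithin,
      (eventually_gt_nhds ht₂.2).filter_mono nhdsWithin_le_nhds] with s hs1 hs2
    exact (hmono ht₂ hs1 hs2).le
  have hge1 : 0 ≤ F t₁ := by
    apply le_of_tendsto hlimd
    filter_upwards [self_mem_nhdsWithin,
      (eventually_lt_nhds ht₁.1).filter_mono nhdsWithin_le_nhds] with s hs1 hs2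
    exact (hmono hs1 ht₁ hs2).le
  linarith

include hpp₁ hp₁_pos hqq₁ hx hxode hy hyode in
lemma sturm_P (d c : ℝ) (hd : d ∈ Icc a b) (hcc : c ∈ Icc a b) (hdc : d < c)
    (hxd : x d = 0)
    (hxne : ∀ t ∈ Ioc d c, x t ≠ 0) (hyne : ∀ t ∈ Ioc d c, y t ≠ 0)
    (hy'd : y d = 0 → y' d ≠ 0) :
    0 < x c * (y c * (p c * x' c) - x c * (p₁ c * y' c)) / y c := by
  set F : ℝ → ℝ := fun s => x s * (y s * (p s * x' s) - x s * (p₁ s * y' s)) / y s with hF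
  have hDsub : Ioc d c ⊆ Icc a b := fun t ht => ⟨hd.1.trans ht.1.le, ht.2.trans hcc.2⟩
  have hmono : StrictMonoOn F (Ioc d c) := by
    apply picone_strictMono a b p p₁ q q₁ x x' y y' hpp₁ hp₁_pos hqq₁ hx hxode hy hyode
      (Ioc d c) (convex_Ioc d c) hDsub hyne
    · rw [interior_Ioc]; exact fun t ht => hxne t (Ioo_subset_Ioc_self ht)
    · rw [interior_Ioc]; exact Ioo_subset_Ioc_self
  have hlimd : Tendsto F (𝓝[Ioo d c] d) (𝓝 0) :=
    picone_tendsto a b p p₁ x x' y y'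
      hx (fun t ht => (hxode t ht).continuousAt) hy (fun t ht => (hyode t ht).continuousAt)
      d hd hxd hy'd (Ioo d c) (fun t ht => hyne t (Ioo_subset_Ioc_self ht))
      (fun h => lt_irrefl d h.1)
  haveI hnb_d : (𝓝[Ioo d c] d).NeBot := by
    apply mem_closure_iff_nhdsWithin_neBot.mp
    rw [closure_Ioo hdc.ne]
    exact ⟨le_refl d, hdc.le⟩
  set t₁ : ℝ := d + (c - d) / 2 with ht₁def
  have ht₁ : t₁ ∈ Ioo d c := by constructor <;> simp only [ht₁def] <;> nlinarith
  have hge1 : 0 ≤ F t₁ := by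
    apply le_of_tendsto hlimd
    filter_upwards [self_mem_nhdsWithin,
      (eventually_lt_nhds ht₁.1).filter_mono nhdsWithin_le_nhds] with s hs1 hs2
    exact (hmono (Ioo_subset_Ioc_self hs1) (Ioo_subset_Ioc_self ht₁) hs2).le
  have hlt : F t₁ < F c := hmono (Ioo_subset_Ioc_self ht₁) ⟨hdc, le_refl c⟩ ht₁.2
  linarith

end core

/-- Comparison of logarithmic derivatives (Theorem 9): if `x`, `y` solve comparable
Sturm–Liouville equations on `[a,b]`, `x(a) = 0`, and `x`, `y` have the same number of
zeros in `(a, c)`, then `p(c) x'(c)/x(c) ≥ p₁(c) y'(c)/y(c)`. -/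
theorem stmt4 (a b : ℝ) (hab : a < b)
    (p p₁ q q₁ x x' y y' : ℝ → ℝ)
    (hp_cont : ContinuousOn p (Icc a b)) (hp₁_cont : ContinuousOn p₁ (Icc a b))
    (hq_cont : ContinuousOn q (Icc a b)) (hq₁_cont : ContinuousOn q₁ (Icc a b))
    (hpp₁ : ∀ t ∈ Icc a b, p₁ t ≤ p t) (hp₁_pos : ∀ t ∈ Icc a b, 0 < p₁ t)
    (hqq₁ : ∀ t ∈ Icc a b, q t < q₁ t)
    (hx : ∀ t ∈ Icc a b, HasDerivAt x (x' t) t)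
    (hxode : ∀ t ∈ Icc a b, HasDerivAt (fun s => p s * x' s) (-(q t * x t)) t)
    (hy : ∀ t ∈ Icc a b, HasDerivAt y (y' t) t)
    (hyode : ∀ t ∈ Icc a b, HasDerivAt (fun s => p₁ s * y' s) (-(q₁ t * y t)) t)
    (hx_nontriv : ∃ t ∈ Icc a b, x t ≠ 0)
    (hy_nontriv : ∃ t ∈ Icc a b, y t ≠ 0)
    (hxa : x a = 0)
    (c : ℝ) (hc : c ∈ Ioc a b) (hxc : x c ≠ 0) (hyc : y c ≠ 0)
    (hzeros : {t | t ∈ Ioo a c ∧ x t = 0}.ncard = {t | t ∈ Ioo a c ∧ y t = 0}.ncard) :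
    p₁ c * y' c / y c ≤ p c * x' c / x c := by
  have hp_pos : ∀ t ∈ Icc a b, 0 < p t := fun t ht => lt_of_lt_of_le (hp₁_pos t ht) (hpp₁ t ht)
  have hcb : c ≤ b := hc.2
  have hac : a < c := hc.1
  have hIccsub : Icc a c ⊆ Icc a b := Icc_subset_Icc_right hcb
  have hIcosub : Ico a c ⊆ Icc a b := fun t ht => ⟨ht.1, ht.2.le.trans hcb⟩
  have hIoosub : Ioo a c ⊆ Icc a b := fun t ht => ⟨ht.1.le, ht.2.le.trans hcb⟩
  -- double zero implies trivial
  have hy'cond : ∀ t ∈ Icc a b, y t = 0 → y' t ≠ 0 := by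
    intro t ht h0 h0'
    obtain ⟨s, hs, hsne⟩ := hy_nontriv
    exact hsne (sl_unique a b p₁ q₁ y y' hp₁_cont hp₁_pos hq₁_cont hy hyode t ht h0 h0' s hs)
  -- finiteness of zero sets
  have hZxall_fin := sl_zeros_finite a b p q x x' hp_cont hp_pos hq_cont hx hxode hx_nontriv
  have hZyall_fin := sl_zeros_finite a b p₁ q₁ y y' hp₁_cont hp₁_pos hq₁_cont hy hyode hy_nontriv
  set Zx := {t | t ∈ Ioo a c ∧ x t = 0} with hZxdef
  set Zy := {t | t ∈ Ioo a c ∧ y t = 0} with hZydef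
  have hZx_fin : Zx.Finite := hZxall_fin.subset (fun t ht => ⟨hIoosub ht.1, ht.2⟩)
  have hZy_fin : Zy.Finite := hZyall_fin.subset (fun t ht => ⟨hIoosub ht.1, ht.2⟩)
  set Zxc := {t | t ∈ Ico a c ∧ x t = 0} with hZxcdef
  have hZxc_fin : Zxc.Finite := hZxall_fin.subset (fun t ht => ⟨hIcosub ht.1, ht.2⟩)
  have haZ : a ∈ Zxc := ⟨⟨le_refl a, hac⟩, hxa⟩
  have hZxc_ne : Zxc.Nonempty := ⟨a, haZ⟩
  set d : ℝ := sSup Zxc with hddef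
  have hd_mem : d ∈ Zxc := hZxc_ne.csSup_mem hZxc_fin
  have hd_ub : ∀ z ∈ Zxc, z ≤ d := fun z hz => le_csSup hZxc_fin.bddAbove hz
  have hdc : d < c := hd_mem.1.2
  have hdab : d ∈ Icc a b := hIcosub hd_mem.1
  have hcab : c ∈ Icc a b := ⟨hac.le, hcb⟩
  have hxd : x d = 0 := hd_mem.2
  -- x has no zero in (d, c]
  have hxne : ∀ t ∈ Ioc d c, x t ≠ 0 := by
    intro t ht h0
    rcases eq_or_lt_of_le ht.2 with rfl | hlt
    · exact hxc h0
    · have : t ∈ Zxc := ⟨⟨hd_mem.1.1.trans ht.1.le, hlt⟩, h0⟩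
      exact absurd (hd_ub t this) (not_le.2 ht.1)
  -- y has no zero in (d, c]
  have hyne : ∀ t ∈ Ioc d c, y t ≠ 0 := by
    intro t0 ht0 hyt0
    have ht0c : t0 < c := lt_of_le_of_ne ht0.2 (fun h => hyc (h ▸ hyt0))
    -- build injection from Zxc into Zy
    have claim : ∀ s ∈ Zxc, ∃ z, z ∈ Zy ∧ s < z ∧ ∀ s' ∈ Zxc, s < s' → z < s' := by
      intro s hs
      by_cases hsd : s = d
      · refine ⟨t0, ⟨⟨?_, ht0c⟩, hyt0⟩, ?_, ?_⟩
        · exact lt_of_le_of_lt hd_mem.1.1 (hsd ▸ ht0.1)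
        · exact hsd ▸ ht0.1
        · intro s' hs' hss'
          exact absurd (hd_ub s' hs') (not_le.2 (hsd ▸ hss'))
      · have hsltd : s < d := lt_of_le_of_ne (hd_ub s hs) hsd
        set T := {r | r ∈ Zxc ∧ s < r} with hTdef
        have hT_fin : T.Finite := hZxc_fin.subset (fun r hr => hr.1)
        have hT_ne : T.Nonempty := ⟨d, hd_mem, hsltd⟩
        set e : ℝ := sInf T with hedef
        have he_mem : e ∈ T := hT_ne.csInf_mem hT_fin
        have he_lb : ∀ r ∈ T, e ≤ r := fun r hr => csInf_le hT_fin.bddBelow hr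
        have hse : s < e := he_mem.2
        have heab : e ∈ Icc a b := hIcosub he_mem.1.1
        have hsab : s ∈ Icc a b := hIcosub hs.1
        have hxs : x s = 0 := hs.2
        have hxe : x e = 0 := he_mem.1.2
        have hxmid : ∀ r ∈ Ioo s e, x r ≠ 0 := by
          intro r hr h0
          have hrZ : r ∈ Zxc := ⟨⟨hs.1.1.trans hr.1.le, hr.2.trans he_mem.1.1.2⟩, h0⟩
          exact absurd (he_lb r ⟨hrZ, hr.1⟩) (not_le.2 hr.2)
        have hz : ∃ z ∈ Ioo s e, y z = 0 := by
          by_contra hno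
          push_neg at hno
          exact sturm_S a b p p₁ q q₁ x x' y y' hpp₁ hp₁_pos hqq₁ hx hxode hy hyode
            s e hsab heab hse hxs hxe hxmid hno
            (hy'cond s hsab) (hy'cond e heab)
        obtain ⟨z, hz1, hz2⟩ := hz
        refine ⟨z, ⟨⟨lt_of_le_of_lt hs.1.1 hz1.1, hz1.2.trans_le he_mem.1.1.2.le⟩, hz2⟩,
          hz1.1, ?_⟩
        intro s' hs' hss'
        exact lt_of_lt_of_le hz1.2 (he_lb s' ⟨hs', hss'⟩)
    choose! ψ hψ1 hψ2 hψ3 using claim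
    have hinj : Set.InjOn ψ Zxc := by
      intro s hs s' hs' heq
      by_contra hne
      rcases lt_or_gt_of_ne hne with hlt | hlt
      · have h1 := hψ3 s hs s' hs' hlt
        have h2 := hψ2 s' hs'
        rw [heq] at h1
        linarith
      · have h1 := hψ3 s' hs' s hs hlt
        have h2 := hψ2 s hs
        rw [← heq] at h1
        linarith
    have himg : ψ '' Zxc ⊆ Zy := by
      rintro _ ⟨s, hs, rfl⟩
      exact hψ1 s hs
    have hcard1 : Zxc.ncard = (ψ '' Zxc).ncard := (Set.ncard_image_of_injOn hinj).symm
    have hcard2 : (ψ '' Zxc).ncard ≤ Zy.ncard := Set.ncard_le_ncard himg hZy_fin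
    have hZxc_eq : Zxc = insert a Zx := by
      ext t
      constructor
      · rintro ⟨⟨h1, h2⟩, h3⟩
        rcases eq_or_lt_of_le h1 with rfl | h1'
        · exact Or.inl rfl
        · exact Or.inr ⟨⟨h1', h2⟩, h3⟩
      · rintro (rfl | ⟨⟨h1, h2⟩, h3⟩)
        · exact haZ
        · exact ⟨⟨h1.le, h2⟩, h3⟩
    have hanotin : a ∉ Zx := fun h => lt_irrefl a h.1.1
    have hcard3 : Zxc.ncard = Zx.ncard + 1 := by
      rw [hZxc_eq, Set.ncard_insert_of_notMem hanotin hZx_fin]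
    rw [hzeros] at hcard3
    omega
  -- final Picone application on (d, c]
  have hfinal := sturm_P a b p p₁ q q₁ x x' y y' hpp₁ hp₁_pos hqq₁ hx hxode hy hyode
    d c hdab hcab hdc hxd hxne hyne (hy'cond d hdab)
  have hxc2 : (0:ℝ) < x c ^ 2 := pow_two_pos_of_ne_zero hxc
  have hkey : x c * (y c * (p c * x' c) - x c * (p₁ c * y' c)) / y c
      = x c ^ 2 * (p c * x' c / x c - p₁ c * y' c / y c) := by
    field_simp
  rw [hkey] at hfinal
  nlinarith [hfinal, hxc2]
end

section
/- Let r : [t₀, ∞) → ℝ be continuous, increasing, with 0 < r(t) < R, let n ≥ 2, λ > 0, and let u solve (r^{n-1} u')' + λ r^{n-1} u = 0 with consecutive zeros t_k < t_{k+1} and u'(t_k) ≠ 0. Define v_k(t) = (r(t_k)^{n-1} u'(t_k))/(R^{n-1}√λ) · sin(√λ · R^{n-1} ∫_{t_k}^t ds/r(s)^{n-1}). Then |v_k(t)| ≤ |u(t)| for all t in (t_k, t̃_k), where t̃_k is the first zero of v_k after t_k. -/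
open Set Real intervalIntegral
open Filter Topology

lemma alg1 (lam sl Rm rt rk uk ut ut' st ct : ℝ) (hrt : rt ≠ 0) (hsl : sl ≠ 0) (hRm : Rm ≠ 0)
    (hlam : sl * sl = lam) :
    lam * (ut * (rk * uk / (Rm * sl) * st)) * (Rm * Rm / rt - rt)
      = -(lam * rt * ut) * (rk * uk / (Rm * sl) * st) +
          rt * ut' * (rk * uk / (Rm * sl) * ct * (sl * Rm * (1 / rt)))
        - (ut' * (rk * uk * ct) + ut * (rk * uk * (-st * (sl * Rm * (1 / rt))))) := by
  subst hlam
  field_simp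
  ring

theorem stmt5_aux (t₀ R lam : ℝ) (n : ℕ) (hR : 0 < R) (hlam : 0 < lam)
    (r u u' : ℝ → ℝ)
    (hr_cont : ContinuousOn r (Ici t₀))
    (hr : ∀ t ∈ Ici t₀, 0 < r t ∧ r t < R)
    (hu : ∀ t ∈ Ici t₀, HasDerivAt u (u' t) t)
    (hode : ∀ t ∈ Ici t₀,
      HasDerivAt (fun s => r s ^ (n - 1) * u' s) (-(lam * r t ^ (n - 1) * u t)) t)
    (tk tk1 : ℝ) (htk : t₀ ≤ tk) (hkk1 : tk < tk1)
    (hutk : u tk = 0) (hutk1 : u tk1 = 0)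
    (hconsec : ∀ t ∈ Ioo tk tk1, u t ≠ 0)
    (hpos : 0 < u' tk)
    (vk : ℝ → ℝ)
    (hvk : ∀ t, vk t = r tk ^ (n - 1) * u' tk / (R ^ (n - 1) * Real.sqrt lam) *
      Real.sin (Real.sqrt lam * R ^ (n - 1) * ∫ s in tk..t, 1 / r s ^ (n - 1)))
    (ttk : ℝ) (httk : tk < ttk) (hvttk : vk ttk = 0)
    (hfirst : ∀ s ∈ Ioo tk ttk, vk s ≠ 0) :
    ∀ t ∈ Ioo tk ttk, 0 < vk t ∧ vk t ≤ u t := by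
  set m : ℕ := n - 1 with hmdef
  have hsl : 0 < Real.sqrt lam := Real.sqrt_pos.mpr hlam
  have hlam' : Real.sqrt lam * Real.sqrt lam = lam := Real.mul_self_sqrt hlam.le
  have hRm : 0 < R ^ m := pow_pos hR m
  have htk' : tk ∈ Ici t₀ := htk
  have hrpos : ∀ t ∈ Ici t₀, 0 < r t ^ m := fun t ht => pow_pos (hr t ht).1 m
  set f : ℝ → ℝ := fun s => 1 / r s ^ m with hfdef
  set C : ℝ := r tk ^ m * u' tk / (R ^ m * Real.sqrt lam) with hCdef
  set D : ℝ := r tk ^ m * u' tk with hDdef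
  set φ : ℝ → ℝ := fun t => ∫ s in tk..t, f s with hφdef
  set θ : ℝ → ℝ := fun t => Real.sqrt lam * R ^ m * φ t with hθdef
  have hvkθ : ∀ t, vk t = C * Real.sin (θ t) := fun t => hvk t
  have hCpos : 0 < C := div_pos (mul_pos (hrpos tk htk') hpos) (mul_pos hRm hsl)
  have hDpos : 0 < D := mul_pos (hrpos tk htk') hpos
  have hCD : C * (Real.sqrt lam * R ^ m) = D := by
    rw [hCdef]; field_simp
  have hf_cont : ContinuousOn f (Ici t₀) :=
    continuousOn_const.div (hr_cont.pow m) (fun t ht => (hrpos t ht).ne')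
  have hf_int : ∀ b ∈ Ici t₀, IntervalIntegrable f MeasureTheory.volume tk b := by
    intro b hb
    apply (hf_cont.mono ?_).intervalIntegrable
    intro x hx
    exact le_trans (le_min htk' hb) hx.1
  have hφd : ∀ t ∈ Ioi t₀, HasDerivAt φ (f t) t := by
    intro t ht
    exact integral_hasDerivAt_right (hf_int t (mem_Ici.mpr (le_of_lt ht)))
      (ContinuousOn.stronglyMeasurableAtFilter isOpen_Ioi
        (hf_cont.mono Ioi_subset_Ici_self) t ht)
      (hf_cont.continuousAt (Ici_mem_nhds ht))
  have hφtk : HasDerivWithinAt φ (f tk) (Ici tk) tk := by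
    have hsub : Ioi tk ⊆ Ici t₀ := fun x hx => le_trans htk hx.le
    exact integral_hasDerivWithinAt_right (hf_int tk htk')
      ((hf_cont.mono hsub).stronglyMeasurableAtFilter_nhdsWithin measurableSet_Ioi tk)
      ((hf_cont tk htk').mono hsub)
  have hφ0 : φ tk = 0 := intervalIntegral.integral_same
  have hθ0 : θ tk = 0 := by rw [hθdef]; simp [hφ0]
  have hvk0 : vk tk = 0 := by rw [hvkθ, hθ0]; simp
  have hθd : ∀ t ∈ Ioi t₀, HasDerivAt θ (Real.sqrt lam * R ^ m * f t) t := by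
    intro t ht
    exact (hφd t ht).const_mul _
  have hθdtk : HasDerivWithinAt θ (Real.sqrt lam * R ^ m * f tk) (Ici tk) tk :=
    hφtk.const_mul _
  have hvkd : ∀ t ∈ Ioi t₀,
      HasDerivAt vk (C * Real.cos (θ t) * (Real.sqrt lam * R ^ m * f t)) t := by
    intro t ht
    have h := ((hθd t ht).sin).const_mul C
    have hfun : vk = fun t => C * Real.sin (θ t) := funext hvkθ
    rw [hfun]
    exact h.congr_deriv (by ring)
  have hvkdtk : HasDerivWithinAt vk (u' tk) (Ici tk) tk := by
    have h := (hθdtk.sin).const_mul C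
    have hfun : vk = fun t => C * Real.sin (θ t) := funext hvkθ
    have hval : C * (Real.cos (θ tk) * (Real.sqrt lam * R ^ m * f tk)) = u' tk := by
      rw [hθ0, Real.cos_zero, one_mul]
      show r tk ^ m * u' tk / (R ^ m * Real.sqrt lam) * (Real.sqrt lam * R ^ m * (1 / r tk ^ m)) = u' tk
      rw [div_mul_eq_mul_div, div_eq_iff (by positivity : R ^ m * Real.sqrt lam ≠ 0)]
      field_simp [(hrpos tk htk').ne']
    rw [hfun]
    exact hval ▸ h
  -- derivative of g := fun s => D * cos (θ s)
  have hgd : ∀ t ∈ Ioi t₀, HasDerivAt (fun s => D * Real.cos (θ s))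
      (D * (-Real.sin (θ t) * (Real.sqrt lam * R ^ m * f t))) t := by
    intro t ht
    exact ((hθd t ht).cos).const_mul D
  -- derivative of the Wronskian-type function W
  have hWd : ∀ t ∈ Ioi t₀, HasDerivAt
      (fun s => r s ^ m * u' s * vk s - u s * (D * Real.cos (θ s)))
      (lam * (u t * vk t) * (R ^ m * R ^ m / r t ^ m - r t ^ m)) t := by
    intro t ht
    have ht' : t ∈ Ici t₀ := mem_Ici.mpr (le_of_lt ht)
    have h1 := (hode t ht').mul (hvkd t ht)
    have h2 := (hu t ht').mul (hgd t ht)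
    have h3 := h1.sub h2
    refine h3.congr_deriv (Eq.symm ?_)
    rw [hvkθ t]
    exact alg1 lam (Real.sqrt lam) (R ^ m) (r t ^ m) (r tk ^ m) (u' tk) (u t) (u' t)
      (Real.sin (θ t)) (Real.cos (θ t)) (hrpos t ht').ne' hsl.ne' hRm.ne' hlam'
  -- continuity facts
  have hIoi : ∀ x, tk < x → x ∈ Ioi t₀ := fun x hx => lt_of_le_of_lt htk hx
  have hIci : ∀ x, tk < x → x ∈ Ici t₀ := fun x hx => mem_Ici.mpr (le_of_lt (hIoi x hx))
  have hvk_cont : ContinuousOn vk (Ici tk) := by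
    intro x hx
    rcases eq_or_lt_of_le (mem_Ici.mp hx) with rfl | hlt
    · exact hvkdtk.continuousWithinAt
    · exact ((hvkd x (hIoi x hlt)).continuousAt).continuousWithinAt
  have hW_cont : ContinuousOn (fun s => r s ^ m * u' s * vk s - u s * (D * Real.cos (θ s)))
      (Ici tk) := by
    intro x hx
    rcases eq_or_lt_of_le (mem_Ici.mp hx) with rfl | hlt
    · exact (((hode tk htk').continuousAt.continuousWithinAt.mul hvkdtk.continuousWithinAt).sub
        ((hu tk htk').continuousAt.continuousWithinAt.mul
          (continuousWithinAt_const.mul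
            (Real.continuous_cos.continuousAt.comp_continuousWithinAt hθdtk.continuousWithinAt))))
    · exact ((hWd x (hIoi x hlt)).continuousAt).continuousWithinAt
  -- positivity of u on (tk, tk1)
  have hu_pos : ∀ t ∈ Ioo tk tk1, 0 < u t := by
    intro t ht
    by_contra hle
    push_neg at hle
    have hlt : u t < 0 := lt_of_le_of_ne hle (hconsec t ht)
    have hslope : Tendsto (slope u tk) (𝓝[>] tk) (𝓝 (u' tk)) :=
      (hasDerivAt_iff_tendsto_slope.mp (hu tk htk')).mono_left
        (nhdsWithin_mono tk (fun x hx => hx.ne'))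
    have hev : ∀ᶠ s in 𝓝[>] tk, 0 < slope u tk s := hslope.eventually (eventually_gt_nhds hpos)
    have hev2 : ∀ᶠ s in 𝓝[>] tk, s ∈ Ioo tk t := Ioo_mem_nhdsGT_of_mem ⟨le_refl tk, ht.1⟩
    obtain ⟨s, hs1, hs2⟩ := (hev.and hev2).exists
    have h4 : 0 < s - tk := sub_pos.mpr hs2.1
    have hus : 0 < u s := by
      have h6 := mul_pos hs1 h4
      rw [slope_def_field, div_mul_cancel₀ _ h4.ne', hutk, sub_zero] at h6
      exact h6
    have hcont : ContinuousOn u (Icc s t) := fun x hx =>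
      ((hu x (hIci x (lt_of_lt_of_le hs2.1 hx.1))).continuousAt).continuousWithinAt
    obtain ⟨z, hz, hz0⟩ := intermediate_value_Icc' hs2.2.le hcont ⟨hlt.le, hus.le⟩
    exact hconsec z ⟨lt_of_lt_of_le hs2.1 hz.1, lt_of_le_of_lt hz.2 ht.2⟩ hz0
  -- positivity of vk on (tk, ttk)
  have hvk_pos : ∀ t ∈ Ioo tk ttk, 0 < vk t := by
    intro t ht
    by_contra hle
    push_neg at hle
    have hlt : vk t < 0 := lt_of_le_of_ne hle (hfirst t ht)
    have hslope : Tendsto (slope vk tk) (𝓝[>] tk) (𝓝 (u' tk)) := by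
      have h := hasDerivWithinAt_iff_tendsto_slope.mp hvkdtk
      rwa [Ici_sdiff_left] at h
    have hev : ∀ᶠ s in 𝓝[>] tk, 0 < slope vk tk s := hslope.eventually (eventually_gt_nhds hpos)
    have hev2 : ∀ᶠ s in 𝓝[>] tk, s ∈ Ioo tk t := Ioo_mem_nhdsGT_of_mem ⟨le_refl tk, ht.1⟩
    obtain ⟨s, hs1, hs2⟩ := (hev.and hev2).exists
    have h4 : 0 < s - tk := sub_pos.mpr hs2.1
    have hus : 0 < vk s := by
      have h6 := mul_pos hs1 h4
      rw [slope_def_field, div_mul_cancel₀ _ h4.ne', hvk0, sub_zero] at h6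
      exact h6
    have hcont : ContinuousOn vk (Icc s t) :=
      hvk_cont.mono (fun x hx => le_trans hs2.1.le hx.1)
    obtain ⟨z, hz, hz0⟩ := intermediate_value_Icc' hs2.2.le hcont ⟨hlt.le, hus.le⟩
    exact hfirst z ⟨lt_of_lt_of_le hs2.1 hz.1, lt_of_le_of_lt hz.2 ht.2⟩ hz0
  -- W is nonnegative on (tk, min ttk tk1)
  have hW0 : ∀ x ∈ Ioo tk (min ttk tk1),
      0 ≤ r x ^ m * u' x * vk x - u x * (D * Real.cos (θ x)) := by
    intro x hx
    have hmono : MonotoneOn (fun s => r s ^ m * u' s * vk s - u s * (D * Real.cos (θ s)))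
        (Icc tk x) := by
      apply monotoneOn_of_deriv_nonneg (convex_Icc tk x)
        (hW_cont.mono (fun y hy => hy.1))
      · intro y hy
        rw [interior_Icc] at hy
        exact ((hWd y (hIoi y hy.1)).differentiableAt).differentiableWithinAt
      · intro y hy
        rw [interior_Icc] at hy
        have hy' : y ∈ Ioo tk (min ttk tk1) := ⟨hy.1, lt_trans hy.2 hx.2⟩
        rw [(hWd y (hIoi y hy.1)).deriv]
        have h1 : 0 < u y := hu_pos y ⟨hy'.1, lt_of_lt_of_le hy'.2 (min_le_right _ _)⟩
        have h2 : 0 < vk y := hvk_pos y ⟨hy'.1, lt_of_lt_of_le hy'.2 (min_le_left _ _)⟩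
        have hy'' : y ∈ Ici t₀ := hIci y hy.1
        have h3 : r y ^ m ≤ R ^ m * R ^ m / r y ^ m := by
          rw [le_div_iff₀ (hrpos y hy'')]
          have h5 : r y ^ m ≤ R ^ m :=
            pow_le_pow_left₀ (hr y hy'').1.le (hr y hy'').2.le m
          exact mul_le_mul h5 h5 (hrpos y hy'').le hRm.le
        have := mul_nonneg (mul_nonneg hlam.le (mul_pos h1 h2).le) (sub_nonneg.mpr h3)
        exact this
    have h0 : (fun s => r s ^ m * u' s * vk s - u s * (D * Real.cos (θ s))) tk = 0 := by
      simp [hvk0, hutk]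
    have := hmono (left_mem_Icc.mpr hx.1.le) (right_mem_Icc.mpr hx.1.le) hx.1.le
    rw [h0] at this
    exact this
  -- the ratio u / vk is monotone on (tk, min ttk tk1)
  have hq_mono : MonotoneOn (fun s => u s / vk s) (Ioo tk (min ttk tk1)) := by
    apply monotoneOn_of_deriv_nonneg (convex_Ioo _ _)
    · intro x hx
      exact (((hu x (hIci x hx.1)).continuousAt).div
        ((hvkd x (hIoi x hx.1)).continuousAt)
        (hvk_pos x ⟨hx.1, lt_of_lt_of_le hx.2 (min_le_left _ _)⟩).ne').continuousWithinAt
    · intro x hx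
      rw [interior_Ioo] at hx
      exact (((hu x (hIci x hx.1)).div (hvkd x (hIoi x hx.1))
        (hvk_pos x ⟨hx.1, lt_of_lt_of_le hx.2 (min_le_left _ _)⟩).ne').differentiableAt).differentiableWithinAt
    · intro x hx
      rw [interior_Ioo] at hx
      have hvx : 0 < vk x := hvk_pos x ⟨hx.1, lt_of_lt_of_le hx.2 (min_le_left _ _)⟩
      have hd := (hu x (hIci x hx.1)).div (hvkd x (hIoi x hx.1)) hvx.ne'
      rw [show (fun s => u s / vk s) = u / vk from rfl, hd.deriv]
      apply div_nonneg _ (sq_nonneg _)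
      have heq : r x ^ m * (u' x * vk x -
          u x * (C * Real.cos (θ x) * (Real.sqrt lam * R ^ m * f x))) =
          r x ^ m * u' x * vk x - u x * (D * Real.cos (θ x)) := by
        rw [← hCD, hfdef]
        field_simp [(hrpos x (hIci x hx.1)).ne']
      have h6 := hW0 x hx
      rw [← heq] at h6
      exact (mul_nonneg_iff_of_pos_left (hrpos x (hIci x hx.1))).mp h6
  -- the ratio tends to 1 at tk from the right
  have hq_lim : Tendsto (fun s => u s / vk s) (𝓝[>] tk) (𝓝 1) := by
    have hA : Tendsto (slope u tk) (𝓝[>] tk) (𝓝 (u' tk)) :=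
      (hasDerivAt_iff_tendsto_slope.mp (hu tk htk')).mono_left
        (nhdsWithin_mono tk (fun x hx => hx.ne'))
    have hB : Tendsto (slope vk tk) (𝓝[>] tk) (𝓝 (u' tk)) := by
      have h := hasDerivWithinAt_iff_tendsto_slope.mp hvkdtk
      rwa [Ici_sdiff_left] at h
    have hAB := hA.div hB hpos.ne'
    rw [div_self hpos.ne'] at hAB
    apply hAB.congr'
    filter_upwards [Ioo_mem_nhdsGT_of_mem
      (⟨le_refl tk, lt_min httk hkk1⟩ : tk ∈ Ico tk (min ttk tk1))] with s hs
    have hc : s - tk ≠ 0 := (sub_pos.mpr hs.1).ne'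
    have hvs : vk s ≠ 0 := (hvk_pos s ⟨hs.1, lt_of_lt_of_le hs.2 (min_le_left _ _)⟩).ne'
    show slope u tk s / slope vk tk s = u s / vk s
    rw [slope_def_field, slope_def_field, hutk, hvk0, sub_zero, sub_zero,
      div_div_div_cancel_right₀ hc]
  -- main inequality on (tk, min ttk tk1)
  have hmain : ∀ t ∈ Ioo tk (min ttk tk1), vk t ≤ u t := by
    intro t ht
    have hvt : 0 < vk t := hvk_pos t ⟨ht.1, lt_of_lt_of_le ht.2 (min_le_left _ _)⟩
    have h1le : 1 ≤ u t / vk t := by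
      apply le_of_tendsto hq_lim
      filter_upwards [Ioo_mem_nhdsGT_of_mem (⟨le_refl tk, ht.1⟩ : tk ∈ Ico tk t)] with s hs
      exact hq_mono ⟨hs.1, lt_trans hs.2 ht.2⟩ ht hs.2.le
    exact (one_le_div hvt).mp h1le
  -- ttk ≤ tk1
  have httk1 : ttk ≤ tk1 := by
    by_contra hgt
    push_neg at hgt
    have hmin : min ttk tk1 = tk1 := min_eq_right hgt.le
    have hvk1 : 0 < vk tk1 := hvk_pos tk1 ⟨hkk1, hgt⟩
    have hle : vk tk1 ≤ u tk1 := by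
      have hcv : Tendsto vk (𝓝[<] tk1) (𝓝 (vk tk1)) :=
        (((hvkd tk1 (hIoi tk1 hkk1)).continuousAt).tendsto).mono_left nhdsWithin_le_nhds
      have hcu : Tendsto u (𝓝[<] tk1) (𝓝 (u tk1)) :=
        (((hu tk1 (hIci tk1 hkk1)).continuousAt).tendsto).mono_left nhdsWithin_le_nhds
      apply le_of_tendsto_of_tendsto hcv hcu
      filter_upwards [Ioo_mem_nhdsLT_of_mem (⟨hkk1, le_refl tk1⟩ : tk1 ∈ Ioc tk tk1)] with s hs
      exact hmain s (by rw [hmin]; exact hs)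
    rw [hutk1] at hle
    linarith
  intro t ht
  have ht' : t ∈ Ioo tk (min ttk tk1) := ⟨ht.1, lt_min ht.2 (lt_of_lt_of_le ht.2 httk1)⟩
  exact ⟨hvk_pos t ht, hmain t ht'⟩

/-- Lower comparison: `|v_k| ≤ |u|` on `(t_k, t̃_k)`, where `t̃_k` is the first zero
of the comparison function `v_k` after `t_k`. -/
theorem stmt5 (t₀ R lam : ℝ) (n : ℕ) (hn : 2 ≤ n) (hR : 0 < R) (hlam : 0 < lam)
    (r u u' : ℝ → ℝ)
    (hr_cont : ContinuousOn r (Ici t₀))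
    (hr_mono : StrictMonoOn r (Ici t₀))
    (hr : ∀ t ∈ Ici t₀, 0 < r t ∧ r t < R)
    (hu : ∀ t ∈ Ici t₀, HasDerivAt u (u' t) t)
    (hode : ∀ t ∈ Ici t₀,
      HasDerivAt (fun s => r s ^ (n - 1) * u' s) (-(lam * r t ^ (n - 1) * u t)) t)
    (tk tk1 : ℝ) (htk : t₀ ≤ tk) (hkk1 : tk < tk1)
    (hutk : u tk = 0) (hutk1 : u tk1 = 0)
    (hconsec : ∀ t ∈ Ioo tk tk1, u t ≠ 0)
    (hu'tk : u' tk ≠ 0)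
    (vk : ℝ → ℝ)
    (hvk : ∀ t, vk t = r tk ^ (n - 1) * u' tk / (R ^ (n - 1) * Real.sqrt lam) *
      Real.sin (Real.sqrt lam * R ^ (n - 1) * ∫ s in tk..t, 1 / r s ^ (n - 1)))
    (ttk : ℝ) (httk : tk < ttk) (hvttk : vk ttk = 0)
    (hfirst : ∀ s ∈ Ioo tk ttk, vk s ≠ 0) :
    ∀ t ∈ Ioo tk ttk, |vk t| ≤ |u t| := by
  rcases hu'tk.lt_or_gt with hneg | hpos
  · have key := stmt5_aux t₀ R lam n hR hlam r (fun t => -u t) (fun t => -u' t) hr_cont hr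
      (fun t ht => (hu t ht).neg)
      (fun t ht => by have h := (hode t ht).neg; simp only [mul_neg, neg_neg] at h ⊢; exact h)
      tk tk1 htk hkk1 (by simp [hutk]) (by simp [hutk1])
      (fun t ht => neg_ne_zero.mpr (hconsec t ht))
      (neg_pos.mpr hneg)
      (fun t => -vk t) (fun t => by show -vk t = _; rw [hvk t]; ring)
      ttk httk (by simp [hvttk]) (fun s hs => neg_ne_zero.mpr (hfirst s hs))
    intro t ht
    obtain ⟨h1, h2⟩ := key t ht
    have h1' : 0 < -vk t := h1
    have h2' : -vk t ≤ -u t := h2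
    rw [abs_of_neg (by linarith : vk t < 0), abs_of_neg (by linarith : u t < 0)]
    linarith
  · have key := stmt5_aux t₀ R lam n hR hlam r u u' hr_cont hr hu hode
      tk tk1 htk hkk1 hutk hutk1 hconsec hpos vk hvk ttk httk hvttk hfirst
    intro t ht
    obtain ⟨h1, h2⟩ := key t ht
    rw [abs_of_pos h1, abs_of_pos (lt_of_lt_of_le h1 h2)]
    exact h2
end

section
/- Let r : [t₀, ∞) → ℝ be continuous, increasing, with 0 < r(t) < R, let n ≥ 2, λ > 0, and let u solve (r^{n-1} u')' + λ r^{n-1} u = 0 with consecutive zeros t_k < t_{k+1} and u'(t_k) ≠ 0. Define w_k(t) = (u'(t_k)/√λ) · sin(√λ · r(t_k)^{n-1} ∫_{t_k}^t ds/r(s)^{n-1}). Then |u(t)| ≤ |w_k(t)| for all t in (t_k, t_{k+1}). -/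
open Set Real intervalIntegral
open Filter Topology MeasureTheory

set_option maxHeartbeats 1000000 in
theorem aux6 (t₀ lam : ℝ) (n : ℕ) (hlam : 0 < lam)
    (r u u' : ℝ → ℝ)
    (hr_cont : ContinuousOn r (Ici t₀))
    (hr_mono : MonotoneOn r (Ici t₀))
    (hr : ∀ t ∈ Ici t₀, 0 < r t)
    (hu : ∀ t ∈ Ici t₀, HasDerivAt u (u' t) t)
    (hode : ∀ t ∈ Ici t₀,
      HasDerivAt (fun s => r s ^ (n - 1) * u' s) (-(lam * r t ^ (n - 1) * u t)) t)
    (tk tk1 : ℝ) (htk : t₀ ≤ tk) (hkk1 : tk < tk1)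
    (hutk : u tk = 0)
    (hconsec : ∀ t ∈ Ioo tk tk1, u t ≠ 0)
    (hu' : 0 < u' tk) :
    ∀ t ∈ Ioo tk tk1, |u t| ≤ |u' tk / Real.sqrt lam *
      Real.sin (Real.sqrt lam * r tk ^ (n - 1) * ∫ s in tk..t, 1 / r s ^ (n - 1))| := by
  set m := n - 1 with hm
  set sl := Real.sqrt lam with hsldef
  set A := u' tk with hA
  set c := r tk ^ m with hcdef
  set q : ℝ → ℝ := fun s => 1 / r s ^ m with hqdef
  set I : ℝ → ℝ := fun t => ∫ s in tk..t, q s with hIdef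
  set W : ℝ → ℝ := fun t => A / sl * Real.sin (sl * c * I t) with hWdef
  set v : ℝ → ℝ := fun t => r t ^ m * u' t with hvdef
  set G : ℝ → ℝ := fun t => W t * v t - A * c * Real.cos (sl * c * I t) * u t with hGdef
  have hsl : 0 < sl := Real.sqrt_pos.2 hlam
  have hsl2 : sl * sl = lam := Real.mul_self_sqrt hlam.le
  have htkmem : tk ∈ Ici t₀ := htk
  have hrpos : ∀ t ∈ Ici t₀, (0:ℝ) < r t ^ m := fun t ht => pow_pos (hr t ht) m
  have hc : 0 < c := hrpos tk htkmem
  have hIci : Ici tk ⊆ Ici t₀ := Ici_subset_Ici.2 htk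
  have hq_cont : ContinuousOn q (Ici t₀) := by
    exact continuousOn_const.div (hr_cont.pow m) (fun t ht => (hrpos t ht).ne')
  have hq_pos : ∀ t ∈ Ici t₀, 0 < q t := fun t ht => by
    have h0 := hr t ht; simp only [hqdef]; positivity
  have huIcc : ∀ a b : ℝ, t₀ ≤ a → t₀ ≤ b → uIcc a b ⊆ Ici t₀ := by
    intro a b ha hb x hx
    exact le_trans (le_min ha hb) hx.1
  have hint : ∀ a b : ℝ, t₀ ≤ a → t₀ ≤ b → IntervalIntegrable q MeasureTheory.volume a b :=
    fun a b ha hb => (hq_cont.mono (huIcc a b ha hb)).intervalIntegrable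
  -- FTC : derivative of I
  have hI_deriv : ∀ x, tk < x → HasDerivAt I (q x) x := by
    intro x hx
    have hx0 : t₀ < x := lt_of_le_of_lt htk hx
    refine intervalIntegral.integral_hasDerivAt_right (hint tk x htk hx0.le) ?_ ?_
    · exact (hq_cont.mono (Ioi_subset_Ici_self.trans (Ici_subset_Ici.2 le_rfl))).stronglyMeasurableAtFilter isOpen_Ioi x hx0
    · exact (hq_cont.continuousAt (Ici_mem_nhds hx0))
  have hI_tk : HasDerivWithinAt I (q tk) (Ici tk) tk := by
    refine intervalIntegral.integral_hasDerivWithinAt_right (hint tk tk htk htk)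
      (t := Ioi tk) ?_ ?_
    · exact (hq_cont.mono (Ioi_subset_Ici_self.trans hIci)).stronglyMeasurableAtFilter_nhdsWithin measurableSet_Ioi tk
    · exact ((hq_cont tk htkmem).mono (Ioi_subset_Ici_self.trans hIci))
  have hI0 : I tk = 0 := intervalIntegral.integral_same
  have hI_mono : ∀ a b : ℝ, tk ≤ a → a < b → I a < I b := by
    intro a b ha hab
    have h1 : I b - I a = ∫ s in a..b, q s := intervalIntegral.integral_interval_sub_left
      (hint tk b htk (le_trans htk (ha.trans hab.le))) (hint tk a htk (htk.trans ha))
    have h2 : 0 < ∫ s in a..b, q s := by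
      refine intervalIntegral.intervalIntegral_pos_of_pos_on
        (hint a b (htk.trans ha) (htk.trans (ha.trans hab.le))) ?_ hab
      intro x hx
      exact hq_pos x (le_trans (htk.trans ha) hx.1.le)
    linarith
  have hIpos : ∀ x, tk < x → 0 < I x := by
    intro x hx; have := hI_mono tk x le_rfl hx; rwa [hI0] at this
  have hI_cont : ContinuousOn I (Ici tk) := by
    intro x hx
    rcases eq_or_lt_of_le (mem_Ici.1 hx) with h | h
    · exact h ▸ hI_tk.continuousWithinAt
    · exact (hI_deriv x h).continuousAt.continuousWithinAt
  -- continuity of u, v, W, cos-term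
  have hu_cont : ContinuousOn u (Ici t₀) := fun t ht => (hu t ht).continuousAt.continuousWithinAt
  have hv_cont : ContinuousOn v (Ici t₀) := fun t ht => (hode t ht).continuousAt.continuousWithinAt
  have hφ_cont : ContinuousOn (fun t => sl * c * I t) (Ici tk) := continuousOn_const.mul hI_cont
  have hW_cont : ContinuousOn W (Ici tk) :=
    continuousOn_const.mul (Real.continuous_sin.comp_continuousOn hφ_cont)
  have hcos_cont : ContinuousOn (fun t => Real.cos (sl * c * I t)) (Ici tk) :=
    Real.continuous_cos.comp_continuousOn hφ_cont
  have hG_cont : ContinuousOn G (Ici tk) :=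
    ((hW_cont.mul (hv_cont.mono hIci)).sub
      (((continuousOn_const.mul hcos_cont)).mul (hu_cont.mono hIci)))
  -- slope of u at tk
  have hslope_u : Tendsto (fun s => u s / (s - tk)) (𝓝[>] tk) (𝓝 A) := by
    have h1 := (hasDerivAt_iff_tendsto_slope.1 (hu tk htkmem))
    have h2 : Tendsto (slope u tk) (𝓝[>] tk) (𝓝 A) :=
      h1.mono_left (nhdsWithin_mono tk (fun x hx => ne_of_gt hx))
    refine h2.congr (fun s => ?_)
    simp [slope_def_field, hutk]
  -- u is positive on the open interval
  have hupos : ∀ t ∈ Ioo tk tk1, 0 < u t := by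
    have h1 : ∀ᶠ s in 𝓝[>] tk, 0 < u s / (s - tk) := hslope_u.eventually (eventually_gt_nhds hu')
    have h2 : Ioo tk tk1 ∈ 𝓝[>] tk := Ioo_mem_nhdsGT_of_mem ⟨le_rfl, hkk1⟩
    obtain ⟨s₀, hs₀pos, hs₀mem⟩ := (h1.and (eventually_of_mem h2 (fun x hx => hx))).exists
    have hd : 0 < s₀ - tk := sub_pos.2 hs₀mem.1
    have hus₀ : 0 < u s₀ := by
      have := mul_pos hs₀pos hd
      rwa [div_mul_cancel₀ _ hd.ne'] at this
    intro t ht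
    rcases lt_trichotomy (u t) 0 with hlt | heq | hgt
    · exfalso
      have hsub : uIcc t s₀ ⊆ Ioo tk tk1 := Set.ordConnected_Ioo.uIcc_subset ht hs₀mem
      have hcont : ContinuousOn u (uIcc t s₀) :=
        hu_cont.mono (hsub.trans (fun x hx => le_trans htk hx.1.le))
      have h0mem : (0:ℝ) ∈ uIcc (u t) (u s₀) := by
        rw [Set.mem_uIcc]; left; exact ⟨hlt.le, hus₀.le⟩
      obtain ⟨z, hz, hz0⟩ := intermediate_value_uIcc hcont h0mem
      exact hconsec z (hsub hz) hz0
    · exact absurd heq (hconsec t ht)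
    · exact hgt
  -- derivative of W
  have hW_deriv : ∀ x, tk < x → HasDerivAt W
      (A / sl * (Real.cos (sl * c * I x) * (sl * c * q x))) x := by
    intro x hx
    have hφ : HasDerivAt (fun t => sl * c * I t) (sl * c * q x) x := (hI_deriv x hx).const_mul _
    exact ((Real.hasDerivAt_sin _).comp x hφ).const_mul _
  -- derivative of G
  have hG_deriv : ∀ x, tk < x → HasDerivAt G
      (lam * u x * W x * (c ^ 2 * q x - r x ^ m)) x := by
    intro x hx
    have hx0 : x ∈ Ici t₀ := le_of_lt (lt_of_le_of_lt htk hx)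
    have hφ : HasDerivAt (fun t => sl * c * I t) (sl * c * q x) x := (hI_deriv x hx).const_mul _
    have hcos : HasDerivAt (fun t => Real.cos (sl * c * I t))
        (-Real.sin (sl * c * I x) * (sl * c * q x)) x := (Real.hasDerivAt_cos _).comp x hφ
    have hW' := hW_deriv x hx
    have hv' := hode x hx0
    have hu'' := hu x hx0
    have hd := (hW'.mul hv').sub (((hcos.const_mul (A * c))).mul hu'')
    convert hd using 1
    · rfl
    · rfl
    · rfl
    have hρ : (0:ℝ) < r x ^ m := hrpos x hx0
    simp only [hWdef, hvdef, hqdef]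
    rw [← hsl2]
    field_simp
    ring
  -- G is antitone on [tk, τ] when W ≥ 0 there
  have hG_anti : ∀ τ, tk < τ → τ < tk1 → (∀ s ∈ Icc tk τ, 0 ≤ W s) →
      AntitoneOn G (Icc tk τ) := by
    intro τ hτ1 hτ2 hWnn
    have hIccsub : Icc tk τ ⊆ Ici tk := fun x hx => hx.1
    refine antitoneOn_of_deriv_nonpos (convex_Icc tk τ) (hG_cont.mono hIccsub) ?_ ?_
    · intro x hx
      rw [interior_Icc] at hx
      exact (hG_deriv x hx.1).differentiableAt.differentiableWithinAt
    · intro x hx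
      rw [interior_Icc] at hx
      rw [(hG_deriv x hx.1).deriv]
      have hx0 : x ∈ Ici t₀ := le_of_lt (lt_of_le_of_lt htk hx.1)
      have hρ : (0:ℝ) < r x ^ m := hrpos x hx0
      have hux : 0 < u x := hupos x ⟨hx.1, lt_trans hx.2 hτ2⟩
      have hWx : 0 ≤ W x := hWnn x ⟨hx.1.le, hx.2.le⟩
      have hcr : c ≤ r x ^ m := pow_le_pow_left₀ (hr tk htkmem).le
        (hr_mono htkmem hx0 (le_of_lt hx.1)) m
      have hfac : c ^ 2 * q x - r x ^ m ≤ 0 := by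
        have hq : q x = 1 / r x ^ m := rfl
        rw [hq, mul_one_div, sub_nonpos, div_le_iff₀ hρ]
        nlinarith
      have h1 : 0 ≤ lam * u x * W x := by positivity
      exact mul_nonpos_of_nonneg_of_nonpos h1 hfac
  have hGtk : G tk = 0 := by
    simp only [hGdef, hWdef, hI0, hutk]
    simp
  -- Step C : the phase stays below π on (tk, tk1)
  have hφ_lt : ∀ t ∈ Ioo tk tk1, sl * c * I t < π := by
    intro t ht
    by_contra hge
    push_neg at hge
    have hφc : ContinuousOn (fun s => sl * c * I s) (Icc tk t) :=
      hφ_cont.mono (fun x hx => hx.1)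
    have hmem : π ∈ Icc ((fun s => sl * c * I s) tk) ((fun s => sl * c * I s) t) := by
      simp only [hI0, mul_zero]
      exact ⟨Real.pi_pos.le, hge⟩
    obtain ⟨τ, hτIcc, hτ⟩ := intermediate_value_Icc ht.1.le hφc hmem
    have hτ1 : tk < τ := by
      rcases eq_or_lt_of_le hτIcc.1 with h | h
      · exfalso
        simp only [← h, hI0, mul_zero] at hτ
        exact Real.pi_ne_zero hτ.symm
      · exact h
    have hτ2 : τ < tk1 := lt_of_le_of_lt hτIcc.2 ht.2
    have hWnn : ∀ s ∈ Icc tk τ, 0 ≤ W s := by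
      intro s hs
      have hInn : 0 ≤ I s := by
        rcases eq_or_lt_of_le hs.1 with h | h
        · rw [← h, hI0]
        · exact (hIpos s h).le
      have h0 : 0 ≤ sl * c * I s := by positivity
      have hπ : sl * c * I s ≤ π := by
        rcases eq_or_lt_of_le hs.2 with h | h
        · rw [h]; exact le_of_eq hτ
        · have h2 := hI_mono s τ hs.1 h
          calc sl * c * I s ≤ sl * c * I τ :=
                mul_le_mul_of_nonneg_left h2.le (by positivity)
          _ = π := hτ
      have : 0 ≤ Real.sin (sl * c * I s) := Real.sin_nonneg_of_nonneg_of_le_pi h0 hπ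
      simp only [hWdef]
      positivity
    have hanti := hG_anti τ hτ1 hτ2 hWnn
    have hle : G τ ≤ G tk :=
      hanti ⟨le_rfl, hτ1.le⟩ ⟨hτ1.le, le_rfl⟩ hτ1.le
    have hGτ : G τ = A * c * u τ := by
      simp only [hGdef, hWdef, hτ, Real.sin_pi, Real.cos_pi]
      ring
    have huτ : 0 < u τ := hupos τ ⟨hτ1, hτ2⟩
    rw [hGtk, hGτ] at hle
    have : 0 < A * c * u τ := by positivity
    linarith
  -- W is positive on (tk, tk1)
  have hWpos : ∀ t ∈ Ioo tk tk1, 0 < W t := by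
    intro t ht
    have h0 : 0 < sl * c * I t := by
      have := hIpos t ht.1
      positivity
    have hsin : 0 < Real.sin (sl * c * I t) :=
      Real.sin_pos_of_pos_of_lt_pi h0 (hφ_lt t ht)
    simp only [hWdef]
    positivity
  -- slope of W at tk
  have hW_tk : HasDerivWithinAt W A (Ioi tk) tk := by
    have hφw : HasDerivWithinAt (fun t => sl * c * I t) (sl * c * q tk) (Ici tk) tk :=
      hI_tk.const_mul _
    have hsin : HasDerivWithinAt (fun t => Real.sin (sl * c * I t))
        (Real.cos (sl * c * I tk) * (sl * c * q tk)) (Ici tk) tk :=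
      (Real.hasDerivAt_sin _).comp_hasDerivWithinAt tk hφw
    have h1 : HasDerivWithinAt W
        (A / sl * (Real.cos (sl * c * I tk) * (sl * c * q tk))) (Ici tk) tk :=
      hsin.const_mul _
    have h2 : A / sl * (Real.cos (sl * c * I tk) * (sl * c * q tk)) = A := by
      rw [hI0, mul_zero, Real.cos_zero]
      have hq : q tk = 1 / c := rfl
      rw [hq]
      field_simp
    rw [h2] at h1
    exact h1.mono Ioi_subset_Ici_self
  have hslope_W : Tendsto (fun s => W s / (s - tk)) (𝓝[>] tk) (𝓝 A) := by
    have h1 := hasDerivWithinAt_iff_tendsto_slope.1 hW_tk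
    have h2 : Ioi tk \ {tk} = Ioi tk := by
      ext x; simp only [Set.mem_diff, Set.mem_Ioi, Set.mem_singleton_iff]
      exact ⟨fun h => h.1, fun h => ⟨h, ne_of_gt h⟩⟩
    rw [h2] at h1
    refine h1.congr (fun s => ?_)
    have hW0 : W tk = 0 := by simp [hWdef, hI0]
    simp [slope_def_field, hW0]
  -- the ratio u / W tends to 1 at tk from the right
  have hratio : Tendsto (fun s => u s / W s) (𝓝[>] tk) (𝓝 1) := by
    have h1 := hslope_u.div hslope_W (ne_of_gt hu')
    rw [div_self (ne_of_gt hu')] at h1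
    have h2 : Ioo tk tk1 ∈ 𝓝[>] tk := Ioo_mem_nhdsGT_of_mem ⟨le_rfl, hkk1⟩
    refine h1.congr' ?_
    filter_upwards [h2] with s hs
    have hd : s - tk ≠ 0 := (sub_pos.2 hs.1).ne'
    have hWs : W s ≠ 0 := (hWpos s hs).ne'
    simp only [Pi.div_apply]
    field_simp
  -- conclusion
  intro t ht
  have hWt : 0 < W t := hWpos t ht
  have hut : 0 < u t := hupos t ht
  -- G ≤ 0 on [tk, t]
  have hWnn : ∀ s ∈ Icc tk t, 0 ≤ W s := by
    intro s hs
    rcases eq_or_lt_of_le hs.1 with h | h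
    · rw [← h]; simp [hWdef, hI0]
    · exact (hWpos s ⟨h, lt_of_le_of_lt hs.2 ht.2⟩).le
  have hanti := hG_anti t ht.1 ht.2 hWnn
  have hG_le : ∀ s ∈ Icc tk t, G s ≤ 0 := by
    intro s hs
    have h := hanti (left_mem_Icc.2 ht.1.le) hs hs.1
    rwa [hGtk] at h
  -- the ratio u / W is antitone on (tk, t]
  have hkey : ∀ s ∈ Ioo tk t, u t / W t ≤ u s / W s := by
    intro s hs
    have hIccsub : Icc s t ⊆ Ioo tk tk1 := fun x hx => ⟨lt_of_lt_of_le hs.1 hx.1,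
      lt_of_le_of_lt hx.2 ht.2⟩
    have hIccIci : Icc s t ⊆ Ici t₀ := fun x hx =>
      le_trans htk (le_of_lt (hIccsub hx).1)
    have hratio_anti : AntitoneOn (fun y => u y / W y) (Icc s t) := by
      refine antitoneOn_of_deriv_nonpos (convex_Icc s t) ?_ ?_ ?_
      · exact (hu_cont.mono hIccIci).div
          (hW_cont.mono (fun x hx => (hIccsub hx).1.le))
          (fun x hx => (hWpos x (hIccsub hx)).ne')
      · intro x hx
        rw [interior_Icc] at hx
        have hxm : x ∈ Ioo tk tk1 := hIccsub ⟨hx.1.le, hx.2.le⟩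
        exact (((hu x (le_trans htk hxm.1.le)).div (hW_deriv x hxm.1)
          (hWpos x hxm).ne')).differentiableAt.differentiableWithinAt
      · intro x hx
        rw [interior_Icc] at hx
        have hxm : x ∈ Ioo tk tk1 := hIccsub ⟨hx.1.le, hx.2.le⟩
        have hx0 : x ∈ Ici t₀ := le_trans htk hxm.1.le
        have hder := (hu x hx0).div (hW_deriv x hxm.1) (hWpos x hxm).ne'
        rw [show deriv (fun y => u y / W y) x = _ from hder.deriv]
        have hρ : (0:ℝ) < r x ^ m := hrpos x hx0
        have hGx : G x ≤ 0 := hG_le x ⟨hxm.1.le, hx.2.le⟩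
        have hnum : u' x * W x - u x * (A / sl * (Real.cos (sl * c * I x) * (sl * c * q x)))
            = q x * G x := by
          simp only [hGdef, hvdef, hqdef, hWdef]
          field_simp
        rw [hnum]
        apply div_nonpos_of_nonpos_of_nonneg
        · exact mul_nonpos_of_nonneg_of_nonpos (hq_pos x hx0).le hGx
        · positivity
    exact hratio_anti (left_mem_Icc.2 hs.2.le) (right_mem_Icc.2 hs.2.le) hs.2.le
  have hle1 : u t / W t ≤ 1 := by
    refine ge_of_tendsto hratio ?_
    filter_upwards [Ioo_mem_nhdsGT_of_mem (⟨le_rfl, ht.1⟩ : tk ∈ Ico tk t)] with s hs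
    exact hkey s hs
  have hfin : u t ≤ u' tk / Real.sqrt lam *
      Real.sin (Real.sqrt lam * r tk ^ (n - 1) * ∫ s in tk..t, 1 / r s ^ (n - 1)) := by
    have : u t ≤ W t := (div_le_one hWt).1 hle1
    exact this
  rw [abs_of_pos hut, abs_of_pos hWt]
  exact hfin

/-- Upper comparison: `|u| ≤ |w_k|` on `(t_k, t_{k+1})`. -/
theorem stmt6 (t₀ R lam : ℝ) (n : ℕ) (hn : 2 ≤ n) (hR : 0 < R) (hlam : 0 < lam)
    (r u u' : ℝ → ℝ)
    (hr_cont : ContinuousOn r (Ici t₀))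
    (hr_mono : StrictMonoOn r (Ici t₀))
    (hr : ∀ t ∈ Ici t₀, 0 < r t ∧ r t < R)
    (hu : ∀ t ∈ Ici t₀, HasDerivAt u (u' t) t)
    (hode : ∀ t ∈ Ici t₀,
      HasDerivAt (fun s => r s ^ (n - 1) * u' s) (-(lam * r t ^ (n - 1) * u t)) t)
    (tk tk1 : ℝ) (htk : t₀ ≤ tk) (hkk1 : tk < tk1)
    (hutk : u tk = 0) (hutk1 : u tk1 = 0)
    (hconsec : ∀ t ∈ Ioo tk tk1, u t ≠ 0)
    (hu'tk : u' tk ≠ 0)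
    (wk : ℝ → ℝ)
    (hwk : ∀ t, wk t = u' tk / Real.sqrt lam *
      Real.sin (Real.sqrt lam * r tk ^ (n - 1) * ∫ s in tk..t, 1 / r s ^ (n - 1))) :
    ∀ t ∈ Ioo tk tk1, |u t| ≤ |wk t| := by
  rcases hu'tk.lt_or_gt with hneg | hpos
  · have haux := aux6 t₀ lam n hlam r (fun s => -u s) (fun s => -u' s) hr_cont
      hr_mono.monotoneOn (fun t ht => (hr t ht).1)
      (fun t ht => (hu t ht).neg)
      (fun t ht => by simpa [mul_neg, neg_neg, Pi.neg_def] using (hode t ht).neg)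
      tk tk1 htk hkk1 (by simp [hutk])
      (fun t ht => by simpa using hconsec t ht)
      (by simpa using hneg)
    intro t ht
    have h := haux t ht
    simp only [abs_neg] at h
    rw [hwk t]
    have heq : -u' tk / Real.sqrt lam *
        Real.sin (Real.sqrt lam * r tk ^ (n - 1) * ∫ s in tk..t, 1 / r s ^ (n - 1))
        = -(u' tk / Real.sqrt lam *
        Real.sin (Real.sqrt lam * r tk ^ (n - 1) * ∫ s in tk..t, 1 / r s ^ (n - 1))) := by
      ring
    rwa [heq, abs_neg] at h
  · have haux := aux6 t₀ lam n hlam r u u' hr_cont hr_mono.monotoneOn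
      (fun t ht => (hr t ht).1) hu hode tk tk1 htk hkk1 hutk hconsec hpos
    intro t ht
    rw [hwk t]
    exact haux t ht
end

section
/- Let r be continuous, increasing, positive on [t₀, ∞), n ≥ 2, λ > 0, and let u solve (r^{n-1} u')' + λ r^{n-1} u = 0 with u(t₀) = 0 and zeros t₀ < t₁ < ⋯ < t_k. Then r(t_k)^{2(n-1)} u'(t_k)² − r(t₀)^{2(n-1)} u'(t₀)² = 2λ(n−1) ∫_{t₀}^{t_k} r(s)^{2(n-1)-1} r'(s) u(s)² ds. -/
open Set Real intervalIntegral

/-- Energy identity: `r(t_k)^{2(n-1)} u'(t_k)² − r(t₀)^{2(n-1)} u'(t₀)²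
  = 2λ(n−1) ∫_{t₀}^{t_k} r^{2(n-1)-1} r' u² ds`. -/
theorem stmt7 (t₀ lam : ℝ) (n : ℕ) (hn : 2 ≤ n) (hlam : 0 < lam)
    (r r' u u' : ℝ → ℝ)
    (hr : ∀ t ∈ Ici t₀, HasDerivAt r (r' t) t)
    (hr'_cont : ContinuousOn r' (Ici t₀))
    (hr_mono : StrictMonoOn r (Ici t₀))
    (hr_pos : ∀ t ∈ Ici t₀, 0 < r t)
    (hu : ∀ t ∈ Ici t₀, HasDerivAt u (u' t) t)
    (hode : ∀ t ∈ Ici t₀,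
      HasDerivAt (fun s => r s ^ (n - 1) * u' s) (-(lam * r t ^ (n - 1) * u t)) t)
    (tseq : ℕ → ℝ) (htseq0 : tseq 0 = t₀) (htseq_mono : StrictMono tseq)
    (htseq_mem : ∀ k, tseq k ∈ Ici t₀)
    (htseq_zero : ∀ k, u (tseq k) = 0)
    (k : ℕ) :
    r (tseq k) ^ (2 * (n - 1)) * u' (tseq k) ^ 2 - r t₀ ^ (2 * (n - 1)) * u' t₀ ^ 2 =
      2 * lam * ((n : ℝ) - 1) *
        ∫ s in t₀..tseq k, r s ^ (2 * (n - 1) - 1) * r' s * u s ^ 2 := by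
  set m := n - 1 with hm
  have hm1 : 1 ≤ m := by omega
  set F : ℝ → ℝ := fun s => (r s ^ m * u' s) ^ 2 + lam * (r s ^ m * u s) ^ 2 with hF
  have key : ∀ t : ℝ, r t ^ (2 * m - 1) = r t ^ (m - 1) * r t ^ m := by
    intro t; rw [← pow_add]; congr 1; omega
  have hFderiv : ∀ t ∈ Ici t₀,
      HasDerivAt F (2 * lam * (m : ℝ) * (r t ^ (2 * m - 1) * r' t * u t ^ 2)) t := by
    intro t ht
    have h1 : HasDerivAt (fun s => r s ^ m) ((m : ℝ) * r t ^ (m - 1) * r' t) t :=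
      (hr t ht).pow m
    have h2 : HasDerivAt (fun s => r s ^ m * u s)
        ((m : ℝ) * r t ^ (m - 1) * r' t * u t + r t ^ m * u' t) t := h1.mul (hu t ht)
    have h3 := hode t ht
    have h4 := (h3.pow 2).add ((h2.pow 2).const_mul lam)
    refine h4.congr_deriv ?_
    rw [key]
    ring
  have ht0k : t₀ ≤ tseq k := by
    rw [← htseq0]; exact htseq_mono.monotone (Nat.zero_le k)
  have hrc : ContinuousOn r (Ici t₀) := fun t ht =>
    (hr t ht).continuousAt.continuousWithinAt
  have huc : ContinuousOn u (Ici t₀) := fun t ht =>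
    (hu t ht).continuousAt.continuousWithinAt
  have hIcc : Icc t₀ (tseq k) ⊆ Ici t₀ := Icc_subset_Ici_self
  have hcont : ContinuousOn (fun s => r s ^ (2 * m - 1) * r' s * u s ^ 2)
      (Icc t₀ (tseq k)) :=
    (((hrc.mono hIcc).pow _).mul (hr'_cont.mono hIcc)).mul ((huc.mono hIcc).pow 2)
  have hint : IntervalIntegrable (fun s => r s ^ (2 * m - 1) * r' s * u s ^ 2)
      MeasureTheory.volume t₀ (tseq k) :=
    (hcont.mono (by rw [uIcc_of_le ht0k])).intervalIntegrable
  have hftc := intervalIntegral.integral_eq_sub_of_hasDerivAt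
    (f := F) (f' := fun t => 2 * lam * (m : ℝ) * (r t ^ (2 * m - 1) * r' t * u t ^ 2))
    (fun t ht => hFderiv t (hIcc (by rwa [uIcc_of_le ht0k] at ht)))
    (((hint.const_mul (2 * lam * (m : ℝ)))))
  rw [intervalIntegral.integral_const_mul] at hftc
  have hu0 : u t₀ = 0 := by rw [← htseq0]; exact htseq_zero 0
  have hmcast : ((m : ℝ)) = (n : ℝ) - 1 := by
    rw [hm, Nat.cast_sub (by omega)]; simp
  have hsq : ∀ x, (r x ^ m * u' x) ^ 2 = r x ^ (2 * m) * u' x ^ 2 := by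
    intro x; rw [mul_pow, ← pow_mul, mul_comm m 2]
  have hFk : F (tseq k) = r (tseq k) ^ (2 * m) * u' (tseq k) ^ 2 := by
    simp [hF, htseq_zero k, hsq]
  have hF0 : F t₀ = r t₀ ^ (2 * m) * u' t₀ ^ 2 := by
    simp [hF, hu0, hsq]
  rw [← hmcast]
  rw [← hFk, ← hF0]; exact hftc.symm
end

section
/- Let r be continuous, increasing, with 0 < r(t) < R on [t₀, ∞), n ≥ 2, λ > 0, and let u solve (r^{n-1} u')' + λ r^{n-1} u = 0 with u(t₀) = 0, u'(t₀) > 0, and zeros t₀ < t₁ < ⋯. Then for every k ≥ 1, u'(t_k)² > (r(t₀)/R)^{2(n-1)} · u'(t₀)². -/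
open Set Real
open Filter Topology

/-- Lower bound on derivatives at zeros: `u'(t_k)² > (r(t₀)/R)^{2(n-1)} u'(t₀)²` for `k ≥ 1`. -/
theorem stmt8 (t₀ R lam : ℝ) (n : ℕ) (hn : 2 ≤ n) (hR : 0 < R) (hlam : 0 < lam)
    (r r' u u' : ℝ → ℝ)
    (hr : ∀ t ∈ Ici t₀, HasDerivAt r (r' t) t)
    (hr'_pos : ∀ t ∈ Ici t₀, 0 < r' t)
    (hr_bd : ∀ t ∈ Ici t₀, 0 < r t ∧ r t < R)
    (hu : ∀ t ∈ Ici t₀, HasDerivAt u (u' t) t)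
    (hode : ∀ t ∈ Ici t₀,
      HasDerivAt (fun s => r s ^ (n - 1) * u' s) (-(lam * r t ^ (n - 1) * u t)) t)
    (hu0 : u t₀ = 0) (hu'0 : 0 < u' t₀)
    (tseq : ℕ → ℝ) (htseq0 : tseq 0 = t₀) (htseq_mono : StrictMono tseq)
    (htseq_mem : ∀ k, tseq k ∈ Ici t₀)
    (htseq_zero : ∀ k, u (tseq k) = 0)
    (k : ℕ) (hk : 1 ≤ k) :
    (r t₀ / R) ^ (2 * (n - 1)) * u' t₀ ^ 2 < u' (tseq k) ^ 2 := by
  obtain ⟨p, hn2⟩ : ∃ p, n = p + 2 := ⟨n - 2, by omega⟩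
  have he : n - 1 = p + 1 := by omega
  set E : ℝ → ℝ := fun t => (r t ^ (p + 1) * u' t) ^ 2 + lam * r t ^ (2 * p + 2) * u t ^ 2
    with hEdef
  set E' : ℝ → ℝ := fun t => lam * (2 * (p : ℝ) + 2) * r t ^ (2 * p + 1) * r' t * u t ^ 2
    with hE'def
  have hE : ∀ t ∈ Ici t₀, HasDerivAt E (E' t) t := by
    intro t ht
    have hv := hode t ht
    rw [he] at hv
    have h1 := hv.pow 2
    have h2 := (hr t ht).pow (2 * p + 2)
    have h3 := (hu t ht).pow 2
    have h5 := h1.add ((h2.mul h3).const_mul lam)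
    refine (h5.congr_of_eventuallyEq (Filter.Eventually.of_forall fun y => ?_)).congr_deriv ?_
    · simp only [hEdef, Pi.add_apply, Pi.pow_apply, Pi.mul_apply]; ring
    · have e1 : 2 * p + 2 - 1 = 2 * p + 1 := by omega
      rw [e1]
      simp only [hE'def, Pi.pow_apply]
      push_cast
      ring
  have hEmono : MonotoneOn E (Ici t₀) := by
    apply monotoneOn_of_deriv_nonneg (convex_Ici t₀)
    · exact fun t ht => (hE t ht).continuousAt.continuousWithinAt
    · intro t ht
      rw [interior_Ici, mem_Ioi] at ht
      exact (hE t ht.le).differentiableAt.differentiableWithinAt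
    · intro t ht
      rw [interior_Ici, mem_Ioi] at ht
      rw [(hE t ht.le).deriv]
      have := (hr_bd t ht.le).1
      have := hr'_pos t ht.le
      positivity
  have htk : t₀ < tseq k := by
    rw [← htseq0]; exact htseq_mono (by omega : 0 < k)
  -- find s ∈ Ioo t₀ (tseq k) with 0 < u s
  have hslope := hasDerivAt_iff_tendsto_slope.1 (hu t₀ self_mem_Ici)
  have h1 : ∀ᶠ x in 𝓝[>] t₀, 0 < slope u t₀ x :=
    (hslope.mono_left (nhdsWithin_mono _ fun x hx => ne_of_gt hx)).eventually
      (eventually_gt_nhds hu'0)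
  have h2 : Ioo t₀ (tseq k) ∈ 𝓝[>] t₀ := Ioo_mem_nhdsGT_of_mem ⟨le_refl t₀, htk⟩
  obtain ⟨s, hs1, hs2⟩ := (h1.and (eventually_of_mem h2 fun x hx => hx)).exists
  have hus : 0 < u s := by
    rw [slope_def_field, hu0, sub_zero] at hs1
    have h4 : (0:ℝ) < s - t₀ := sub_pos.mpr hs2.1
    have := mul_pos hs1 h4
    rwa [div_mul_cancel₀ _ (ne_of_gt h4)] at this
  have hsmem : s ∈ Ici t₀ := le_of_lt hs2.1
  -- find x ∈ Ioo s (tseq k) with E s < E x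
  have hE's : 0 < E' s := by
    have := (hr_bd s hsmem).1
    have := hr'_pos s hsmem
    simp only [hE'def]
    positivity
  have hslopeE := hasDerivAt_iff_tendsto_slope.1 (hE s hsmem)
  have h1' : ∀ᶠ x in 𝓝[>] s, 0 < slope E s x :=
    (hslopeE.mono_left (nhdsWithin_mono _ fun x hx => ne_of_gt hx)).eventually
      (eventually_gt_nhds hE's)
  have h2' : Ioo s (tseq k) ∈ 𝓝[>] s := Ioo_mem_nhdsGT_of_mem ⟨le_refl s, hs2.2⟩
  obtain ⟨x, hx1, hx2⟩ := (h1'.and (eventually_of_mem h2' fun y hy => hy)).exists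
  have hEsx : E s < E x := by
    rw [slope_def_field] at hx1
    have h4 : (0:ℝ) < x - s := sub_pos.mpr hx2.1
    have := mul_pos hx1 h4
    rw [div_mul_cancel₀ _ (ne_of_gt h4)] at this
    linarith
  have hxmem : x ∈ Ici t₀ := le_trans hsmem hx2.1.le
  have hchain : E t₀ < E (tseq k) :=
    lt_of_le_of_lt (hEmono self_mem_Ici hsmem hsmem)
      (lt_of_lt_of_le hEsx (hEmono hxmem (htseq_mem k) hx2.2.le))
  -- unfold E at the endpoints
  have hA := hr_bd t₀ self_mem_Ici
  have hB := hr_bd (tseq k) (htseq_mem k)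
  have hkey : r t₀ ^ (2 * p + 2) * u' t₀ ^ 2 < r (tseq k) ^ (2 * p + 2) * u' (tseq k) ^ 2 := by
    have h := hchain
    simp only [hEdef, hu0, htseq_zero k] at h
    ring_nf at h ⊢
    nlinarith [h]
  have hBR : r (tseq k) ^ (2 * p + 2) ≤ R ^ (2 * p + 2) :=
    pow_le_pow_left₀ hB.1.le hB.2.le _
  rw [show 2 * (n - 1) = 2 * p + 2 by omega, div_pow, div_mul_eq_mul_div,
    div_lt_iff₀ (by positivity)]
  nlinarith [hkey, hBR, sq_nonneg (u' (tseq k))]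
end

section
/- Let r be C¹, increasing, with 0 < r(t) < R on [t₀, ∞), n ≥ 2, λ > 0, and let u solve (r^{n-1} u')' + λ r^{n-1} u = 0 with u(t₀) = 0, u'(t₀) > 0, and zeros t₀ < t₁ < t₂ < ⋯. Then for every k ≥ 1, u'(t_k)² ≤ R^{4(n-1)} / (r(t₀)^{2(n-1)} r(t₁)^{2(n-1)}) · u'(t₀)². -/
open Set Real Topology Filter

/-- Upper bound on derivatives at zeros:
`u'(t_k)² ≤ R^{4(n-1)} / (r(t₀)^{2(n-1)} r(t₁)^{2(n-1)}) · u'(t₀)²` for `k ≥ 1`. -/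
theorem stmt9 (t₀ R lam : ℝ) (n : ℕ) (hn : 2 ≤ n) (hR : 0 < R) (hlam : 0 < lam)
    (r r' u u' : ℝ → ℝ)
    (hr : ∀ t ∈ Ici t₀, HasDerivAt r (r' t) t)
    (hr'_cont : ContinuousOn r' (Ici t₀))
    (hr_mono : StrictMonoOn r (Ici t₀))
    (hr_bd : ∀ t ∈ Ici t₀, 0 < r t ∧ r t < R)
    (hu : ∀ t ∈ Ici t₀, HasDerivAt u (u' t) t)
    (hode : ∀ t ∈ Ici t₀,
      HasDerivAt (fun s => r s ^ (n - 1) * u' s) (-(lam * r t ^ (n - 1) * u t)) t)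
    (hu0 : u t₀ = 0) (hu'0 : 0 < u' t₀)
    (tseq : ℕ → ℝ) (htseq0 : tseq 0 = t₀) (htseq_mono : StrictMono tseq)
    (htseq_mem : ∀ k, tseq k ∈ Ici t₀)
    (htseq_zero : ∀ k, u (tseq k) = 0)
    (htseq_all : ∀ s ∈ Ici t₀, u s = 0 → ∃ k, s = tseq k)
    (k : ℕ) (hk : 1 ≤ k) :
    u' (tseq k) ^ 2 ≤
      R ^ (4 * (n - 1)) / (r t₀ ^ (2 * (n - 1)) * r (tseq 1) ^ (2 * (n - 1))) * u' t₀ ^ 2 := by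
  obtain ⟨m, rfl⟩ : ∃ m, n = m + 2 := ⟨n - 2, by omega⟩
  have hsub : m + 2 - 1 = m + 1 := rfl
  -- r' is nonneg on Ioi t₀
  have hr'_nonneg : ∀ t ∈ Ioi t₀, 0 ≤ r' t := by
    intro t ht
    have htI : t ∈ Ici t₀ := Set.mem_Ici.mpr (le_of_lt (Set.mem_Ioi.mp ht))
    have hd : HasDerivWithinAt r (r' t) (Ioi t) t := (hr t htI).hasDerivWithinAt
    have hslope : Filter.Tendsto (slope r t) (𝓝[Ioi t \ {t}] t) (𝓝 (r' t)) :=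
      (hasDerivWithinAt_iff_tendsto_slope).1 hd
    rw [Set.diff_singleton_eq_self (by simp)] at hslope
    refine ge_of_tendsto hslope ?_
    filter_upwards [self_mem_nhdsWithin] with s hs
    have hst : t < s := hs
    have hsI : s ∈ Ici t₀ := Set.mem_Ici.mpr (le_trans (Set.mem_Ici.mp htI) hst.le)
    have : r t ≤ r s := (hr_mono htI hsI hst).le
    rw [slope_def_field]
    have : 0 ≤ r s - r t := by linarith
    exact div_nonneg this (by linarith)
  -- energy function
  set g : ℝ → ℝ := fun s => u' s ^ 2 + lam * u s ^ 2 with hg_def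
  -- derivative of g on Ioi t₀
  have hg' : ∀ t ∈ Ioi t₀, HasDerivAt g (-(2 * (m + 1) * (r' t / r t) * u' t ^ 2)) t := by
    intro t ht
    have htI : t ∈ Ici t₀ := Set.mem_Ici.mpr (le_of_lt (Set.mem_Ioi.mp ht))
    have hrt : 0 < r t := (hr_bd t htI).1
    have hpne : r t ^ (m + 1) ≠ 0 := pow_ne_zero _ (ne_of_gt hrt)
    have hp : HasDerivAt (fun s => r s ^ (m + 1)) (((m + 1 : ℕ) : ℝ) * r t ^ m * r' t) t :=
      (hr t htI).pow (m + 1)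
    have hw : HasDerivAt (fun s => r s ^ (m + 1) * u' s) (-(lam * r t ^ (m + 1) * u t)) t :=
      hode t htI
    have hdiv : HasDerivAt (fun s => (r s ^ (m + 1) * u' s) / r s ^ (m + 1))
        (((-(lam * r t ^ (m + 1) * u t)) * r t ^ (m + 1)
          - (r t ^ (m + 1) * u' t) * (((m + 1 : ℕ) : ℝ) * r t ^ m * r' t))
          / (r t ^ (m + 1)) ^ 2) t := hw.div hp hpne
    have hmemI : Ici t₀ ∈ 𝓝 t := Ici_mem_nhds ht
    have hevq : u' =ᶠ[𝓝 t] fun s => (r s ^ (m + 1) * u' s) / r s ^ (m + 1) := by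
      filter_upwards [hmemI] with s hs
      have : r s ≠ 0 := ne_of_gt (hr_bd s hs).1
      field_simp
    have hu'' : HasDerivAt u'
        (((-(lam * r t ^ (m + 1) * u t)) * r t ^ (m + 1)
          - (r t ^ (m + 1) * u' t) * (((m + 1 : ℕ) : ℝ) * r t ^ m * r' t))
          / (r t ^ (m + 1)) ^ 2) t := hdiv.congr_of_eventuallyEq hevq
    have hD : ((-(lam * r t ^ (m + 1) * u t)) * r t ^ (m + 1)
          - (r t ^ (m + 1) * u' t) * (((m + 1 : ℕ) : ℝ) * r t ^ m * r' t))
          / (r t ^ (m + 1)) ^ 2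
        = -(lam * u t) - ((m + 1 : ℕ) : ℝ) * (r' t / r t) * u' t := by
      have h0 : r t ≠ 0 := ne_of_gt hrt
      field_simp
      ring
    rw [hD] at hu''
    have hgd : HasDerivAt g
        (2 * u' t ^ 1 * (-(lam * u t) - ((m + 1 : ℕ) : ℝ) * (r' t / r t) * u' t)
          + lam * (2 * u t ^ 1 * u' t)) t := by
      exact ((hu''.pow 2).add (((hu t htI).pow 2).const_mul lam))
    convert hgd using 1
    push_cast
    ring
  -- continuity of g on Ici t₀
  have hu_cont : ContinuousOn u (Ici t₀) := fun t ht => (hu t ht).continuousAt.continuousWithinAt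
  have hu'_cont : ContinuousOn u' (Ici t₀) := by
    have hw_cont : ContinuousOn (fun s => r s ^ (m + 1) * u' s) (Ici t₀) :=
      fun t ht => (hode t ht).continuousAt.continuousWithinAt
    have hr_cont : ContinuousOn r (Ici t₀) := fun t ht => (hr t ht).continuousAt.continuousWithinAt
    have : ContinuousOn (fun s => (r s ^ (m + 1) * u' s) / r s ^ (m + 1)) (Ici t₀) :=
      hw_cont.div (hr_cont.pow _) (fun t ht => pow_ne_zero _ (ne_of_gt (hr_bd t ht).1))
    refine this.congr fun s hs => ?_
    have : r s ≠ 0 := ne_of_gt (hr_bd s hs).1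
    field_simp
  have hg_cont : ContinuousOn g (Ici t₀) :=
    (hu'_cont.pow 2).add (continuousOn_const.mul (hu_cont.pow 2))
  -- g is antitone on Ici t₀
  have hanti : AntitoneOn g (Ici t₀) := by
    refine antitoneOn_of_hasDerivWithinAt_nonpos (convex_Ici t₀) hg_cont
      (f' := fun t => -(2 * (m + 1) * (r' t / r t) * u' t ^ 2)) ?_ ?_
    · intro x hx
      rw [interior_Ici] at hx
      exact (hg' x hx).hasDerivWithinAt
    · intro x hx
      rw [interior_Ici] at hx
      have h1 : 0 ≤ r' x := hr'_nonneg x hx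
      have h2 : 0 < r x := (hr_bd x (Set.mem_Ici.mpr (le_of_lt (Set.mem_Ioi.mp hx)))).1
      have : 0 ≤ 2 * ((m : ℝ) + 1) * (r' x / r x) * u' x ^ 2 := by positivity
      linarith
  -- apply antitonicity
  have h0k : t₀ ≤ tseq k := by
    rw [← htseq0]; exact htseq_mono.monotone (Nat.zero_le k)
  have hkey : g (tseq k) ≤ g t₀ := hanti self_mem_Ici (htseq_mem k) h0k
  have hgk : g (tseq k) = u' (tseq k) ^ 2 := by simp [hg_def, htseq_zero k]
  have hg0 : g t₀ = u' t₀ ^ 2 := by simp [hg_def, hu0]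
  have hmain : u' (tseq k) ^ 2 ≤ u' t₀ ^ 2 := by rw [← hgk, ← hg0]; exact hkey
  -- the constant is ≥ 1
  have ha := hr_bd t₀ self_mem_Ici
  have hb := hr_bd (tseq 1) (htseq_mem 1)
  have hC : 1 ≤ R ^ (4 * (m + 2 - 1)) / (r t₀ ^ (2 * (m + 2 - 1)) * r (tseq 1) ^ (2 * (m + 2 - 1))) := by
    rw [hsub]
    have hden : 0 < r t₀ ^ (2 * (m + 1)) * r (tseq 1) ^ (2 * (m + 1)) :=
      mul_pos (pow_pos ha.1 _) (pow_pos hb.1 _)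
    rw [le_div_iff₀ hden, one_mul]
    have h1 : r t₀ ^ (2 * (m + 1)) ≤ R ^ (2 * (m + 1)) :=
      pow_le_pow_left₀ ha.1.le ha.2.le _
    have h2 : r (tseq 1) ^ (2 * (m + 1)) ≤ R ^ (2 * (m + 1)) :=
      pow_le_pow_left₀ hb.1.le hb.2.le _
    calc r t₀ ^ (2 * (m + 1)) * r (tseq 1) ^ (2 * (m + 1))
        ≤ R ^ (2 * (m + 1)) * R ^ (2 * (m + 1)) := by
          exact mul_le_mul h1 h2 (pow_nonneg hb.1.le _) (pow_nonneg hR.le _)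
      _ = R ^ (4 * (m + 1)) := by rw [← pow_add]; ring_nf
  calc u' (tseq k) ^ 2 ≤ u' t₀ ^ 2 := hmain
    _ ≤ R ^ (4 * (m + 2 - 1)) / (r t₀ ^ (2 * (m + 2 - 1)) * r (tseq 1) ^ (2 * (m + 2 - 1)))
          * u' t₀ ^ 2 := le_mul_of_one_le_left (sq_nonneg _) hC
end

section
/- Let r be C¹, increasing, with 0 < r(t) < R on [t₀, ∞), n ≥ 2, λ > 0, and let u solve (r^{n-1} u')' + λ r^{n-1} u = 0 with u(t₀) = 0 and zeros t₀ < t₁ < ⋯. Then there is a constant c > 0 (depending only on λ, R, n, r(t₀), r(t₁)) such that for all p ∈ ℕ: ∫_{t₀}^{t_{3p}} u² r^{n-1} dt ≤ c · ∫_{t_p}^{t_{2p}} u² r^{n-1} dt. -/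
set_option maxHeartbeats 1000000

open Set Real intervalIntegral

/-- Lemma: `∫_{t₀}^{t_{3p}} u² r^{n-1} ≤ c ∫_{t_p}^{t_{2p}} u² r^{n-1}` with `c` independent
of `p`. -/
theorem stmt10 (t₀ R lam : ℝ) (n : ℕ) (hn : 2 ≤ n) (hR : 0 < R) (hlam : 0 < lam)
    (r r' u u' : ℝ → ℝ)
    (hr : ∀ t ∈ Ici t₀, HasDerivAt r (r' t) t)
    (hr'_cont : ContinuousOn r' (Ici t₀))
    (hr_mono : StrictMonoOn r (Ici t₀))
    (hr_bd : ∀ t ∈ Ici t₀, 0 < r t ∧ r t < R)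
    (hu : ∀ t ∈ Ici t₀, HasDerivAt u (u' t) t)
    (hode : ∀ t ∈ Ici t₀,
      HasDerivAt (fun s => r s ^ (n - 1) * u' s) (-(lam * r t ^ (n - 1) * u t)) t)
    (hu0 : u t₀ = 0)
    (hnontriv : ∃ t ∈ Ici t₀, u t ≠ 0)
    (tseq : ℕ → ℝ) (htseq0 : tseq 0 = t₀) (htseq_mono : StrictMono tseq)
    (htseq_mem : ∀ k, tseq k ∈ Ici t₀)
    (htseq_zero : ∀ k, u (tseq k) = 0)
    (htseq_all : ∀ s ∈ Ici t₀, u s = 0 → ∃ k, s = tseq k) :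
    ∃ c : ℝ, 0 < c ∧ ∀ p : ℕ,
      (∫ t in t₀..tseq (3 * p), u t ^ 2 * r t ^ (n - 1)) ≤
        c * ∫ t in tseq p..tseq (2 * p), u t ^ 2 * r t ^ (n - 1) := by
  obtain ⟨m, rfl⟩ : ∃ m, n = m + 2 := ⟨n - 2, by omega⟩
  set K : ℕ := m + 1 with hKdef
  have hK1 : m + 2 - 1 = K := rfl
  simp only [hK1] at hode ⊢
  -- basic facts
  have ht0 : t₀ ∈ Ici t₀ := self_mem_Ici
  have hrpos : ∀ t ∈ Ici t₀, 0 < r t := fun t ht => (hr_bd t ht).1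
  have hrK_pos : ∀ t ∈ Ici t₀, 0 < r t ^ K := fun t ht => pow_pos (hrpos t ht) K
  have hrlow : ∀ t ∈ Ici t₀, r t₀ ≤ r t := fun t ht => hr_mono.monotoneOn ht0 ht ht
  have hrKbd : ∀ t ∈ Ici t₀, r t ^ K ≤ R ^ K := fun t ht =>
    pow_le_pow_left₀ (hrpos t ht).le (hr_bd t ht).2.le K
  have hu_cont : ContinuousOn u (Ici t₀) := fun t ht => (hu t ht).continuousAt.continuousWithinAt
  have hr_cont : ContinuousOn r (Ici t₀) := fun t ht => (hr t ht).continuousAt.continuousWithinAt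
  have hphi_cont : ContinuousOn (fun s => r s ^ K * u' s) (Ici t₀) :=
    fun t ht => (hode t ht).continuousAt.continuousWithinAt
  have hu'_cont : ContinuousOn u' (Ici t₀) := by
    have h1 : ContinuousOn (fun s => (r s ^ K * u' s) / r s ^ K) (Ici t₀) :=
      hphi_cont.div (hr_cont.pow K) (fun t ht => (hrK_pos t ht).ne')
    exact h1.congr fun t ht => (mul_div_cancel_left₀ (u' t) (hrK_pos t ht).ne').symm
  -- r' nonneg
  have hr'_nonneg : ∀ t ∈ Ici t₀, 0 ≤ r' t := by
    intro t ht
    have h1 : Filter.Tendsto (slope r t) (nhdsWithin t (Ioi t)) (nhds (r' t)) :=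
      (hasDerivAt_iff_tendsto_slope.1 (hr t ht)).mono_left
        (nhdsWithin_mono t (fun s (hs : t < s) => Set.mem_compl_singleton_iff.mpr hs.ne'))
    refine ge_of_tendsto h1 ?_
    filter_upwards [self_mem_nhdsWithin] with s hs
    rw [slope_def_field]
    have hsI : s ∈ Ici t₀ := (le_trans ht (le_of_lt hs) : t₀ ≤ s)
    exact div_nonneg (sub_nonneg.2 (hr_mono.monotoneOn ht hsI (le_of_lt hs)))
      (sub_nonneg.2 (le_of_lt hs))
  -- energies
  set F : ℝ → ℝ := fun s => u' s ^ 2 + lam * u s ^ 2 with hFdef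
  set E : ℝ → ℝ := fun s => (r s ^ K * u' s) ^ 2 + lam * (r s ^ K * u s) ^ 2 with hEdef
  -- second derivative of u on the interior
  have hu'' : ∀ t ∈ Ioi t₀, HasDerivAt u' (-(lam * u t) - K * (r' t / r t) * u' t) t := by
    intro t ht
    have htI : t ∈ Ici t₀ := (le_of_lt ht : t₀ ≤ t)
    have hne : r t ^ K ≠ 0 := (hrK_pos t htI).ne'
    have hd : HasDerivAt (fun s => (r s ^ K * u' s) / r s ^ K)
        ((-(lam * r t ^ K * u t) * r t ^ K -
          (r t ^ K * u' t) * ((K : ℝ) * r t ^ m * r' t)) / (r t ^ K) ^ 2) t := by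
      have hpow : HasDerivAt (fun s => r s ^ K) ((K : ℝ) * r t ^ m * r' t) t := by
        simpa [hKdef] using (hr t htI).fun_pow K
      exact (hode t htI).div hpow hne
    have heq : u' =ᶠ[nhds t] fun s => (r s ^ K * u' s) / r s ^ K := by
      filter_upwards [Ioi_mem_nhds ht] with s hs
      exact (mul_div_cancel_left₀ (u' s) (hrK_pos s (le_of_lt hs : t₀ ≤ s)).ne').symm
    have hd2 := hd.congr_of_eventuallyEq heq
    refine hd2.congr_deriv ?_
    have hrne : r t ≠ 0 := (hrpos t htI).ne'
    have hKm : r t ^ K = r t ^ m * r t := pow_succ (r t) m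
    field_simp
    ring
  -- F is antitone
  have hF_deriv : ∀ t ∈ Ioi t₀,
      HasDerivAt F (2 * u' t * (-(lam * u t) - K * (r' t / r t) * u' t) + lam * (2 * u t * u' t)) t := by
    intro t ht
    have h1 : HasDerivAt (fun s => u' s ^ 2) (2 * u' t * (-(lam * u t) - K * (r' t / r t) * u' t)) t := by
      simpa [mul_comm] using (hu'' t ht).fun_pow 2
    have h2 : HasDerivAt (fun s => lam * u s ^ 2) (lam * (2 * u t * u' t)) t := by
      have := (hu t (le_of_lt ht : t₀ ≤ t)).pow 2
      simpa [mul_comm, mul_assoc] using HasDerivAt.const_mul lam this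
    exact h1.add h2
  have hF_cont : ContinuousOn F (Ici t₀) :=
    (hu'_cont.pow 2).add (continuousOn_const.mul (hu_cont.pow 2))
  have hF_anti : AntitoneOn F (Ici t₀) := by
    apply antitoneOn_of_deriv_nonpos (convex_Ici t₀) hF_cont
    · rw [interior_Ici]
      exact fun x hx => ((hF_deriv x hx).differentiableAt).differentiableWithinAt
    · rw [interior_Ici]
      intro x hx
      rw [(hF_deriv x hx).deriv]
      have h1 : 0 ≤ r' x := hr'_nonneg x (le_of_lt hx : t₀ ≤ x)
      have h2 : 0 < r x := hrpos x (le_of_lt hx : t₀ ≤ x)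
      have h3 : 0 ≤ (K : ℝ) * (r' x / r x) * u' x ^ 2 := by positivity
      nlinarith [sq_nonneg (u' x)]
  -- E is monotone
  have hE_deriv : ∀ t ∈ Ioi t₀,
      HasDerivAt E (2 * lam * K * r t ^ m * r' t * r t ^ K * u t ^ 2) t := by
    intro t ht
    have htI : t ∈ Ici t₀ := (le_of_lt ht : t₀ ≤ t)
    have hpow : HasDerivAt (fun s => r s ^ K) ((K : ℝ) * r t ^ m * r' t) t := by
      simpa [hKdef] using (hr t htI).fun_pow K
    have h1 : HasDerivAt (fun s => (r s ^ K * u' s) ^ 2)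
        (2 * (r t ^ K * u' t) * (-(lam * r t ^ K * u t))) t := by
      simpa [mul_comm] using (hode t htI).fun_pow 2
    have h2 : HasDerivAt (fun s => lam * (r s ^ K * u s) ^ 2)
        (lam * (2 * (r t ^ K * u t) * ((K : ℝ) * r t ^ m * r' t * u t + r t ^ K * u' t))) t := by
      have h3 := (hpow.fun_mul (hu t htI)).fun_pow 2
      have h4 := HasDerivAt.const_mul lam h3
      refine h4.congr_deriv ?_
      ring
    have h5 := h1.add h2
    refine h5.congr_deriv ?_
    ring
  have hE_cont : ContinuousOn E (Ici t₀) :=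
    (((hr_cont.pow K).mul hu'_cont).pow 2).add
      (continuousOn_const.mul (((hr_cont.pow K).mul hu_cont).pow 2))
  have hE_mono : MonotoneOn E (Ici t₀) := by
    apply monotoneOn_of_deriv_nonneg (convex_Ici t₀) hE_cont
    · rw [interior_Ici]
      exact fun x hx => ((hE_deriv x hx).differentiableAt).differentiableWithinAt
    · rw [interior_Ici]
      intro x hx
      rw [(hE_deriv x hx).deriv]
      have h1 : 0 ≤ r' x := hr'_nonneg x (le_of_lt hx : t₀ ≤ x)
      have h2 : 0 < r x := hrpos x (le_of_lt hx : t₀ ≤ x)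
      positivity
  -- basic energy values and bounds
  set F₀ : ℝ := u' t₀ ^ 2 with hF₀def
  have hFt₀ : F t₀ = F₀ := by simp [hFdef, hu0, hF₀def]
  have hF_le : ∀ t ∈ Ici t₀, F t ≤ F₀ := fun t ht => hFt₀ ▸ hF_anti ht0 ht ht
  have hF_nonneg : ∀ t, 0 ≤ F t := fun t => by positivity
  have hF₀pos : 0 < F₀ := by
    rcases (hF_nonneg t₀).lt_or_eq with h | h
    · rwa [hFt₀] at h
    · exfalso
      obtain ⟨t, ht, hut⟩ := hnontriv
      have h1 : F t ≤ F₀ := hF_le t ht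
      have h2 : 0 < u t ^ 2 := pow_two_pos_of_ne_zero hut
      rw [hFt₀] at h
      simp only [hFdef] at h1
      nlinarith [sq_nonneg (u' t)]
  -- lower bound on F
  set Fmin : ℝ := (r t₀ ^ K) ^ 2 / (R ^ K) ^ 2 * F₀ with hFmindef
  have hFminpos : 0 < Fmin := by
    have := hrpos t₀ ht0
    positivity
  have hF_ge : ∀ t ∈ Ici t₀, Fmin ≤ F t := by
    intro t ht
    have h1 : E t₀ ≤ E t := hE_mono ht0 ht ht
    have hE_eq : ∀ s, E s = (r s ^ K) ^ 2 * F s := fun s => by simp only [hEdef, hFdef]; ring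
    rw [hE_eq, hE_eq] at h1
    have h2 : (r t ^ K) ^ 2 ≤ (R ^ K) ^ 2 := by
      have := hrKbd t ht
      have := (hrK_pos t ht).le
      nlinarith
    have h3 : (r t ^ K) ^ 2 * F t ≤ (R ^ K) ^ 2 * F t :=
      mul_le_mul_of_nonneg_right h2 (hF_nonneg t)
    have h4 : (r t₀ ^ K) ^ 2 * F t₀ = (r t₀ ^ K) ^ 2 * F₀ := by rw [hFt₀]
    have h5 : 0 < (R ^ K) ^ 2 := by positivity
    rw [hFmindef, div_mul_eq_mul_div, div_le_iff₀ h5]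
    nlinarith
  -- pointwise bounds
  set Bu' : ℝ := Real.sqrt F₀ with hBu'def
  have hBu'pos : 0 < Bu' := Real.sqrt_pos.2 hF₀pos
  have habs_u' : ∀ t ∈ Ici t₀, |u' t| ≤ Bu' := by
    intro t ht
    rw [hBu'def, ← Real.sqrt_sq_eq_abs]
    apply Real.sqrt_le_sqrt
    have h1 := hF_le t ht
    simp only [hFdef] at h1
    nlinarith [sq_nonneg (u t)]
  set Bu : ℝ := Real.sqrt (F₀ / lam) with hBudef
  have hBupos : 0 < Bu := Real.sqrt_pos.2 (div_pos hF₀pos hlam)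
  have habs_u : ∀ t ∈ Ici t₀, |u t| ≤ Bu := by
    intro t ht
    rw [hBudef, ← Real.sqrt_sq_eq_abs]
    apply Real.sqrt_le_sqrt
    have h1 := hF_le t ht
    simp only [hFdef] at h1
    rw [le_div_iff₀ hlam]
    nlinarith [sq_nonneg (u' t)]
  have habs_phi : ∀ t ∈ Ici t₀, |r t ^ K * u' t| ≤ R ^ K * Bu' := by
    intro t ht
    rw [abs_mul, abs_of_pos (hrK_pos t ht)]
    exact mul_le_mul (hrKbd t ht) (habs_u' t ht) (abs_nonneg _) (by positivity)
  -- constants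
  set m₀ : ℝ := Real.sqrt (Fmin / lam) with hm₀def
  have hm₀pos : 0 < m₀ := Real.sqrt_pos.2 (div_pos hFminpos hlam)
  set δ : ℝ := m₀ / (2 * Bu') with hδdef
  have hδpos : 0 < δ := div_pos hm₀pos (by positivity)
  set Cup : ℝ := Bu * (2 * R ^ K * Bu') / lam with hCupdef
  have hCuppos : 0 < Cup := by positivity
  set Clow : ℝ := (m₀ / 2) ^ 2 * r t₀ ^ K * δ with hClowdef
  have hClowpos : 0 < Clow := by
    have := hrpos t₀ ht0
    positivity
  -- integrability
  have hsubIcc : ∀ a b : ℝ, a ∈ Ici t₀ → b ∈ Ici t₀ → uIcc a b ⊆ Ici t₀ := by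
    intro a b ha hb x hx
    exact le_trans (le_inf ha hb) hx.1
  have hg_int : ∀ a b : ℝ, a ∈ Ici t₀ → b ∈ Ici t₀ →
      IntervalIntegrable (fun t => u t ^ 2 * r t ^ K) MeasureTheory.volume a b := by
    intro a b ha hb
    apply ContinuousOn.intervalIntegrable
    exact ((hu_cont.mono (hsubIcc a b ha hb)).pow 2).mul ((hr_cont.mono (hsubIcc a b ha hb)).pow K)
  -- per-interval upper bound
  have hupper : ∀ k : ℕ, (∫ t in tseq k..tseq (k + 1), u t ^ 2 * r t ^ K) ≤ Cup := by
    intro k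
    set a := tseq k with hadef
    set b := tseq (k + 1) with hbdef
    have hab : a < b := htseq_mono (Nat.lt_succ_self k)
    have haI : a ∈ Ici t₀ := htseq_mem k
    have hbI : b ∈ Ici t₀ := htseq_mem (k + 1)
    have hsub : Icc a b ⊆ Ici t₀ := fun x hx => le_trans haI hx.1
    have hsubU : uIcc a b ⊆ Ici t₀ := hsubIcc a b haI hbI
    have hua : u a = 0 := htseq_zero k
    have hub : u b = 0 := htseq_zero (k + 1)
    have hne : ∀ s ∈ Ioo a b, u s ≠ 0 := by
      intro s hs hus
      obtain ⟨j, hj⟩ := htseq_all s (hsub ⟨hs.1.le, hs.2.le⟩) hus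
      subst hj
      have h1 : k < j := htseq_mono.lt_iff_lt.mp hs.1
      have h2 : j < k + 1 := htseq_mono.lt_iff_lt.mp hs.2
      omega
    have hsign : (∀ s ∈ Icc a b, 0 ≤ u s) ∨ (∀ s ∈ Icc a b, u s ≤ 0) := by
      by_contra hcon
      push_neg at hcon
      obtain ⟨⟨x, hx, hux⟩, ⟨y, hy, huy⟩⟩ := hcon
      have hxI : x ∈ Ioo a b := by
        constructor
        · rcases hx.1.eq_or_lt with h | h
          · exfalso; rw [← h, hua] at hux; exact lt_irrefl 0 hux
          · exact h
        · rcases hx.2.eq_or_lt with h | h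
          · exfalso; rw [h, hub] at hux; exact lt_irrefl 0 hux
          · exact h
      have hyI : y ∈ Ioo a b := by
        constructor
        · rcases hy.1.eq_or_lt with h | h
          · exfalso; rw [← h, hua] at huy; exact lt_irrefl 0 huy
          · exact h
        · rcases hy.2.eq_or_lt with h | h
          · exfalso; rw [h, hub] at huy; exact lt_irrefl 0 huy
          · exact h
      rcases lt_trichotomy x y with hxy | hxy | hxy
      · have hcont : ContinuousOn u (Icc x y) :=
          hu_cont.mono (fun z hz => hsub ⟨le_trans hxI.1.le hz.1, le_trans hz.2 hyI.2.le⟩)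
        have h0 : (0 : ℝ) ∈ Ioo (u x) (u y) := ⟨hux, huy⟩
        obtain ⟨z, hz, huz⟩ := intermediate_value_Ioo hxy.le hcont h0
        exact hne z ⟨lt_trans hxI.1 hz.1, lt_trans hz.2 hyI.2⟩ huz
      · rw [hxy] at hux; linarith
      · have hcont : ContinuousOn u (Icc y x) :=
          hu_cont.mono (fun z hz => hsub ⟨le_trans hyI.1.le hz.1, le_trans hz.2 hxI.2.le⟩)
        have h0 : (0 : ℝ) ∈ Ioo (u x) (u y) := ⟨hux, huy⟩
        obtain ⟨z, hz, huz⟩ := intermediate_value_Ioo' hxy.le hcont h0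
        exact hne z ⟨lt_trans hyI.1 hz.1, lt_trans hz.2 hxI.2⟩ huz
    have core : ∀ v v' : ℝ → ℝ,
        (∀ t ∈ Ici t₀, HasDerivAt (fun s => r s ^ K * v' s) (-(lam * r t ^ K * v t)) t) →
        ContinuousOn v (Ici t₀) →
        (∀ t ∈ Ici t₀, |v t| ≤ Bu) →
        (∀ t ∈ Ici t₀, |r t ^ K * v' t| ≤ R ^ K * Bu') →
        (∀ s ∈ Icc a b, 0 ≤ v s) →
        (∫ t in a..b, v t ^ 2 * r t ^ K) ≤ Cup := by
      intro v v' hvode hv_cont hv_bd hphiv_bd hv_nonneg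
      have hInt1 : IntervalIntegrable (fun t => v t ^ 2 * r t ^ K) MeasureTheory.volume a b :=
        ContinuousOn.intervalIntegrable
          (((hv_cont.mono hsubU).pow 2).mul ((hr_cont.mono hsubU).pow K))
      have hInt2 : IntervalIntegrable (fun t => v t * r t ^ K) MeasureTheory.volume a b :=
        ContinuousOn.intervalIntegrable
          ((hv_cont.mono hsubU).mul ((hr_cont.mono hsubU).pow K))
      have step1 : (∫ t in a..b, v t ^ 2 * r t ^ K) ≤ ∫ t in a..b, Bu * (v t * r t ^ K) := by
        apply intervalIntegral.integral_mono_on hab.le hInt1 (hInt2.const_mul Bu)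
        intro t ht
        have htI : t ∈ Ici t₀ := hsub ht
        have h1 : v t ≤ Bu := le_trans (le_abs_self _) (hv_bd t htI)
        have h2 : 0 ≤ v t * r t ^ K :=
          mul_nonneg (hv_nonneg t ht) (pow_nonneg (hrpos t htI).le K)
        nlinarith [mul_le_mul_of_nonneg_right h1 h2]
      have step2 : (∫ t in a..b, Bu * (v t * r t ^ K)) = Bu * ∫ t in a..b, v t * r t ^ K :=
        intervalIntegral.integral_const_mul Bu _
      have hFTC : (∫ t in a..b, -(lam * r t ^ K * v t)) = r b ^ K * v' b - r a ^ K * v' a := by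
        apply intervalIntegral.integral_eq_sub_of_hasDerivAt (fun x hx => hvode x (hsubU hx))
        apply ContinuousOn.intervalIntegrable
        exact ((continuousOn_const.mul ((hr_cont.mono hsubU).pow K)).mul
          (hv_cont.mono hsubU)).neg
      have hI : (∫ t in a..b, v t * r t ^ K) = (r a ^ K * v' a - r b ^ K * v' b) / lam := by
        have h1 : (∫ t in a..b, -(lam * r t ^ K * v t)) =
            (-lam) * ∫ t in a..b, v t * r t ^ K := by
          rw [← intervalIntegral.integral_const_mul]
          apply intervalIntegral.integral_congr
          intro x hx
          ring
        rw [h1] at hFTC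
        field_simp
        linarith [hFTC]
      have h2 : r a ^ K * v' a - r b ^ K * v' b ≤ 2 * R ^ K * Bu' := by
        have ha' := abs_le.1 (hphiv_bd a haI)
        have hb' := abs_le.1 (hphiv_bd b hbI)
        linarith [ha'.2, hb'.1]
      calc (∫ t in a..b, v t ^ 2 * r t ^ K) ≤ Bu * ∫ t in a..b, v t * r t ^ K :=
            step1.trans_eq step2
        _ = Bu * ((r a ^ K * v' a - r b ^ K * v' b) / lam) := by rw [hI]
        _ ≤ Bu * ((2 * R ^ K * Bu') / lam) := by
            gcongr
        _ = Cup := by rw [hCupdef]; ring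
    rcases hsign with hpos | hneg
    · exact core u u' hode hu_cont habs_u habs_phi hpos
    · have h1 : (∫ t in a..b, u t ^ 2 * r t ^ K) = ∫ t in a..b, (-u t) ^ 2 * r t ^ K := by
        apply intervalIntegral.integral_congr
        intro x hx
        ring
      rw [h1]
      apply core (fun s => -u s) (fun s => -u' s)
      · intro t ht
        have h2 := (hode t ht).fun_neg
        have h3 : (fun s => -(r s ^ K * u' s)) = (fun s => r s ^ K * -u' s) := by
          funext s; ring
        rw [h3] at h2
        refine h2.congr_deriv ?_
        ring
      · exact hu_cont.neg
      · intro t ht; rw [abs_neg]; exact habs_u t ht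
      · intro t ht; rw [mul_neg, abs_neg]; exact habs_phi t ht
      · intro s hs; simpa using hneg s hs
  -- per-interval lower bound
  have hlower : ∀ k : ℕ, Clow ≤ ∫ t in tseq k..tseq (k + 1), u t ^ 2 * r t ^ K := by
    intro k
    set a := tseq k with hadef
    set b := tseq (k + 1) with hbdef
    have hab : a < b := htseq_mono (Nat.lt_succ_self k)
    have haI : a ∈ Ici t₀ := htseq_mem k
    have hbI : b ∈ Ici t₀ := htseq_mem (k + 1)
    have hsub : Icc a b ⊆ Ici t₀ := fun x hx => le_trans haI hx.1
    have hends : u a = u b := by rw [htseq_zero, htseq_zero]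
    obtain ⟨c, hc, hc'⟩ := exists_hasDerivAt_eq_zero hab (hu_cont.mono hsub) hends
      (fun x hx => hu x (hsub (Ioo_subset_Icc_self hx)))
    have hcI : c ∈ Ici t₀ := hsub (Ioo_subset_Icc_self hc)
    have hum : m₀ ≤ |u c| := by
      have h1 : Fmin ≤ F c := hF_ge c hcI
      have h2 : F c = lam * u c ^ 2 := by simp [hFdef, hc']
      rw [hm₀def, ← Real.sqrt_sq_eq_abs]
      apply Real.sqrt_le_sqrt
      rw [div_le_iff₀ hlam]
      nlinarith
    have hlip : ∀ x ∈ Ici t₀, ∀ y ∈ Ici t₀, |u y - u x| ≤ Bu' * |y - x| := by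
      intro x hx y hy
      have h1 := Convex.norm_image_sub_le_of_norm_hasDerivWithin_le
        (f := u) (f' := u') (s := Ici t₀) (C := Bu')
        (fun z hz => (hu z hz).hasDerivWithinAt)
        (fun z hz => by rw [Real.norm_eq_abs]; exact habs_u' z hz)
        (convex_Ici t₀) hx hy
      simpa [Real.norm_eq_abs] using h1
    have hBu'δ : Bu' * δ = m₀ / 2 := by
      rw [hδdef]
      field_simp
    have hkey : ∀ t, c ≤ t → t ≤ c + δ → t ∈ Ici t₀ → m₀ / 2 ≤ |u t| := by
      intro t h1 h2 htI
      have h3 : |u t - u c| ≤ Bu' * |t - c| := hlip c hcI t htI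
      have h4 : |t - c| ≤ δ := by
        rw [abs_of_nonneg (by linarith)]
        linarith
      have h5 : |u t - u c| ≤ m₀ / 2 := by
        calc |u t - u c| ≤ Bu' * |t - c| := h3
          _ ≤ Bu' * δ := by nlinarith
          _ = m₀ / 2 := hBu'δ
      have h6 : |u c| - |u t| ≤ |u c - u t| := abs_sub_abs_le_abs_sub (u c) (u t)
      rw [abs_sub_comm] at h6
      linarith
    have hcb : c + δ ≤ b := by
      by_contra hcon
      push_neg at hcon
      have h1 : m₀ / 2 ≤ |u b| := hkey b hc.2.le hcon.le hbI
      rw [htseq_zero] at h1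
      simp only [abs_zero] at h1
      linarith
    have hcδI : c + δ ∈ Ici t₀ := (le_trans hcI (by linarith) : t₀ ≤ c + δ)
    have hnn : ∀ x y : ℝ, x ∈ Ici t₀ → x ≤ y →
        (0 : ℝ) ≤ ∫ t in x..y, u t ^ 2 * r t ^ K := by
      intro x y hx hxy
      apply intervalIntegral.integral_nonneg hxy
      intro t ht
      have htI : t ∈ Ici t₀ := le_trans hx ht.1
      exact mul_nonneg (sq_nonneg _) (pow_nonneg (hrpos t htI).le K)
    have e1 : (∫ t in a..c, u t ^ 2 * r t ^ K) + (∫ t in c..c + δ, u t ^ 2 * r t ^ K) =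
        ∫ t in a..c + δ, u t ^ 2 * r t ^ K :=
      intervalIntegral.integral_add_adjacent_intervals (hg_int a c haI hcI)
        (hg_int c (c + δ) hcI hcδI)
    have e2 : (∫ t in a..c + δ, u t ^ 2 * r t ^ K) + (∫ t in c + δ..b, u t ^ 2 * r t ^ K) =
        ∫ t in a..b, u t ^ 2 * r t ^ K :=
      intervalIntegral.integral_add_adjacent_intervals (hg_int a (c + δ) haI hcδI)
        (hg_int (c + δ) b hcδI hbI)
    have hmain : Clow ≤ ∫ t in c..c + δ, u t ^ 2 * r t ^ K := by
      have h1 : (∫ t in c..c + δ, (m₀ / 2) ^ 2 * r t₀ ^ K) ≤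
          ∫ t in c..c + δ, u t ^ 2 * r t ^ K := by
        apply intervalIntegral.integral_mono_on (by linarith) intervalIntegrable_const
          (hg_int c (c + δ) hcI hcδI)
        intro t ht
        have htI : t ∈ Ici t₀ := le_trans hcI ht.1
        have h2 : m₀ / 2 ≤ |u t| := hkey t ht.1 ht.2 htI
        have h3 : (m₀ / 2) ^ 2 ≤ u t ^ 2 := by
          calc (m₀ / 2) ^ 2 ≤ |u t| ^ 2 :=
                pow_le_pow_left₀ (by linarith [hm₀pos]) h2 2
            _ = u t ^ 2 := sq_abs _
        have h4 : r t₀ ^ K ≤ r t ^ K :=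
          pow_le_pow_left₀ (hrpos t₀ ht0).le (hrlow t htI) K
        exact mul_le_mul h3 h4 (pow_nonneg (hrpos t₀ ht0).le K) (sq_nonneg _)
      rw [intervalIntegral.integral_const] at h1
      have h5 : c + δ - c = δ := by ring
      rw [h5, smul_eq_mul] at h1
      calc Clow = δ * ((m₀ / 2) ^ 2 * r t₀ ^ K) := by rw [hClowdef]; ring
        _ ≤ _ := h1
    have hp1 : (0 : ℝ) ≤ ∫ t in a..c, u t ^ 2 * r t ^ K := hnn a c haI hc.1.le
    have hp2 : (0 : ℝ) ≤ ∫ t in c + δ..b, u t ^ 2 * r t ^ K := hnn (c + δ) b hcδI hcb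
    linarith
  -- assembly
  refine ⟨3 * Cup / Clow, by positivity, ?_⟩
  intro p
  have hints : ∀ a d : ℕ, (∫ t in tseq a..tseq (a + d), u t ^ 2 * r t ^ K) =
      ∑ i ∈ Finset.range d, ∫ t in tseq (a + i)..tseq (a + i + 1), u t ^ 2 * r t ^ K := by
    intro a d
    have h1 := intervalIntegral.sum_integral_adjacent_intervals (a := fun i => tseq (a + i))
      (n := d) (f := fun t => u t ^ 2 * r t ^ K)
      (fun k _ => hg_int _ _ (htseq_mem _) (htseq_mem _))
    simp only [Nat.add_zero] at h1
    rw [← h1]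
    exact Finset.sum_congr rfl fun i _ => by rw [Nat.add_assoc]
  have hLHS : (∫ t in t₀..tseq (3 * p), u t ^ 2 * r t ^ K) ≤ (3 * p : ℕ) * Cup := by
    have h0 := hints 0 (3 * p)
    simp only [Nat.zero_add] at h0
    rw [← htseq0, h0]
    calc (∑ i ∈ Finset.range (3 * p), ∫ t in tseq i..tseq (i + 1), u t ^ 2 * r t ^ K)
        ≤ ∑ i ∈ Finset.range (3 * p), Cup := Finset.sum_le_sum (fun i _ => hupper i)
      _ = (3 * p : ℕ) * Cup := by simp [Finset.sum_const]
  have hRHS : (p : ℝ) * Clow ≤ ∫ t in tseq p..tseq (2 * p), u t ^ 2 * r t ^ K := by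
    have h0 := hints p p
    rw [show p + p = 2 * p by ring] at h0
    rw [h0]
    calc (p : ℝ) * Clow = ∑ i ∈ Finset.range p, Clow := by simp [Finset.sum_const]
      _ ≤ ∑ i ∈ Finset.range p, ∫ t in tseq (p + i)..tseq (p + i + 1), u t ^ 2 * r t ^ K :=
        Finset.sum_le_sum (fun i _ => hlower (p + i))
  calc (∫ t in t₀..tseq (3 * p), u t ^ 2 * r t ^ K) ≤ (3 * p : ℕ) * Cup := hLHS
    _ = (3 * Cup / Clow) * ((p : ℝ) * Clow) := by
        have h : Clow ≠ 0 := ne_of_gt hClowpos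
        field_simp
        push_cast
        ring
    _ ≤ (3 * Cup / Clow) * ∫ t in tseq p..tseq (2 * p), u t ^ 2 * r t ^ K := by
        apply mul_le_mul_of_nonneg_left hRHS (by positivity)
end

section
/- Let p be continuous and positive on (a, b) and let x, y be C¹ functions on (a, b) with p x' and p y' differentiable, satisfying (p x')' + q x = 0 and (p y')' + q₁ y = 0 with y nonvanishing on (a, b). Then the function t ↦ x(t)·(p(t)x'(t)y(t) − p(t)x(t)y'(t))/y(t) has derivative (q₁ − q)x² + p·(x'y − xy')²/y² at each point of (a, b). -/
open Set

/-- Picone identity (case `p = p₁`): the function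
`t ↦ x (p x' y − p x y')/y` has derivative `(q₁ − q)x² + p (x'y − xy')²/y²`. -/
theorem stmt15 (a b : ℝ) (hab : a < b)
    (p q q₁ x x' y y' : ℝ → ℝ)
    (hp_cont : ContinuousOn p (Ioo a b)) (hp_pos : ∀ t ∈ Ioo a b, 0 < p t)
    (hq_cont : ContinuousOn q (Ioo a b)) (hq₁_cont : ContinuousOn q₁ (Ioo a b))
    (hx : ∀ t ∈ Ioo a b, HasDerivAt x (x' t) t)
    (hxode : ∀ t ∈ Ioo a b, HasDerivAt (fun s => p s * x' s) (-(q t * x t)) t)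
    (hy : ∀ t ∈ Ioo a b, HasDerivAt y (y' t) t)
    (hyode : ∀ t ∈ Ioo a b, HasDerivAt (fun s => p s * y' s) (-(q₁ t * y t)) t)
    (hy_ne : ∀ t ∈ Ioo a b, y t ≠ 0) :
    ∀ t ∈ Ioo a b,
      HasDerivAt (fun s => x s * (p s * x' s * y s - p s * x s * y' s) / y s)
        ((q₁ t - q t) * x t ^ 2 + p t * (x' t * y t - x t * y' t) ^ 2 / y t ^ 2) t := by
  intro t ht
  have h1 : HasDerivAt (fun s => x s * (p s * x' s))
      (x' t * (p t * x' t) + x t * (-(q t * x t))) t := (hx t ht).mul (hxode t ht)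
  have h2 : HasDerivAt (fun s => x s ^ 2 * (p s * y' s) / y s)
      ((((2:ℕ) * x t ^ (2-1) * x' t * (p t * y' t) + x t ^ 2 * (-(q₁ t * y t))) * y t
        - x t ^ 2 * (p t * y' t) * y' t) / y t ^ 2) t :=
    (((hx t ht).pow 2).mul (hyode t ht)).div (hy t ht) (hy_ne t ht)
  have hg := h1.sub h2
  have heq : (fun s => x s * (p s * x' s * y s - p s * x s * y' s) / y s)
      =ᶠ[nhds t] (fun s => x s * (p s * x' s) - x s ^ 2 * (p s * y' s) / y s) := by
    filter_upwards [isOpen_Ioo.mem_nhds ht] with s hs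
    have hys := hy_ne s hs
    field_simp
  have := hg.congr_of_eventuallyEq heq
  refine this.congr_deriv ?_
  have hyt := hy_ne t ht
  field_simp
  ring
end

section
/- Let r be C¹, increasing, with 0 < r(t) < R on [t₀, ∞), n ≥ 2, λ > 0, and let u solve (r^{n-1} u')' + λ r^{n-1} u = 0 with u(t₀) = 0, u'(t₀) > 0, and zeros t₀ < t₁ < ⋯. Then there is a constant C = C(λ, R, n, r(t₀)) such that for every p ∈ ℕ: ∫_{t₀}^{t_{3p}} u² r^{n-1} dt ≤ C · Σ_{k=0}^{3p-1} u'(t_k)². -/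
open Set Real intervalIntegral


private lemma uIcc_sub_Ici {t₀ c d : ℝ} (hc : t₀ ≤ c) (hd : t₀ ≤ d) :
    uIcc c d ⊆ Ici t₀ := fun _ hx => le_trans (le_inf hc hd) hx.1

private lemma zero_between (t₀ lam m M : ℝ) (hlam : 0 < lam) (hm : 0 < m)
    (P u u' : ℝ → ℝ)
    (hP_cont : ContinuousOn P (Ici t₀))
    (hPm : ∀ t ∈ Ici t₀, m ≤ P t) (hPM : ∀ t ∈ Ici t₀, P t ≤ M)
    (hu : ∀ t ∈ Ici t₀, HasDerivAt u (u' t) t)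
    (hPu'_cont : ContinuousOn (fun s => P s * u' s) (Ici t₀))
    (hode : ∀ t ∈ Ioi t₀, HasDerivAt (fun s => P s * u' s) (-(lam * P t * u t)) t)
    (a : ℝ) (ha : t₀ ≤ a) (hua : u a = 0)
    (hnn : ∀ t ∈ Ioc a (a + M * π / (m * Real.sqrt lam)), 0 ≤ u t) :
    ∃ z ∈ Ioc a (a + M * π / (m * Real.sqrt lam)), u z = 0 := by
  have hκ : 0 < m * Real.sqrt lam := mul_pos hm (Real.sqrt_pos.2 hlam)
  set κ := m * Real.sqrt lam with hκdef
  have hM : 0 < M := lt_of_lt_of_le hm (le_trans (hPm t₀ self_mem_Ici) (hPM t₀ self_mem_Ici))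
  set L := M * π / κ with hLdef
  have hL : 0 < L := div_pos (mul_pos hM Real.pi_pos) hκ
  have hPpos : ∀ t ∈ Ici t₀, 0 < P t := fun t ht => lt_of_lt_of_le hm (hPm t ht)
  have hPinv : ContinuousOn (fun x => (P x)⁻¹) (Ici t₀) :=
    hP_cont.inv₀ (fun t ht => (hPpos t ht).ne')
  have hint : ∀ c d, t₀ ≤ c → t₀ ≤ d →
      IntervalIntegrable (fun x => (P x)⁻¹) MeasureTheory.volume c d :=
    fun c d hc hd => (hPinv.mono (uIcc_sub_Ici hc hd)).intervalIntegrable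
  set s : ℝ → ℝ := fun t => ∫ x in a..t, (P x)⁻¹ with hsdef
  have hdiff : ∀ x y : ℝ, a ≤ x → x ≤ y → s y - s x = ∫ t in x..y, (P t)⁻¹ := by
    intro x y hx hxy
    exact integral_interval_sub_left (hint a y ha (ha.trans (hx.trans hxy)))
      (hint a x ha (ha.trans hx))
  have hslb : ∀ x y : ℝ, a ≤ x → x ≤ y → (y - x) / M ≤ s y - s x := by
    intro x y hx hxy
    rw [hdiff x y hx hxy]
    have hmono : (∫ t in x..y, M⁻¹) ≤ ∫ t in x..y, (P t)⁻¹ := by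
      refine integral_mono_on hxy intervalIntegrable_const
        (hint x y (ha.trans hx) (ha.trans (hx.trans hxy))) (fun t ht => ?_)
      have htI : t ∈ Ici t₀ := le_trans (ha.trans hx) ht.1
      exact inv_anti₀ (hPpos t htI) (hPM t htI)
    calc (y - x) / M = (y - x) • M⁻¹ := by rw [smul_eq_mul, div_eq_mul_inv]
      _ = ∫ _ in x..y, M⁻¹ := (intervalIntegral.integral_const _).symm
      _ ≤ _ := hmono
  have hsmono : ∀ x y : ℝ, a ≤ x → x ≤ y → s x ≤ s y := by
    intro x y hx hxy
    have h1 := hslb x y hx hxy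
    have h2 : 0 ≤ (y - x) / M := div_nonneg (by linarith) hM.le
    linarith
  have hs_a : s a = 0 := integral_same
  have haL : a ≤ a + L := by linarith
  have hsL : π / κ ≤ s (a + L) := by
    have h1 := hslb a (a + L) le_rfl haL
    have h2 : (a + L - a) / M = π / κ := by
      rw [add_sub_cancel_left, hLdef]
      field_simp
    rw [hs_a] at h1; linarith [h2 ▸ h1]
  have hscont : ContinuousOn s (Icc a (a + L)) := by
    have hIcc : uIcc a (a + L) = Icc a (a + L) := uIcc_of_le haL
    have hInt : MeasureTheory.IntegrableOn (fun x => (P x)⁻¹) (uIcc a (a + L)) := by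
      rw [hIcc]
      exact (hPinv.mono (fun x hx => le_trans ha hx.1)).integrableOn_Icc
    simpa [hIcc] using intervalIntegral.continuousOn_primitive_interval hInt
  have hπκ : 0 < π / κ := div_pos Real.pi_pos hκ
  obtain ⟨c, hc, hsc⟩ := intermediate_value_Icc haL hscont ⟨by rw [hs_a]; exact hπκ.le, hsL⟩
  have hac : a < c := by
    rcases eq_or_lt_of_le hc.1 with h | h
    · exfalso; rw [← h, hs_a] at hsc; exact hπκ.ne' hsc.symm
    · exact h
  by_cases hc0 : u c = 0
  · exact ⟨c, ⟨hac, hc.2⟩, hc0⟩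
  have hucpos : 0 < u c := (hnn c ⟨hac, hc.2⟩).lt_of_ne (Ne.symm hc0)
  exfalso
  set W : ℝ → ℝ := fun t => (P t * u' t) * Real.sin (κ * s t)
    - κ * (u t * Real.cos (κ * s t)) with hWdef
  have hsubset : Icc a c ⊆ Ici t₀ := fun x hx => le_trans ha hx.1
  have hW_cont : ContinuousOn W (Icc a c) := by
    have hs_c : ContinuousOn s (Icc a c) := hscont.mono (Icc_subset_Icc le_rfl hc.2)
    have hu_c : ContinuousOn u (Icc a c) :=
      fun x hx => ((hu x (hsubset hx)).continuousAt).continuousWithinAt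
    have hks : ContinuousOn (fun t => κ * s t) (Icc a c) := continuousOn_const.mul hs_c
    exact ((hPu'_cont.mono hsubset).mul (Real.continuous_sin.comp_continuousOn hks)).sub
      (continuousOn_const.mul (hu_c.mul (Real.continuous_cos.comp_continuousOn hks)))
  have hW_deriv : ∀ x ∈ Ioo a c,
      HasDerivAt W (-(u x * Real.sin (κ * s x)) * (lam * P x - κ ^ 2 / P x)) x := by
    intro x hx
    have hxt₀ : t₀ < x := lt_of_le_of_lt ha hx.1
    have hxIci : x ∈ Ici t₀ := hxt₀.le
    have hPx := hPpos x hxIci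
    have hsx : HasDerivAt s ((P x)⁻¹) x := by
      refine integral_hasDerivAt_right (hint a x ha hxIci) ?_ ?_
      · exact (hPinv.mono Ioi_subset_Ici_self).stronglyMeasurableAtFilter isOpen_Ioi x hxt₀
      · exact (hPinv.mono Ioi_subset_Ici_self).continuousAt (Ioi_mem_nhds hxt₀)
    have hκs : HasDerivAt (fun t => κ * s t) (κ * (P x)⁻¹) x := hsx.const_mul κ
    have hv : HasDerivAt (fun t => Real.sin (κ * s t))
        (Real.cos (κ * s x) * (κ * (P x)⁻¹)) x := hκs.sin
    have hcos : HasDerivAt (fun t => Real.cos (κ * s t))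
        (-Real.sin (κ * s x) * (κ * (P x)⁻¹)) x := hκs.cos
    have h1 : HasDerivAt (fun t => P t * u' t) (-(lam * P x * u x)) x := hode x hxt₀
    have hux : HasDerivAt u (u' x) x := hu x hxIci
    have hWd' := (h1.mul hv).sub ((hux.mul hcos).const_mul κ)
    refine hWd'.congr_deriv ?_
    have hinv : P x * (P x)⁻¹ = 1 := mul_inv_cancel₀ hPx.ne'
    rw [div_eq_mul_inv]
    linear_combination (κ * u' x * Real.cos (κ * s x)) * hinv
  have hanti : AntitoneOn W (Icc a c) := by
    refine antitoneOn_of_deriv_nonpos (convex_Icc a c) hW_cont ?_ ?_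
    · intro x hx
      rw [interior_Icc] at hx
      exact (hW_deriv x hx).differentiableAt.differentiableWithinAt
    · intro x hx
      rw [interior_Icc] at hx
      rw [(hW_deriv x hx).deriv]
      have hxIci : x ∈ Ici t₀ := le_trans ha hx.1.le
      have hPx := hPpos x hxIci
      have hux : 0 ≤ u x := hnn x ⟨hx.1, hx.2.le.trans hc.2⟩
      have hsx0 : 0 ≤ s x := by have := hsmono a x le_rfl hx.1.le; rw [hs_a] at this; exact this
      have hsxπ : s x ≤ π / κ := by have := hsmono x c hx.1.le hx.2.le; rw [hsc] at this; exact this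
      have hsin : 0 ≤ Real.sin (κ * s x) := by
        apply Real.sin_nonneg_of_nonneg_of_le_pi (by positivity)
        calc κ * s x ≤ κ * (π / κ) := by nlinarith
          _ = π := by field_simp
      have hκ2 : κ ^ 2 = m ^ 2 * lam := by
        rw [hκdef, mul_pow, Real.sq_sqrt hlam.le]
      have hfac : 0 ≤ lam * P x - κ ^ 2 / P x := by
        rw [sub_nonneg, div_le_iff₀ hPx, hκ2]
        have hmm : m * m ≤ P x * P x :=
          mul_le_mul (hPm x hxIci) (hPm x hxIci) hm.le (hm.le.trans (hPm x hxIci))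
        nlinarith
      have : -(u x * Real.sin (κ * s x)) ≤ 0 := neg_nonpos.2 (mul_nonneg hux hsin)
      exact mul_nonpos_of_nonpos_of_nonneg this hfac
  have hWa : W a = 0 := by
    simp [hWdef, hs_a, hua]
  have hWc : W c = κ * u c := by
    have hπ : κ * s c = π := by rw [hsc]; field_simp
    simp [hWdef, hπ, Real.sin_pi, Real.cos_pi]
  have hfin := hanti ⟨le_rfl, hac.le⟩ ⟨hac.le, le_rfl⟩ hac.le
  rw [hWa, hWc] at hfin
  nlinarith

/-- `∫_{t₀}^{t_{3p}} u² r^{n-1} ≤ C · Σ_{k=0}^{3p-1} u'(t_k)²` with `C` independent of `p`. -/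
theorem stmt17 (t₀ R lam : ℝ) (n : ℕ) (hn : 2 ≤ n) (hR : 0 < R) (hlam : 0 < lam)
    (r r' u u' : ℝ → ℝ)
    (hr : ∀ t ∈ Ici t₀, HasDerivAt r (r' t) t)
    (hr'_cont : ContinuousOn r' (Ici t₀))
    (hr_mono : StrictMonoOn r (Ici t₀))
    (hr_bd : ∀ t ∈ Ici t₀, 0 < r t ∧ r t < R)
    (hu : ∀ t ∈ Ici t₀, HasDerivAt u (u' t) t)
    (hode : ∀ t ∈ Ici t₀,
      HasDerivAt (fun s => r s ^ (n - 1) * u' s) (-(lam * r t ^ (n - 1) * u t)) t)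
    (hu0 : u t₀ = 0) (hu'0 : 0 < u' t₀)
    (tseq : ℕ → ℝ) (htseq0 : tseq 0 = t₀) (htseq_mono : StrictMono tseq)
    (htseq_mem : ∀ k, tseq k ∈ Ici t₀)
    (htseq_zero : ∀ k, u (tseq k) = 0)
    (htseq_all : ∀ s ∈ Ici t₀, u s = 0 → ∃ k, s = tseq k) :
    ∃ C : ℝ, 0 < C ∧ ∀ p : ℕ,
      (∫ t in t₀..tseq (3 * p), u t ^ 2 * r t ^ (n - 1)) ≤
        C * ∑ k ∈ Finset.range (3 * p), u' (tseq k) ^ 2 := by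
  have ht₀ : t₀ ∈ Ici t₀ := self_mem_Ici
  have hr0 : 0 < r t₀ := (hr_bd t₀ ht₀).1
  have hm : 0 < r t₀ ^ (n - 1) := pow_pos hr0 _
  have hM : 0 < R ^ (n - 1) := pow_pos hR _
  set m := r t₀ ^ (n - 1) with hmdef
  set M := R ^ (n - 1) with hMdef
  have hrle : ∀ t ∈ Ici t₀, r t₀ ≤ r t := by
    intro t ht
    rcases eq_or_lt_of_le (Set.mem_Ici.mp ht) with h | h
    · rw [← h]
    · exact (hr_mono ht₀ ht h).le
  have hPm : ∀ t ∈ Ici t₀, m ≤ r t ^ (n - 1) :=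
    fun t ht => pow_le_pow_left₀ hr0.le (hrle t ht) _
  have hPM : ∀ t ∈ Ici t₀, r t ^ (n - 1) ≤ M :=
    fun t ht => pow_le_pow_left₀ (hr_bd t ht).1.le (hr_bd t ht).2.le _
  have hPpos : ∀ t ∈ Ici t₀, 0 < r t ^ (n - 1) := fun t ht => pow_pos (hr_bd t ht).1 _
  have hP_cont : ContinuousOn (fun t => r t ^ (n - 1)) (Ici t₀) :=
    fun t ht => ((hr t ht).continuousAt.continuousWithinAt).pow _
  have hPu'_cont : ContinuousOn (fun s => r s ^ (n - 1) * u' s) (Ici t₀) :=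
    fun t ht => (hode t ht).continuousAt.continuousWithinAt
  have hu_cont : ContinuousOn u (Ici t₀) :=
    fun t ht => (hu t ht).continuousAt.continuousWithinAt
  have hode' : ∀ t ∈ Ioi t₀,
      HasDerivAt (fun s => r s ^ (n - 1) * u' s) (-(lam * r t ^ (n - 1) * u t)) t :=
    fun t ht => hode t (Set.mem_Ici.mpr (Set.mem_Ioi.mp ht).le)
  have hκ : 0 < m * Real.sqrt lam := mul_pos hm (Real.sqrt_pos.2 hlam)
  set L := M * π / (m * Real.sqrt lam) with hLdef
  have hL : 0 < L := div_pos (mul_pos hM Real.pi_pos) hκ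
  -- gap bound
  have hgap : ∀ k, tseq (k + 1) ≤ tseq k + L := by
    intro k
    by_contra hb
    push_neg at hb
    set a := tseq k with hadef
    set b := tseq (k + 1) with hbdef
    have ha : t₀ ≤ a := htseq_mem k
    have hnz : ∀ t, a < t → t < b → u t ≠ 0 := by
      intro t h1 h2 h0
      obtain ⟨j, hj⟩ := htseq_all t (le_trans ha h1.le) h0
      rw [hj] at h1 h2
      have hkj : k < j := htseq_mono.lt_iff_lt.1 h1
      have : b ≤ tseq j := htseq_mono.monotone hkj
      linarith
    have haLb : a + L < b := hb
    have haL : a < a + L := by linarith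
    rcases (hnz (a + L) haL haLb).lt_or_gt with hneg | hpos
    · -- u (a+L) < 0 : apply zero_between to -u
      have hnn : ∀ t ∈ Ioc a (a + L), 0 ≤ -(u t) := by
        intro t ht
        by_contra hlt
        push_neg at hlt
        have hut : 0 < u t := by linarith
        have htlt : t < a + L := lt_of_le_of_ne ht.2 (by rintro rfl; linarith)
        have hcont : ContinuousOn u (Icc t (a + L)) :=
          hu_cont.mono (fun x hx => le_trans (le_trans ha ht.1.le) hx.1)
        obtain ⟨z, hz, hz0⟩ := intermediate_value_Icc' htlt.le hcont ⟨hneg.le, hut.le⟩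
        exact hnz z (lt_of_lt_of_le ht.1 hz.1) (lt_of_le_of_lt hz.2 haLb) hz0
      have hu_neg : ∀ t ∈ Ici t₀, HasDerivAt (fun s => -(u s)) (-(u' t)) t :=
        fun t ht => (hu t ht).neg
      have hPu'_neg : ContinuousOn (fun s => r s ^ (n - 1) * -(u' s)) (Ici t₀) := by
        simp only [mul_neg]
        exact hPu'_cont.neg
      have hode_neg : ∀ t ∈ Ioi t₀,
          HasDerivAt (fun s => r s ^ (n - 1) * -(u' s))
            (-(lam * r t ^ (n - 1) * -(u t))) t := by
        intro t ht
        have h := (hode' t ht).neg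
        simp only [mul_neg, neg_neg] at h ⊢
        exact h
      obtain ⟨z, hz, hz0⟩ := zero_between t₀ lam m M hlam hm
        (fun t => r t ^ (n - 1)) (fun t => -(u t)) (fun t => -(u' t))
        hP_cont hPm hPM hu_neg hPu'_neg hode_neg a ha (by simp [hadef, htseq_zero k]) hnn
      exact hnz z hz.1 (lt_of_le_of_lt hz.2 haLb) (neg_eq_zero.1 hz0)
    · -- 0 < u (a+L)
      have hnn : ∀ t ∈ Ioc a (a + L), 0 ≤ u t := by
        intro t ht
        by_contra hlt
        push_neg at hlt
        have htlt : t < a + L := lt_of_le_of_ne ht.2 (by rintro rfl; linarith)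
        have hcont : ContinuousOn u (Icc t (a + L)) :=
          hu_cont.mono (fun x hx => le_trans (le_trans ha ht.1.le) hx.1)
        obtain ⟨z, hz, hz0⟩ := intermediate_value_Icc htlt.le hcont ⟨hlt.le, hpos.le⟩
        exact hnz z (lt_of_lt_of_le ht.1 hz.1) (lt_of_le_of_lt hz.2 haLb) hz0
      obtain ⟨z, hz, hz0⟩ := zero_between t₀ lam m M hlam hm
        (fun t => r t ^ (n - 1)) u u'
        hP_cont hPm hPM hu hPu'_cont hode' a ha (htseq_zero k) hnn
      exact hnz z hz.1 (lt_of_le_of_lt hz.2 haLb) hz0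
  -- r' nonnegative
  have hr'nn : ∀ x ∈ Ici t₀, 0 ≤ r' x := by
    intro x hx
    have hd : HasDerivWithinAt r (r' x) (Ioi x) x := (hr x hx).hasDerivWithinAt
    rw [hasDerivWithinAt_iff_tendsto_slope] at hd
    have hIoi : Ioi x \ {x} = Ioi x := diff_singleton_eq_self (fun h => lt_irrefl x h)
    rw [hIoi] at hd
    refine ge_of_tendsto hd ?_
    filter_upwards [self_mem_nhdsWithin] with y hy
    rw [slope_def_field]
    have hyI : y ∈ Ici t₀ := Set.mem_Ici.mpr (le_trans (Set.mem_Ici.mp hx) (le_of_lt hy))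
    exact div_nonneg (sub_nonneg.2 (hr_mono hx hyI hy).le) (sub_nonneg.2 (le_of_lt hy))
  -- derivative of u'
  have hu'' : ∀ x ∈ Ioi t₀, HasDerivAt u'
      ((-(lam * r x ^ (n - 1) * u x) * r x ^ (n - 1)
        - r x ^ (n - 1) * u' x * (((n - 1 : ℕ) : ℝ) * r x ^ (n - 1 - 1) * r' x))
        / (r x ^ (n - 1)) ^ 2) x := by
    intro x hx
    have hxI : x ∈ Ici t₀ := Set.mem_Ici.mpr (le_of_lt (Set.mem_Ioi.mp hx))
    have hPd : HasDerivAt (fun t => r t ^ (n - 1))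
        (((n - 1 : ℕ) : ℝ) * r x ^ (n - 1 - 1) * r' x) x := (hr x hxI).pow _
    have hq := (hode' x hx).div hPd (hPpos x hxI).ne'
    refine hq.congr_of_eventuallyEq ?_
    filter_upwards [Ioi_mem_nhds hx] with y hy
    exact (mul_div_cancel_left₀ _ (hPpos y (Set.mem_Ici.mpr (le_of_lt (Set.mem_Ioi.mp hy)))).ne').symm
  -- G = u'^2 + lam u^2 is antitone
  set G : ℝ → ℝ := fun t => u' t ^ 2 + lam * u t ^ 2 with hGdef
  have hu'_cont : ContinuousOn u' (Ici t₀) := by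
    have h := hPu'_cont.div hP_cont (fun t ht => (hPpos t ht).ne')
    exact h.congr (fun t ht => (mul_div_cancel_left₀ _ (hPpos t ht).ne').symm)
  have hG_anti : AntitoneOn G (Ici t₀) := by
    have hG_cont : ContinuousOn G (Ici t₀) :=
      (hu'_cont.pow 2).add (continuousOn_const.mul (hu_cont.pow 2))
    refine antitoneOn_of_deriv_nonpos (convex_Ici t₀) hG_cont ?_ ?_
    · intro x hx
      rw [interior_Ici] at hx
      exact (((hu'' x hx).pow 2).add (((hu x (Set.mem_Ici.mpr (Set.mem_Ioi.mp hx).le)).pow 2).const_mul lam)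
        ).differentiableAt.differentiableWithinAt
    · intro x hx
      rw [interior_Ici] at hx
      have hxI : x ∈ Ici t₀ := Set.mem_Ici.mpr (Set.mem_Ioi.mp hx).le
      have hd := ((hu'' x hx).pow 2).add (((hu x hxI).pow 2).const_mul lam)
      rw [HasDerivAt.deriv (f := G) hd]
      have hPx := hPpos x hxI
      have hrx : 0 < r x := (hr_bd x hxI).1
      have key : (2 : ℝ) * u' x ^ (2 - 1) *
            ((-(lam * r x ^ (n - 1) * u x) * r x ^ (n - 1)
              - r x ^ (n - 1) * u' x * (((n - 1 : ℕ) : ℝ) * r x ^ (n - 1 - 1) * r' x))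
              / (r x ^ (n - 1)) ^ 2)
          + lam * (2 * u x ^ (2 - 1) * u' x)
          = -(2 * ((n - 1 : ℕ) : ℝ) * r x ^ (n - 1 - 1) * r' x * u' x ^ 2 / r x ^ (n - 1)) := by
        field_simp
        ring
      push_cast
      rw [key]
      have h1 : 0 ≤ 2 * ((n - 1 : ℕ) : ℝ) * r x ^ (n - 1 - 1) * r' x * u' x ^ 2 / r x ^ (n - 1) := by
        apply div_nonneg _ hPx.le
        have : (0 : ℝ) ≤ ((n - 1 : ℕ) : ℝ) := Nat.cast_nonneg _
        have h2 : (0 : ℝ) ≤ r x ^ (n - 1 - 1) := pow_nonneg hrx.le _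
        have h3 := hr'nn x hxI
        positivity
      linarith
  -- pointwise bound
  have hpt : ∀ k, ∀ t, tseq k ≤ t → t ≤ tseq (k + 1) →
      u t ^ 2 * r t ^ (n - 1) ≤ u' (tseq k) ^ 2 / lam * M := by
    intro k t h1 h2
    have htI : t ∈ Ici t₀ := le_trans (htseq_mem k) h1
    have hG := hG_anti (htseq_mem k) htI h1
    simp only [hGdef, htseq_zero k] at hG
    have hGk : u' t ^ 2 + lam * u t ^ 2 ≤ u' (tseq k) ^ 2 := by
      have : lam * (0 : ℝ) ^ 2 = 0 := by ring
      simpa [this] using hG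
    have hut : u t ^ 2 ≤ u' (tseq k) ^ 2 / lam := by
      rw [le_div_iff₀ hlam]
      nlinarith [sq_nonneg (u' t)]
    exact mul_le_mul hut (hPM t htI) (pow_nonneg (hr_bd t htI).1.le _)
      (div_nonneg (sq_nonneg _) hlam.le)
  -- integrability
  have hInt : ∀ k, IntervalIntegrable (fun t => u t ^ 2 * r t ^ (n - 1)) MeasureTheory.volume
      (tseq k) (tseq (k + 1)) := by
    intro k
    have hcont : ContinuousOn (fun t => u t ^ 2 * r t ^ (n - 1)) (Ici t₀) :=
      (hu_cont.pow 2).mul hP_cont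
    exact (hcont.mono (uIcc_sub_Ici (htseq_mem k) (htseq_mem (k + 1)))).intervalIntegrable
  -- per-interval bound
  have hseg : ∀ k, (∫ t in tseq k..tseq (k + 1), u t ^ 2 * r t ^ (n - 1))
      ≤ M * L / lam * u' (tseq k) ^ 2 := by
    intro k
    have hab : tseq k < tseq (k + 1) := htseq_mono (Nat.lt_succ_self k)
    have h2 := intervalIntegral.integral_mono_on hab.le (hInt k) intervalIntegrable_const
      (fun t ht => hpt k t ht.1 ht.2)
    rw [intervalIntegral.integral_const, smul_eq_mul] at h2
    have hXnn : 0 ≤ u' (tseq k) ^ 2 / lam * M :=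
      mul_nonneg (div_nonneg (sq_nonneg _) hlam.le) hM.le
    calc (∫ t in tseq k..tseq (k + 1), u t ^ 2 * r t ^ (n - 1))
        ≤ (tseq (k + 1) - tseq k) * (u' (tseq k) ^ 2 / lam * M) := h2
      _ ≤ L * (u' (tseq k) ^ 2 / lam * M) :=
          mul_le_mul_of_nonneg_right (by linarith [hgap k]) hXnn
      _ = M * L / lam * u' (tseq k) ^ 2 := by ring
  refine ⟨M * L / lam, div_pos (mul_pos hM hL) hlam, fun p => ?_⟩
  have hsum := intervalIntegral.sum_integral_adjacent_intervals
    (f := fun t => u t ^ 2 * r t ^ (n - 1)) (μ := MeasureTheory.volume) (a := tseq) (n := 3 * p)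
    (fun k _ => hInt k)
  rw [htseq0] at hsum
  rw [← hsum]
  calc (∑ k ∈ Finset.range (3 * p), ∫ t in tseq k..tseq (k + 1), u t ^ 2 * r t ^ (n - 1))
      ≤ ∑ k ∈ Finset.range (3 * p), M * L / lam * u' (tseq k) ^ 2 :=
        Finset.sum_le_sum (fun k _ => hseg k)
    _ = M * L / lam * ∑ k ∈ Finset.range (3 * p), u' (tseq k) ^ 2 := by
        rw [Finset.mul_sum]
end
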